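/- arXiv:2301.11567 — 7 statements merged into one kernel-verified Lean document; each statement's English description precedes it below -/
import Mathlib

section
/- Suppose β(m,I,x) is strictly decreasing in its first argument m, and let m1, m2 : ℝ → [0,∞) be continuous with m1(x) < m2(x) for all x ∈ [L1,L2]. For i = 1, 2 set a_i(x) := (σ/μ1)·β(m_i(x),0,x) − μ2 − γ(b(x),0,x), and assume each a_i is Lipschitz continuous and attains its maximum over [L1,L2] at an interior point. Then λ_p((L1,L2), d, a_2) < λ_p((L1,L2), d, a_1); that is, the generalized principal eigenvalue is strictly decreasing in the media-coverage function m. -/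
open MeasureTheory Set Filter Topology

noncomputable section

def KernelJ (J : ℝ → ℝ) : Prop :=
  Continuous J ∧ (∀ x, 0 ≤ J x) ∧ (∃ C, ∀ x, J x ≤ C) ∧
    (∀ x, J (-x) = J x) ∧ 0 < J 0 ∧ (∫ x : ℝ, J x) = 1

/-- The generalized principal eigenvalue of the nonlocal operator
`d∫_{L1}^{L2} J(x-y)φ(y)dy - dφ(x) + a(x)φ(x)` on `(L1, L2)`. -/
def lambdaP (J : ℝ → ℝ) (L1 L2 d : ℝ) (a : ℝ → ℝ) : ℝ :=
  sInf {lam : ℝ | ∃ φ : ℝ → ℝ, ContinuousOn φ (Icc L1 L2) ∧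
    (∀ x ∈ Icc L1 L2, 0 < φ x) ∧
    ∀ x ∈ Ioo L1 L2,
      d * (∫ y in L1..L2, J (x - y) * φ y) - d * φ x + a x * φ x ≤ lam * φ x}

/-- Theorem 3.2 (i): the generalized principal eigenvalue is strictly decreasing
in the media-coverage function `m`. -/
theorem lambdaP_strictAnti_media
    (J : ℝ → ℝ) (d σ μ1 μ2 L1 L2 : ℝ) (b m1 m2 : ℝ → ℝ)
    (β γ : ℝ → ℝ → ℝ → ℝ) (a1 a2 : ℝ → ℝ)
    (hJ : KernelJ J) (hd : 0 < d) (hσ : 0 < σ) (hμ1 : 0 < μ1) (hμ2 : 0 < μ2)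
    (hL : L1 < L2)
    (hb : Continuous b) (hb0 : ∀ x, 0 ≤ b x)
    (hβL : ∃ K, LipschitzWith K fun p : ℝ × ℝ × ℝ => β p.1 p.2.1 p.2.2)
    (hγL : ∃ K, LipschitzWith K fun p : ℝ × ℝ × ℝ => γ p.1 p.2.1 p.2.2)
    (hβ0 : ∀ m' I' x, 0 ≤ β m' I' x) (hγ0 : ∀ b' I' x, 0 ≤ γ b' I' x)
    (hβstrict : ∀ I' x, StrictAntiOn (fun m' => β m' I' x) (Ici 0))
    (hm1 : Continuous m1) (hm1nn : ∀ x, 0 ≤ m1 x)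
    (hm2 : Continuous m2) (hm2nn : ∀ x, 0 ≤ m2 x)
    (hm12 : ∀ x ∈ Icc L1 L2, m1 x < m2 x)
    (ha1 : ∀ x, a1 x = σ / μ1 * β (m1 x) 0 x - μ2 - γ (b x) 0 x)
    (ha2 : ∀ x, a2 x = σ / μ1 * β (m2 x) 0 x - μ2 - γ (b x) 0 x)
    (ha1L : ∃ K, LipschitzWith K a1) (ha2L : ∃ K, LipschitzWith K a2)
    (ha1H : ∃ x0 ∈ Ioo L1 L2, ∀ x ∈ Icc L1 L2, a1 x ≤ a1 x0)
    (ha2H : ∃ x0 ∈ Ioo L1 L2, ∀ x ∈ Icc L1 L2, a2 x ≤ a2 x0) :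
    lambdaP J L1 L2 d a2 < lambdaP J L1 L2 d a1 := by
  obtain ⟨Jc, Jnn, ⟨C, hC⟩, Jsymm, J0, Jint⟩ := hJ
  obtain ⟨K1, hK1⟩ := ha1L
  obtain ⟨K2, hK2⟩ := ha2L
  obtain ⟨x1, hx1, hmax1⟩ := ha1H
  -- positivity of the gap
  have hgap : ∀ x ∈ Icc L1 L2, 0 < a1 x - a2 x := by
    intro x hx
    have hβlt : β (m2 x) 0 x < β (m1 x) 0 x :=
      hβstrict 0 x (hm1nn x) (hm2nn x) (hm12 x hx)
    have : a1 x - a2 x = σ / μ1 * (β (m1 x) 0 x - β (m2 x) 0 x) := by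
      rw [ha1, ha2]; ring
    rw [this]
    exact mul_pos (div_pos hσ hμ1) (sub_pos.2 hβlt)
  -- uniform gap via compactness
  have hcont : ContinuousOn (fun x => a1 x - a2 x) (Icc L1 L2) :=
    (hK1.continuous.sub hK2.continuous).continuousOn
  obtain ⟨z, hz, hzmin⟩ := isCompact_Icc.exists_isMinOn (α := ℝ)
    (nonempty_Icc.2 hL.le) hcont
  set ε := a1 z - a2 z with hε
  have hεpos : 0 < ε := hgap z hz
  have hεle : ∀ x ∈ Icc L1 L2, ε ≤ a1 x - a2 x := fun x hx => hzmin hx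
  -- the sets
  set S : (ℝ → ℝ) → Set ℝ := fun a => {lam : ℝ | ∃ φ : ℝ → ℝ,
    ContinuousOn φ (Icc L1 L2) ∧ (∀ x ∈ Icc L1 L2, 0 < φ x) ∧
    ∀ x ∈ Ioo L1 L2,
      d * (∫ y in L1..L2, J (x - y) * φ y) - d * φ x + a x * φ x ≤ lam * φ x}
    with hS
  have hC0 : 0 < C := lt_of_lt_of_le J0 (hC 0)
  -- S a1 is nonempty
  have hmem1 : (d * C * (L2 - L1) + a1 x1) ∈ S a1 := by
    refine ⟨fun _ => 1, continuousOn_const, fun x _ => one_pos, ?_⟩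
    intro x hx
    have hint : IntervalIntegrable (fun y => J (x - y) * 1) volume L1 L2 :=
      ((Jc.comp (continuous_const.sub continuous_id)).mul continuous_const).intervalIntegrable _ _
    have hIle : (∫ y in L1..L2, J (x - y) * 1) ≤ C * (L2 - L1) := by
      calc (∫ y in L1..L2, J (x - y) * 1) ≤ ∫ _ in L1..L2, C := by
            refine intervalIntegral.integral_mono_on hL.le hint
              (intervalIntegrable_const) (fun y _ => ?_)
            simpa using hC (x - y)
        _ = C * (L2 - L1) := by simp [mul_comm]
    have ha1le : a1 x ≤ a1 x1 := hmax1 x (Ioo_subset_Icc_self hx)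
    have hdnn : 0 ≤ d := hd.le
    simp only [mul_one] at hIle ⊢
    nlinarith [mul_le_mul_of_nonneg_left hIle hdnn]
  -- S a2 is bounded below
  have hmid : (L1 + L2) / 2 ∈ Ioo L1 L2 := by constructor <;> linarith
  have hbdd2 : BddBelow (S a2) := by
    refine ⟨a2 ((L1 + L2) / 2) - d, fun lam hlam => ?_⟩
    obtain ⟨φ, hφc, hφpos, hφineq⟩ := hlam
    have h := hφineq _ hmid
    set x0 := (L1 + L2) / 2
    have hInn : 0 ≤ ∫ y in L1..L2, J (x0 - y) * φ y :=
      intervalIntegral.integral_nonneg hL.le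
        (fun y hy => mul_nonneg (Jnn _) (hφpos y hy).le)
    have hφ0 : 0 < φ x0 := hφpos _ (Ioo_subset_Icc_self hmid)
    nlinarith
  -- shifting lemma: lam ∈ S a1 → lam - ε ∈ S a2
  have hshift : ∀ lam ∈ S a1, lam - ε ∈ S a2 := by
    intro lam hlam
    obtain ⟨φ, hφc, hφpos, hφineq⟩ := hlam
    refine ⟨φ, hφc, hφpos, fun x hx => ?_⟩
    have h := hφineq x hx
    have hφ0 : 0 < φ x := hφpos x (Ioo_subset_Icc_self hx)
    have hεx : ε ≤ a1 x - a2 x := hεle x (Ioo_subset_Icc_self hx)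
    nlinarith
  -- conclude
  have key : sInf (S a2) + ε ≤ sInf (S a1) := by
    refine le_csInf ⟨_, hmem1⟩ (fun lam hlam => ?_)
    have := csInf_le hbdd2 (hshift lam hlam)
    linarith
  have : lambdaP J L1 L2 d a2 = sInf (S a2) := rfl
  rw [this]
  have : lambdaP J L1 L2 d a1 = sInf (S a1) := rfl
  rw [this]
  linarith
end
end

section
/- Suppose γ(b,I,x) is strictly increasing in its first argument b, and let b1, b2 : ℝ → [0,∞) be continuous with b1(x) < b2(x) for all x ∈ [L1,L2]. For i = 1, 2 set a_i(x) := (σ/μ1)·β(m(x),0,x) − μ2 − γ(b_i(x),0,x), and assume each a_i is Lipschitz continuous and attains its maximum over [L1,L2] at an interior point. Then λ_p((L1,L2), d, a_2) < λ_p((L1,L2), d, a_1); that is, the generalized principal eigenvalue is strictly decreasing in the hospital-bed function b. -/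
open MeasureTheory Set Filter Topology

noncomputable section

/-- Theorem 3.2 (ii): the generalized principal eigenvalue is strictly decreasing
in the hospital-bed function `b`. -/
theorem lambdaP_strictAnti_beds
    (J : ℝ → ℝ) (d σ μ1 μ2 L1 L2 : ℝ) (m b1 b2 : ℝ → ℝ)
    (β γ : ℝ → ℝ → ℝ → ℝ) (a1 a2 : ℝ → ℝ)
    (hJ : KernelJ J) (hd : 0 < d) (hσ : 0 < σ) (hμ1 : 0 < μ1) (hμ2 : 0 < μ2)
    (hL : L1 < L2)
    (hm : Continuous m) (hm0 : ∀ x, 0 ≤ m x)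
    (hβL : ∃ K, LipschitzWith K fun p : ℝ × ℝ × ℝ => β p.1 p.2.1 p.2.2)
    (hγL : ∃ K, LipschitzWith K fun p : ℝ × ℝ × ℝ => γ p.1 p.2.1 p.2.2)
    (hβ0 : ∀ m' I' x, 0 ≤ β m' I' x) (hγ0 : ∀ b' I' x, 0 ≤ γ b' I' x)
    (hγstrict : ∀ I' x, StrictMonoOn (fun b' => γ b' I' x) (Ici 0))
    (hb1 : Continuous b1) (hb1nn : ∀ x, 0 ≤ b1 x)
    (hb2 : Continuous b2) (hb2nn : ∀ x, 0 ≤ b2 x)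
    (hb12 : ∀ x ∈ Icc L1 L2, b1 x < b2 x)
    (ha1 : ∀ x, a1 x = σ / μ1 * β (m x) 0 x - μ2 - γ (b1 x) 0 x)
    (ha2 : ∀ x, a2 x = σ / μ1 * β (m x) 0 x - μ2 - γ (b2 x) 0 x)
    (ha1L : ∃ K, LipschitzWith K a1) (ha2L : ∃ K, LipschitzWith K a2)
    (ha1H : ∃ x0 ∈ Ioo L1 L2, ∀ x ∈ Icc L1 L2, a1 x ≤ a1 x0)
    (ha2H : ∃ x0 ∈ Ioo L1 L2, ∀ x ∈ Icc L1 L2, a2 x ≤ a2 x0) :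
    lambdaP J L1 L2 d a2 < lambdaP J L1 L2 d a1 := by
  obtain ⟨hJc, hJ0, -, -, -, hJint1⟩ := hJ
  have hJint : Integrable J := by
    by_contra h
    rw [MeasureTheory.integral_undef h] at hJint1
    norm_num at hJint1
  obtain ⟨x0, hx0, hmax1⟩ := ha1H
  obtain ⟨K1, hK1⟩ := ha1L
  obtain ⟨K2, hK2⟩ := ha2L
  have hc1 : Continuous a1 := hK1.continuous
  have hc2 : Continuous a2 := hK2.continuous
  -- minimum gap ε between a1 and a2 on [L1, L2]
  obtain ⟨z, hz, hzmin⟩ := isCompact_Icc.exists_isMinOn (α := ℝ)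
    ⟨L1, left_mem_Icc.2 hL.le⟩ ((hc1.sub hc2).continuousOn)
  set ε := a1 z - a2 z with hεdef
  have hεpos : 0 < ε := by
    have := hγstrict 0 z (hb1nn z) (hb2nn z) (hb12 z hz)
    simp only [hεdef, ha1 z, ha2 z]
    simp only at this
    linarith
  have hεle : ∀ x ∈ Icc L1 L2, ε ≤ a1 x - a2 x := fun x hx => hzmin hx
  set S1 := {lam : ℝ | ∃ φ : ℝ → ℝ, ContinuousOn φ (Icc L1 L2) ∧
    (∀ x ∈ Icc L1 L2, 0 < φ x) ∧
    ∀ x ∈ Ioo L1 L2,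
      d * (∫ y in L1..L2, J (x - y) * φ y) - d * φ x + a1 x * φ x ≤ lam * φ x} with hS1
  set S2 := {lam : ℝ | ∃ φ : ℝ → ℝ, ContinuousOn φ (Icc L1 L2) ∧
    (∀ x ∈ Icc L1 L2, 0 < φ x) ∧
    ∀ x ∈ Ioo L1 L2,
      d * (∫ y in L1..L2, J (x - y) * φ y) - d * φ x + a2 x * φ x ≤ lam * φ x} with hS2
  -- S1 is nonempty: constant test function 1
  have hne : S1.Nonempty := by
    refine ⟨a1 x0, fun _ => 1, continuousOn_const, fun _ _ => one_pos, ?_⟩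
    intro x hx
    have hcomp : Integrable (fun y => J (x - y)) := by
      simpa using hJint.comp_sub_left x
    have hint : (∫ y in L1..L2, J (x - y)) ≤ 1 := by
      rw [intervalIntegral.integral_of_le hL.le]
      calc (∫ y in Ioc L1 L2, J (x - y))
          ≤ ∫ y, J (x - y) :=
            setIntegral_le_integral hcomp (Filter.Eventually.of_forall fun y => hJ0 _)
        _ = ∫ y, J y := by simpa using integral_sub_left_eq_self J volume x
        _ = 1 := hJint1
    have hx' := hmax1 x (Ioo_subset_Icc_self hx)
    simp only [mul_one]
    nlinarith
  -- S2 is bounded below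
  have hbdd : BddBelow S2 := by
    refine ⟨a2 ((L1 + L2) / 2) - d, ?_⟩
    rintro lam ⟨φ, hφc, hφpos, hφineq⟩
    have hmem : (L1 + L2) / 2 ∈ Ioo L1 L2 := ⟨by linarith, by linarith⟩
    have hpos := hφpos _ (Ioo_subset_Icc_self hmem)
    have hine := hφineq _ hmem
    have hInt0 : 0 ≤ ∫ y in L1..L2, J ((L1 + L2) / 2 - y) * φ y :=
      intervalIntegral.integral_nonneg hL.le
        (fun u hu => mul_nonneg (hJ0 _) (hφpos u hu).le)
    nlinarith
  -- key step: lam ∈ S1 → lam - ε ∈ S2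
  have key : ∀ lam ∈ S1, lam - ε ∈ S2 := by
    rintro lam ⟨φ, hφc, hφpos, hφineq⟩
    refine ⟨φ, hφc, hφpos, fun x hx => ?_⟩
    have h1 := hφineq x hx
    have h2 := hεle x (Ioo_subset_Icc_self hx)
    have hpos := hφpos x (Ioo_subset_Icc_self hx)
    nlinarith
  have h1 : sInf S2 + ε ≤ sInf S1 := by
    refine le_csInf hne fun lam hlam => ?_
    have := csInf_le hbdd (key lam hlam)
    linarith
  show sInf S2 < sInf S1
  linarith
end
end

section
/- Let a : ℝ → ℝ be Lipschitz continuous and suppose that for every pair L1 < L2 the restriction of a to [L1,L2] attains its maximum at an interior point of (L1,L2). Then for each fixed d > 0, the map (L1,L2) ↦ λ_p((L1,L2), d, a) is continuous on the set {(L1,L2) ∈ ℝ² : L1 < L2}. -/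
open MeasureTheory Set Filter Topology

noncomputable section

namespace NLP

def SSet (J : ℝ → ℝ) (L1 L2 d : ℝ) (a : ℝ → ℝ) : Set ℝ :=
  {lam : ℝ | ∃ φ : ℝ → ℝ, ContinuousOn φ (Icc L1 L2) ∧
    (∀ x ∈ Icc L1 L2, 0 < φ x) ∧
    ∀ x ∈ Ioo L1 L2,
      d * (∫ y in L1..L2, J (x - y) * φ y) - d * φ x + a x * φ x ≤ lam * φ x}

lemma lambdaP_eq (J : ℝ → ℝ) (L1 L2 d : ℝ) (a : ℝ → ℝ) :
    lambdaP J L1 L2 d a = sInf (SSet J L1 L2 d a) := rfl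

variable {J a : ℝ → ℝ} {d : ℝ}

lemma J_integrable (hJ : KernelJ J) : Integrable J := by
  by_contra h
  have h2 := hJ.2.2.2.2.2
  rw [MeasureTheory.integral_undef h] at h2
  exact one_ne_zero h2.symm

/-- the kernel mass over any interval is at most 1 -/
lemma J_int_le_one (hJ : KernelJ J) {M1 M2 : ℝ} (h : M1 ≤ M2) (x : ℝ) :
    (∫ y in M1..M2, J (x - y)) ≤ 1 := by
  rw [intervalIntegral.integral_comp_sub_left J x]
  rw [intervalIntegral.integral_of_le (by linarith : x - M2 ≤ x - M1)]
  calc ∫ y in Ioc (x - M2) (x - M1), J y ≤ ∫ y, J y :=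
        setIntegral_le_integral (J_integrable hJ) (ae_of_all _ hJ.2.1)
    _ = 1 := hJ.2.2.2.2.2

/-- membership given a test function; useful direction of the defn -/
lemma mem_SSet {M1 M2 lam : ℝ} (φ : ℝ → ℝ) (hc : ContinuousOn φ (Icc M1 M2))
    (hp : ∀ x ∈ Icc M1 M2, 0 < φ x)
    (hi : ∀ x ∈ Ioo M1 M2,
      d * (∫ y in M1..M2, J (x - y) * φ y) - d * φ x + a x * φ x ≤ lam * φ x) :
    lam ∈ SSet J M1 M2 d a := ⟨φ, hc, hp, hi⟩

/-- The max value of `a` is in the set, via the constant test function 1. -/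
lemma max_mem_SSet (hJ : KernelJ J) (hd : 0 < d) {M1 M2 x0 : ℝ} (h : M1 < M2)
    (hx0 : x0 ∈ Ioo M1 M2) (hmax : ∀ x ∈ Icc M1 M2, a x ≤ a x0) :
    a x0 ∈ SSet J M1 M2 d a := by
  refine mem_SSet (fun _ => 1) continuousOn_const (fun x _ => one_pos) ?_
  intro x hx
  simp only [mul_one]
  have h2 := J_int_le_one hJ h.le x
  have h3 := hmax x (Ioo_subset_Icc_self hx)
  nlinarith

/-- any point of `Ioo` gives a lower bound `a x - d ≤ lam` for `lam ∈ SSet`. -/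
lemma SSet_lower (hJ : KernelJ J) (hd : 0 < d) {M1 M2 lam : ℝ} (h : M1 < M2)
    {x : ℝ} (hx : x ∈ Ioo M1 M2) (hlam : lam ∈ SSet J M1 M2 d a) :
    a x - d ≤ lam := by
  obtain ⟨φ, hc, hp, hi⟩ := hlam
  have hI : 0 ≤ ∫ y in M1..M2, J (x - y) * φ y := by
    apply intervalIntegral.integral_nonneg h.le
    intro y hy
    exact mul_nonneg (hJ.2.1 _) (hp y hy).le
  have h2 := hi x hx
  have h3 := hp x (Ioo_subset_Icc_self hx)
  nlinarith

lemma SSet_bddBelow (hJ : KernelJ J) (hd : 0 < d) {M1 M2 : ℝ} (h : M1 < M2)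
    {x : ℝ} (hx : x ∈ Ioo M1 M2) : BddBelow (SSet J M1 M2 d a) :=
  ⟨a x - d, fun lam hlam => SSet_lower hJ hd h hx hlam⟩

lemma lambdaP_le_max (hJ : KernelJ J) (hd : 0 < d) {M1 M2 x0 : ℝ} (h : M1 < M2)
    (hx0 : x0 ∈ Ioo M1 M2) (hmax : ∀ x ∈ Icc M1 M2, a x ≤ a x0) :
    lambdaP J M1 M2 d a ≤ a x0 := by
  rw [lambdaP_eq]
  exact csInf_le (SSet_bddBelow hJ hd h hx0) (max_mem_SSet hJ hd h hx0 hmax)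

lemma max_sub_le_lambdaP (hJ : KernelJ J) (hd : 0 < d) {M1 M2 x0 : ℝ} (h : M1 < M2)
    (hx0 : x0 ∈ Ioo M1 M2) (hmax : ∀ x ∈ Icc M1 M2, a x ≤ a x0) :
    a x0 - d ≤ lambdaP J M1 M2 d a := by
  rw [lambdaP_eq]
  apply le_csInf ⟨a x0, max_mem_SSet hJ hd h hx0 hmax⟩
  intro lam hlam
  exact SSet_lower hJ hd h hx0 hlam

/-- continuity of the integrand -/
lemma contOn_integrand (hJ : KernelJ J) {φ : ℝ → ℝ} {A B : ℝ} (x : ℝ)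
    (hc : ContinuousOn φ (Icc A B)) :
    ContinuousOn (fun y => J (x - y) * φ y) (Icc A B) := by
  exact (((hJ.1.comp (continuous_const.sub continuous_id)).continuousOn)).mul hc

lemma intInt_Jmul (hJ : KernelJ J) {φ : ℝ → ℝ} {A B u v : ℝ} (x : ℝ)
    (hc : ContinuousOn φ (Icc A B)) (hu : A ≤ u) (huv : u ≤ v) (hv : v ≤ B) :
    IntervalIntegrable (fun y => J (x - y) * φ y) volume u v := by
  apply ContinuousOn.intervalIntegrable
  apply (contOn_integrand hJ x hc).mono
  rw [uIcc_of_le huv]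
  exact Icc_subset_Icc hu hv

/-- Monotonicity: enlarging the interval shrinks the admissible set. -/
lemma SSet_antitone (hJ : KernelJ J) (hd : 0 < d) {M1 M2 M1' M2' : ℝ}
    (h1 : M1' ≤ M1) (h : M1 < M2) (h2 : M2 ≤ M2') :
    SSet J M1' M2' d a ⊆ SSet J M1 M2 d a := by
  rintro lam ⟨φ, hc, hp, hi⟩
  have hsub : Icc M1 M2 ⊆ Icc M1' M2' := Icc_subset_Icc h1 h2
  refine ⟨φ, hc.mono hsub, fun x hx => hp x (hsub hx), ?_⟩
  intro x hx
  have hx' : x ∈ Ioo M1' M2' := Ioo_subset_Ioo h1 h2 hx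
  have key : (∫ y in M1..M2, J (x - y) * φ y) ≤ ∫ y in M1'..M2', J (x - y) * φ y := by
    have e1 : (∫ y in M1'..M1, J (x - y) * φ y) + (∫ y in M1..M2', J (x - y) * φ y)
        = ∫ y in M1'..M2', J (x - y) * φ y :=
      intervalIntegral.integral_add_adjacent_intervals
        (intInt_Jmul hJ x hc le_rfl h1 (by linarith))
        (intInt_Jmul hJ x hc h1 (by linarith) le_rfl)
    have e2 : (∫ y in M1..M2, J (x - y) * φ y) + (∫ y in M2..M2', J (x - y) * φ y)
        = ∫ y in M1..M2', J (x - y) * φ y :=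
      intervalIntegral.integral_add_adjacent_intervals
        (intInt_Jmul hJ x hc h1 h.le h2)
        (intInt_Jmul hJ x hc (by linarith) h2 le_rfl)
    have n1 : 0 ≤ ∫ y in M1'..M1, J (x - y) * φ y := by
      apply intervalIntegral.integral_nonneg h1
      exact fun y hy => mul_nonneg (hJ.2.1 _) (hp y (Icc_subset_Icc le_rfl (by linarith) hy)).le
    have n2 : 0 ≤ ∫ y in M2..M2', J (x - y) * φ y := by
      apply intervalIntegral.integral_nonneg h2
      exact fun y hy => mul_nonneg (hJ.2.1 _) (hp y (Icc_subset_Icc (by linarith) le_rfl hy)).le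
    linarith
  have h2' := hi x hx'
  have h3 := hp x (hsub (Ioo_subset_Icc_self hx))
  nlinarith

lemma lambdaP_mono (hJ : KernelJ J) (hd : 0 < d) {M1 M2 M1' M2' : ℝ}
    (h1 : M1' ≤ M1) (h : M1 < M2) (h2 : M2 ≤ M2')
    (hne : (SSet J M1' M2' d a).Nonempty) :
    lambdaP J M1 M2 d a ≤ lambdaP J M1' M2' d a := by
  rw [lambdaP_eq, lambdaP_eq]
  obtain ⟨x, hx⟩ : ∃ x, x ∈ Ioo M1 M2 := ⟨(M1+M2)/2, by constructor <;> [linarith; linarith]⟩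
  exact csInf_le_csInf (SSet_bddBelow hJ hd h hx) hne (SSet_antitone hJ hd h1 h h2)

/-! ### Normalised admissible test functions -/

def clampI (M1 M2 x : ℝ) : ℝ := max M1 (min M2 x)

lemma continuous_clampI (M1 M2 : ℝ) : Continuous (clampI M1 M2) :=
  continuous_const.max (continuous_const.min continuous_id)

lemma clampI_mem {M1 M2 : ℝ} (h : M1 ≤ M2) (x : ℝ) : clampI M1 M2 x ∈ Icc M1 M2 := by
  constructor
  · exact le_max_left _ _
  · exact max_le h (min_le_left _ _)

lemma clampI_eq_self {M1 M2 x : ℝ} (hx : x ∈ Icc M1 M2) : clampI M1 M2 x = x := by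
  have := hx.1; have := hx.2
  unfold clampI
  rw [min_eq_right hx.2, max_eq_right hx.1]

lemma clampI_of_le {M1 M2 x : ℝ} (h : M1 ≤ M2) (hx : x ≤ M1) : clampI M1 M2 x = M1 := by
  unfold clampI
  rw [min_eq_right (le_trans hx h), max_eq_left hx]

lemma clampI_of_ge {M1 M2 x : ℝ} (h : M1 ≤ M2) (hx : M2 ≤ x) : clampI M1 M2 x = M2 := by
  unfold clampI
  rw [min_eq_left hx, max_eq_right h]

/-- Admissible pair: globally continuous positive test function with the
inequality holding on the closed interval. -/
structure Adm (J a : ℝ → ℝ) (d M1 M2 lam : ℝ) (φ : ℝ → ℝ) : Prop where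
  cont : Continuous φ
  pos : ∀ x, 0 < φ x
  ineq : ∀ x ∈ Icc M1 M2,
    d * (∫ y in M1..M2, J (x - y) * φ y) - d * φ x + a x * φ x ≤ lam * φ x

lemma Adm.mem_SSet {M1 M2 lam : ℝ} {φ : ℝ → ℝ} (hA : Adm J a d M1 M2 lam φ) :
    lam ∈ SSet J M1 M2 d a :=
  ⟨φ, hA.cont.continuousOn, fun x _ => hA.pos x,
    fun x hx => hA.ineq x (Ioo_subset_Icc_self hx)⟩

lemma continuous_F (hJ : KernelJ J) {φ : ℝ → ℝ} (hφ : Continuous φ) (M1 M2 : ℝ) :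
    Continuous (fun x => ∫ y in M1..M2, J (x - y) * φ y) := by
  apply intervalIntegral.continuous_parametric_intervalIntegral_of_continuous'
  exact ((hJ.1.comp (continuous_fst.sub continuous_snd)).mul (hφ.comp continuous_snd))

lemma exists_adm (hJ : KernelJ J) (ha : Continuous a) {M1 M2 lam : ℝ} (h : M1 < M2)
    (hlam : lam ∈ SSet J M1 M2 d a) : ∃ φ, Adm J a d M1 M2 lam φ := by
  obtain ⟨φ, hc, hp, hi⟩ := hlam
  set ψ : ℝ → ℝ := fun x => φ (clampI M1 M2 x) with hψ
  have hψc : Continuous ψ :=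
    hc.comp_continuous (continuous_clampI M1 M2) (clampI_mem h.le)
  have hψp : ∀ x, 0 < ψ x := fun x => hp _ (clampI_mem h.le x)
  have hint : ∀ x : ℝ, (∫ y in M1..M2, J (x - y) * ψ y) = ∫ y in M1..M2, J (x - y) * φ y := by
    intro x
    apply intervalIntegral.integral_congr
    intro y hy
    rw [uIcc_of_le h.le] at hy
    simp only [hψ, clampI_eq_self hy]
  refine ⟨ψ, ⟨hψc, hψp, ?_⟩⟩
  -- the inequality holds on `Ioo`, extend to `Icc` by continuity
  have hIoo : ∀ x ∈ Ioo M1 M2,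
      d * (∫ y in M1..M2, J (x - y) * ψ y) - d * ψ x + a x * ψ x ≤ lam * ψ x := by
    intro x hx
    rw [hint x]
    have hxe : ψ x = φ x := by rw [hψ]; simp [clampI_eq_self (Ioo_subset_Icc_self hx)]
    rw [hxe]
    exact hi x hx
  set H : ℝ → ℝ := fun x =>
    d * (∫ y in M1..M2, J (x - y) * ψ y) - d * ψ x + a x * ψ x - lam * ψ x with hH
  have hHc : Continuous H := by
    apply Continuous.sub
    apply Continuous.add
    apply Continuous.sub
    · exact (continuous_const.mul (continuous_F hJ hψc M1 M2))
    · exact continuous_const.mul hψc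
    · exact ha.mul hψc
    · exact continuous_const.mul hψc
  intro x hx
  have hxc : x ∈ closure (Ioo M1 M2) := by rw [closure_Ioo h.ne]; exact hx
  have hnb : (𝓝[Ioo M1 M2] x).NeBot := mem_closure_iff_nhdsWithin_neBot.mp hxc
  have htd : Tendsto H (𝓝[Ioo M1 M2] x) (𝓝 (H x)) :=
    (hHc.tendsto x).mono_left nhdsWithin_le_nhds
  have hle : H x ≤ 0 := by
    apply le_of_tendsto htd
    filter_upwards [self_mem_nhdsWithin] with y hy
    have := hIoo y hy
    simp only [hH]
    linarith
  simp only [hH] at hle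
  linarith

/-! ### Harnack-type estimate -/

/-- monotonicity of integrals of nonneg continuous functions under interval inclusion -/
lemma int_sub_mono {φ : ℝ → ℝ} (hφ : Continuous φ) (hφ0 : ∀ y, 0 ≤ φ y)
    {u v u' v' : ℝ} (h1 : u' ≤ u) (h2 : u ≤ v) (h3 : v ≤ v') :
    (∫ y in u..v, φ y) ≤ ∫ y in u'..v', φ y := by
  have e1 : (∫ y in u'..u, φ y) + (∫ y in u..v', φ y) = ∫ y in u'..v', φ y :=
    intervalIntegral.integral_add_adjacent_intervals
      (hφ.intervalIntegrable _ _) (hφ.intervalIntegrable _ _)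
  have e2 : (∫ y in u..v, φ y) + (∫ y in v..v', φ y) = ∫ y in u..v', φ y :=
    intervalIntegral.integral_add_adjacent_intervals
      (hφ.intervalIntegrable _ _) (hφ.intervalIntegrable _ _)
  have n1 : 0 ≤ ∫ y in u'..u, φ y :=
    intervalIntegral.integral_nonneg h1 (fun y _ => hφ0 y)
  have n2 : 0 ≤ ∫ y in v..v', φ y :=
    intervalIntegral.integral_nonneg h3 (fun y _ => hφ0 y)
  linarith

section Harnack

variable {M1 M2 lam r η D ℓ : ℝ} {φ : ℝ → ℝ}

/-- Step 1: pointwise lower bound by the local mass. -/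
lemma harnack_step1 (hJ : KernelJ J) (hd : 0 < d)
    (hr : 0 < r) (hη : 0 < η) (hJr : ∀ u : ℝ, |u| ≤ 4*r → η ≤ J u) (hD : 0 < D)
    (h : M1 < M2) (hA : Adm J a d M1 M2 lam φ)
    (hlamD : ∀ x ∈ Icc M1 M2, lam + d - a x ≤ D) :
    ∀ x ∈ Icc M1 M2,
      (d * η / D) * (∫ y in max M1 (x - 4*r)..min M2 (x + 4*r), φ y) ≤ φ x := by
  intro x hx
  set mx1 := max M1 (x - 4*r) with hmx1
  set mx2 := min M2 (x + 4*r) with hmx2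
  have hb1 : M1 ≤ mx1 := le_max_left _ _
  have hb2 : mx1 ≤ x := max_le hx.1 (by linarith)
  have hb3 : x ≤ mx2 := le_min hx.2 (by linarith)
  have hb4 : mx2 ≤ M2 := min_le_left _ _
  have hφ0 : ∀ y, 0 ≤ (φ y) := fun y => (hA.pos y).le
  -- kernel bound from below on the local window
  have key1 : η * (∫ y in mx1..mx2, φ y) ≤ ∫ y in mx1..mx2, J (x - y) * φ y := by
    rw [← intervalIntegral.integral_const_mul]
    apply intervalIntegral.integral_mono_on (by linarith)
      (by exact (continuous_const.mul hA.cont).intervalIntegrable _ _)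
      (((hJ.1.comp (continuous_const.sub continuous_id)).mul hA.cont).intervalIntegrable _ _)
    intro y hy
    have hyd : |x - y| ≤ 4*r := by
      rw [abs_le]
      constructor
      · have h5 : y ≤ x + 4*r := le_trans hy.2 (min_le_right _ _)
        linarith
      · have h6 : x - 4*r ≤ y := le_trans (le_max_right _ _) hy.1
        linarith
    exact mul_le_mul_of_nonneg_right (hJr _ hyd) (hφ0 y)
  -- local window integral is below full window integral
  have key2 : (∫ y in mx1..mx2, J (x - y) * φ y) ≤ ∫ y in M1..M2, J (x - y) * φ y := by
    have e1 : (∫ y in M1..mx1, J (x - y) * φ y) + (∫ y in mx1..M2, J (x - y) * φ y)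
        = ∫ y in M1..M2, J (x - y) * φ y :=
      intervalIntegral.integral_add_adjacent_intervals
        (((hJ.1.comp (continuous_const.sub continuous_id)).mul hA.cont).intervalIntegrable _ _)
        (((hJ.1.comp (continuous_const.sub continuous_id)).mul hA.cont).intervalIntegrable _ _)
    have e2 : (∫ y in mx1..mx2, J (x - y) * φ y) + (∫ y in mx2..M2, J (x - y) * φ y)
        = ∫ y in mx1..M2, J (x - y) * φ y :=
      intervalIntegral.integral_add_adjacent_intervals
        (((hJ.1.comp (continuous_const.sub continuous_id)).mul hA.cont).intervalIntegrable _ _)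
        (((hJ.1.comp (continuous_const.sub continuous_id)).mul hA.cont).intervalIntegrable _ _)
    have n1 : 0 ≤ ∫ y in M1..mx1, J (x - y) * φ y :=
      intervalIntegral.integral_nonneg hb1 (fun y _ => mul_nonneg (hJ.2.1 _) (hφ0 y))
    have n2 : 0 ≤ ∫ y in mx2..M2, J (x - y) * φ y :=
      intervalIntegral.integral_nonneg hb4 (fun y _ => mul_nonneg (hJ.2.1 _) (hφ0 y))
    linarith
  have key3 : d * (∫ y in M1..M2, J (x - y) * φ y) ≤ D * φ x := by
    have h1 := hA.ineq x hx
    have h2 := hlamD x hx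
    have h3 := hA.pos x
    nlinarith
  have hT0 : 0 ≤ ∫ y in mx1..mx2, φ y :=
    intervalIntegral.integral_nonneg (by linarith) (fun y _ => hφ0 y)
  rw [div_mul_eq_mul_div, div_le_iff₀ hD]
  nlinarith

/-- the local mass function -/
def Gm (φ : ℝ → ℝ) (M1 M2 r : ℝ) (u : ℝ) : ℝ :=
  ∫ y in max M1 (u - r)..min M2 (u + r), φ y

lemma Gm_nonneg (hr : 0 < r) (hφ0 : ∀ y, 0 ≤ φ y) (h : M1 < M2)
    {u : ℝ} (hu : u ∈ Icc M1 M2) : 0 ≤ Gm φ M1 M2 r u := by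
  apply intervalIntegral.integral_nonneg _ (fun y _ => hφ0 y)
  have h1 : max M1 (u - r) ≤ u := max_le hu.1 (by linarith)
  have h2 : u ≤ min M2 (u + r) := le_min hu.2 (by linarith)
  linarith

/-- Step 2: one chaining step. -/
lemma harnack_step2 (hJ : KernelJ J) (hd : 0 < d)
    (hr : 0 < r) (hη : 0 < η) (hJr : ∀ u : ℝ, |u| ≤ 4*r → η ≤ J u) (hD : 0 < D)
    (h : M1 < M2) (hA : Adm J a d M1 M2 lam φ)
    (hlamD : ∀ x ∈ Icc M1 M2, lam + d - a x ≤ D)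
    (hℓ : 0 < ℓ) (hℓle : ℓ ≤ M2 - M1)
    {u v : ℝ} (hu : u ∈ Icc M1 M2) (hv : v ∈ Icc M1 M2) (huv : |u - v| ≤ 2*r) :
    min ((d * η / D) * min r ℓ) 1 * Gm φ M1 M2 r v ≤ Gm φ M1 M2 r u := by
  have hφ0 : ∀ y, 0 ≤ (φ y) := fun y => (hA.pos y).le
  have hGv0 : 0 ≤ Gm φ M1 M2 r v := Gm_nonneg hr hφ0 h hv
  have hc0 : 0 < d * η / D := by positivity
  -- pointwise bound on the window of u
  have hpt : ∀ y ∈ Icc (max M1 (u - r)) (min M2 (u + r)),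
      (d * η / D) * Gm φ M1 M2 r v ≤ φ y := by
    intro y hy
    have hyI : y ∈ Icc M1 M2 :=
      ⟨le_trans (le_max_left _ _) hy.1, le_trans hy.2 (min_le_left _ _)⟩
    have hyu : |y - u| ≤ r := by
      rw [abs_le]
      have q1 : u - r ≤ y := le_trans (le_max_right _ _) hy.1
      have q2 : y ≤ u + r := le_trans hy.2 (min_le_right _ _)
      constructor <;> linarith
    have h1 := harnack_step1 hJ hd hr hη hJr hD h hA hlamD y hyI
    have hsub : (∫ y' in max M1 (v - r)..min M2 (v + r), φ y')
        ≤ ∫ y' in max M1 (y - 4*r)..min M2 (y + 4*r), φ y' := by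
      apply int_sub_mono hA.cont hφ0
      · apply max_le_max le_rfl
        rw [abs_le] at hyu huv
        linarith [huv.1, huv.2, hyu.1, hyu.2]
      · have h2 : max M1 (v - r) ≤ v := max_le hv.1 (by linarith)
        have h3 : v ≤ min M2 (v + r) := le_min hv.2 (by linarith)
        linarith
      · apply min_le_min le_rfl
        rw [abs_le] at hyu huv
        linarith [huv.1, huv.2, hyu.1, hyu.2]
    unfold Gm
    calc (d * η / D) * (∫ y' in max M1 (v - r)..min M2 (v + r), φ y')
        ≤ (d * η / D) * (∫ y' in max M1 (y - 4*r)..min M2 (y + 4*r), φ y') := by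
          exact mul_le_mul_of_nonneg_left hsub hc0.le
      _ ≤ φ y := h1
  -- integrate the pointwise bound over the window of u
  have hb1 : max M1 (u - r) ≤ u := max_le hu.1 (by linarith)
  have hb2 : u ≤ min M2 (u + r) := le_min hu.2 (by linarith)
  have hlen : min r ℓ ≤ min M2 (u + r) - max M1 (u - r) := by
    rcases le_total (u + r) M2 with h1 | h1 <;> rcases le_total M1 (u - r) with h2 | h2
    · rw [min_eq_right h1, max_eq_right h2]
      exact le_trans (min_le_left _ _) (by linarith)
    · rw [min_eq_right h1, max_eq_left h2]
      have := hu.1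
      exact le_trans (min_le_left _ _) (by linarith)
    · rw [min_eq_left h1, max_eq_right h2]
      have := hu.2
      exact le_trans (min_le_left _ _) (by linarith)
    · rw [min_eq_left h1, max_eq_left h2]
      exact le_trans (min_le_right _ _) (by linarith)
  have hint : (d * η / D) * Gm φ M1 M2 r v * (min M2 (u + r) - max M1 (u - r))
      ≤ Gm φ M1 M2 r u := by
    have := intervalIntegral.integral_mono_on (by linarith : max M1 (u - r) ≤ min M2 (u + r))
      (intervalIntegrable_const (μ := volume)) (hA.cont.intervalIntegrable _ _) hpt
    rw [intervalIntegral.integral_const] at this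
    unfold Gm
    calc (d * η / D) * Gm φ M1 M2 r v * (min M2 (u + r) - max M1 (u - r))
        = (min M2 (u + r) - max M1 (u - r)) • ((d * η / D) * Gm φ M1 M2 r v) := by
          simp [smul_eq_mul]; ring
      _ ≤ ∫ y in max M1 (u - r)..min M2 (u + r), φ y := this
  have hq : min ((d * η / D) * min r ℓ) 1 * Gm φ M1 M2 r v
      ≤ (d * η / D) * min r ℓ * Gm φ M1 M2 r v := by
    exact mul_le_mul_of_nonneg_right (min_le_left _ _) hGv0
  have hrl : 0 < min r ℓ := lt_min hr hℓ
  calc min ((d * η / D) * min r ℓ) 1 * Gm φ M1 M2 r v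
      ≤ (d * η / D) * min r ℓ * Gm φ M1 M2 r v := hq
    _ ≤ (d * η / D) * Gm φ M1 M2 r v * (min M2 (u + r) - max M1 (u - r)) := by
        nlinarith [mul_le_mul_of_nonneg_left hlen (mul_nonneg hc0.le hGv0)]
    _ ≤ Gm φ M1 M2 r u := hint

/-- Step 3: chained estimate. -/
lemma harnack_step3 (hJ : KernelJ J) (hd : 0 < d)
    (hr : 0 < r) (hη : 0 < η) (hJr : ∀ u : ℝ, |u| ≤ 4*r → η ≤ J u) (hD : 0 < D)
    (h : M1 < M2) (hA : Adm J a d M1 M2 lam φ)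
    (hlamD : ∀ x ∈ Icc M1 M2, lam + d - a x ≤ D)
    (hℓ : 0 < ℓ) (hℓle : ℓ ≤ M2 - M1) :
    ∀ n : ℕ, ∀ u ∈ Icc M1 M2, ∀ v ∈ Icc M1 M2, |u - v| ≤ n * (2*r) →
      (min ((d * η / D) * min r ℓ) 1) ^ n * Gm φ M1 M2 r v ≤ Gm φ M1 M2 r u := by
  have hφ0 : ∀ y, 0 ≤ (φ y) := fun y => (hA.pos y).le
  set q := min ((d * η / D) * min r ℓ) 1 with hqdef
  have hq0 : 0 < q := lt_min (by positivity) one_pos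
  have hq1 : q ≤ 1 := min_le_right _ _
  intro n
  induction n with
  | zero =>
    intro u hu v hv huv
    simp only [Nat.cast_zero, zero_mul] at huv
    have : u = v := by
      have := abs_nonneg (u - v)
      have h0 : |u - v| = 0 := le_antisymm huv this
      have := abs_eq_zero.mp h0
      linarith
    rw [this, pow_zero, one_mul]
  | succ n ih =>
    intro u hu v hv huv
    have hGv0 : 0 ≤ Gm φ M1 M2 r v := Gm_nonneg hr hφ0 h hv
    rcases le_or_gt (|u - v|) (n * (2*r)) with hcase | hcase
    · have := ih u hu v hv hcase
      have hpow : q ^ (n+1) ≤ q ^ n := pow_le_pow_of_le_one hq0.le hq1 (Nat.le_succ n)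
      nlinarith [mul_le_mul_of_nonneg_right hpow hGv0]
    · rcases le_or_gt (|u - v|) (2*r) with hcase2 | hcase2
      · -- single step suffices
        have hstep := harnack_step2 hJ hd hr hη hJr hD h hA hlamD hℓ hℓle hu hv hcase2
        have hpow : q ^ (n+1) ≤ q := by
          calc q ^ (n+1) ≤ q ^ 1 := pow_le_pow_of_le_one hq0.le hq1 (by omega)
            _ = q := pow_one q
        nlinarith [mul_le_mul_of_nonneg_right hpow hGv0]
      · -- intermediate point
        set D0 := |u - v| with hD0def
        have hD0 : 0 < D0 := by rw [hD0def]; linarith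
        set m := u + 2*r*(v - u)/D0 with hmdef
        have hum : |u - m| = 2*r := by
          rw [hmdef]
          have : u - (u + 2*r*(v - u)/D0) = -(2*r*(v - u)/D0) := by ring
          rw [this, abs_neg, abs_div, abs_of_pos hD0]
          rw [abs_mul, abs_of_pos (by linarith : (0:ℝ) < 2*r)]
          rw [abs_sub_comm v u]
          field_simp
          exact hD0def.symm
        have hmv : |m - v| ≤ n * (2*r) := by
          have hs : 2*r/D0 < 1 := by rw [div_lt_one hD0]; linarith
          have hexp : m - v = (1 - 2*r/D0) * (u - v) := by
            rw [hmdef]; field_simp; ring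
          rw [hexp, abs_mul, abs_of_pos (by linarith [div_pos (by linarith : (0:ℝ) < 2*r) hD0] : (0:ℝ) < 1 - 2*r/D0)]
          have : (1 - 2*r/D0) * |u - v| = D0 - 2*r := by
            rw [← hD0def]; field_simp
          rw [this]
          have hub : D0 ≤ (n+1) * (2*r) := by
            rw [hD0def]
            convert huv using 2
            push_cast; ring
          linarith
        have hmI : m ∈ Icc M1 M2 := by
          have hs0 : 0 ≤ 2*r/D0 := by positivity
          have hs1 : 2*r/D0 ≤ 1 := by rw [div_le_one hD0]; linarith
          have hform : m = u + (2*r/D0) * (v - u) := by rw [hmdef]; ring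
          rcases le_total u v with huv' | huv'
          · constructor
            · rw [hform]; nlinarith [hu.1]
            · rw [hform]; nlinarith [hv.2]
          · constructor
            · rw [hform]; nlinarith [hv.1]
            · rw [hform]; nlinarith [hu.2]
        have h1 := harnack_step2 hJ hd hr hη hJr hD h hA hlamD hℓ hℓle hu hmI (le_of_eq hum)
        have h2 := ih m hmI v hv hmv
        have hGm0 : 0 ≤ Gm φ M1 M2 r m := Gm_nonneg hr hφ0 h hmI
        calc q ^ (n+1) * Gm φ M1 M2 r v = q * (q ^ n * Gm φ M1 M2 r v) := by ring
          _ ≤ q * Gm φ M1 M2 r m := mul_le_mul_of_nonneg_left h2 hq0.le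
          _ ≤ Gm φ M1 M2 r u := h1

/-- The Harnack-type inequality: every value of an admissible test function
dominates a fixed multiple of its total mass. -/
lemma harnack (hJ : KernelJ J) (hd : 0 < d)
    (hr : 0 < r) (hη : 0 < η) (hJr : ∀ u : ℝ, |u| ≤ 4*r → η ≤ J u) (hD : 0 < D)
    (h : M1 < M2) (hA : Adm J a d M1 M2 lam φ)
    (hlamD : ∀ x ∈ Icc M1 M2, lam + d - a x ≤ D)
    (hℓ : 0 < ℓ) (hℓle : ℓ ≤ M2 - M1)
    {n : ℕ} (hn : M2 - M1 ≤ n * (2*r)) (hn0 : 0 < n) :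
    ∀ x ∈ Icc M1 M2,
      (d * η / D) * (min ((d * η / D) * min r ℓ) 1) ^ n / n * (∫ y in M1..M2, φ y)
        ≤ φ x := by
  intro x hx
  have hφ0 : ∀ y, 0 ≤ (φ y) := fun y => (hA.pos y).le
  set q := min ((d * η / D) * min r ℓ) 1 with hqdef
  have hq0 : 0 < q := lt_min (by positivity) one_pos
  have hc0 : 0 < d * η / D := by positivity
  set c0 := d * η / D with hc0def
  -- partition points
  obtain ⟨s, hsdef⟩ : ∃ s : ℕ → ℝ, s = fun i : ℕ => M1 + (i:ℝ) * ((M2 - M1)/n) := ⟨_, rfl⟩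
  have hlen : 0 < (M2 - M1)/n := by
    apply div_pos (by linarith) (by exact_mod_cast hn0)
  have hs0 : s 0 = M1 := by rw [hsdef]; simp
  have hsn : s n = M2 := by
    rw [hsdef]
    field_simp
    ring
  have hsm : ∀ i : ℕ, i ≤ n → s i ∈ Icc M1 M2 := by
    intro i hi
    constructor
    · rw [hsdef]; simp only []
      nlinarith [hlen.le, (by exact_mod_cast Nat.cast_nonneg i : (0:ℝ) ≤ (i:ℝ))]
    · rw [hsdef]; simp only []
      have hic : (i:ℝ) ≤ (n:ℝ) := by exact_mod_cast hi
      have hnn : (0:ℝ) < (n:ℝ) := by exact_mod_cast hn0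
      have : (i:ℝ) * ((M2 - M1)/n) ≤ n * ((M2 - M1)/n) :=
        mul_le_mul_of_nonneg_right hic hlen.le
      have hh : (n:ℝ) * ((M2 - M1)/n) = M2 - M1 := by field_simp
      linarith [hh ▸ this]
  -- total integral as sum of pieces
  have hsum : ∑ i ∈ Finset.range n, (∫ y in s i..s (i+1), φ y) = ∫ y in M1..M2, φ y := by
    rw [← hs0, ← hsn]
    apply intervalIntegral.sum_integral_adjacent_intervals
    intro i hi
    exact hA.cont.intervalIntegrable _ _
  -- each piece is at most `Gm` at its midpoint
  have hpiece : ∀ i : ℕ, i < n → q ^ n * (∫ y in s i..s (i+1), φ y) ≤ Gm φ M1 M2 r x := by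
    intro i hi
    obtain ⟨m, hmdef⟩ : ∃ m : ℝ, m = (s i + s (i+1))/2 := ⟨_, rfl⟩
    have hsi : s i ∈ Icc M1 M2 := hsm i hi.le
    have hsi1 : s (i+1) ∈ Icc M1 M2 := hsm (i+1) hi
    have hstep : s (i+1) - s i = (M2 - M1)/n := by
      rw [hsdef]; push_cast; ring
    have hhalf : (M2 - M1)/n ≤ 2*r := by
      have hnn : (0:ℝ) < (n:ℝ) := by exact_mod_cast hn0
      rw [div_le_iff₀ hnn]
      linarith [hn]
    have hmI : m ∈ Icc M1 M2 := by
      constructor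
      · rw [hmdef]; have := hsi.1; have := hsi1.1; linarith
      · rw [hmdef]; have := hsi.2; have := hsi1.2; linarith
    have hlow : (∫ y in s i..s (i+1), φ y) ≤ Gm φ M1 M2 r m := by
      unfold Gm
      apply int_sub_mono hA.cont hφ0
      · apply max_le hsi.1
        rw [hmdef]; linarith [hstep, hhalf]
      · linarith [hstep, hlen]
      · apply le_min hsi1.2
        rw [hmdef]; linarith [hstep, hhalf]
    have hchain : q ^ n * Gm φ M1 M2 r m ≤ Gm φ M1 M2 r x := by
      apply harnack_step3 hJ hd hr hη hJr hD h hA hlamD hℓ hℓle n x hx m hmI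
      have b1 : |x - m| ≤ M2 - M1 := by
        rw [abs_le]
        constructor
        · linarith [hx.1, hmI.2]
        · linarith [hx.2, hmI.1]
      linarith
    calc q ^ n * (∫ y in s i..s (i+1), φ y) ≤ q ^ n * Gm φ M1 M2 r m :=
          mul_le_mul_of_nonneg_left hlow (by positivity)
      _ ≤ Gm φ M1 M2 r x := hchain
  -- sum up
  have hT : q ^ n * (∫ y in M1..M2, φ y) ≤ n * Gm φ M1 M2 r x := by
    rw [← hsum, Finset.mul_sum]
    calc ∑ i ∈ Finset.range n, q ^ n * (∫ y in s i..s (i+1), φ y)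
        ≤ ∑ i ∈ Finset.range n, Gm φ M1 M2 r x :=
          Finset.sum_le_sum (fun i hi => hpiece i (Finset.mem_range.mp hi))
      _ = n * Gm φ M1 M2 r x := by
          rw [Finset.sum_const, Finset.card_range, nsmul_eq_mul]
  -- Gm at x is controlled by φ x
  have hGx : c0 * Gm φ M1 M2 r x ≤ φ x := by
    have h1 := harnack_step1 hJ hd hr hη hJr hD h hA hlamD x hx
    have hsub : Gm φ M1 M2 r x ≤ ∫ y in max M1 (x - 4*r)..min M2 (x + 4*r), φ y := by
      unfold Gm
      apply int_sub_mono hA.cont hφ0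
      · exact max_le_max le_rfl (by linarith)
      · have b1 : max M1 (x - r) ≤ x := max_le hx.1 (by linarith)
        have b2 : x ≤ min M2 (x + r) := le_min hx.2 (by linarith)
        linarith
      · exact min_le_min le_rfl (by linarith)
    calc c0 * Gm φ M1 M2 r x ≤ c0 * ∫ y in max M1 (x - 4*r)..min M2 (x + 4*r), φ y :=
          mul_le_mul_of_nonneg_left hsub hc0.le
      _ ≤ φ x := h1
  have hnn : (0:ℝ) < (n:ℝ) := by exact_mod_cast hn0
  rw [div_mul_eq_mul_div, div_le_iff₀ hnn]
  calc c0 * q ^ n * (∫ y in M1..M2, φ y) = c0 * (q ^ n * (∫ y in M1..M2, φ y)) := by ring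
    _ ≤ c0 * (n * Gm φ M1 M2 r x) := mul_le_mul_of_nonneg_left hT hc0.le
    _ = (c0 * Gm φ M1 M2 r x) * n := by ring
    _ ≤ φ x * n := mul_le_mul_of_nonneg_right hGx hnn.le

end Harnack

/-! ### Expansion estimate -/

lemma clamp01_mem (s : ℝ) : min 1 (max 0 s) ∈ Icc (0:ℝ) 1 :=
  ⟨le_min one_pos.le (le_max_left _ _), min_le_left _ _⟩

lemma interp_mem {A B s : ℝ} (hs : s ∈ Icc (0:ℝ) 1) :
    min A B ≤ A + (B - A) * s ∧ A + (B - A) * s ≤ max A B := by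
  rcases le_total A B with h | h
  · rw [min_eq_left h, max_eq_right h]
    constructor <;> nlinarith [hs.1, hs.2]
  · rw [min_eq_right h, max_eq_left h]
    constructor <;> nlinarith [hs.1, hs.2]

set_option maxHeartbeats 4000000 in
/-- Main expansion estimate, uniform over a family of base intervals. -/
lemma expansion (hJ : KernelJ J) (hd : 0 < d) {K : NNReal} (ha : LipschitzWith K a)
    (haH : ∀ L1 L2 : ℝ, L1 < L2 → ∃ x0 ∈ Ioo L1 L2, ∀ x ∈ Icc L1 L2, a x ≤ a x0)
    (L1 L2 : ℝ) (hL : L1 < L2) {ε : ℝ} (hε : 0 < ε) :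
    ∃ δ0 > 0, ∀ M1 M2 : ℝ, L1 - 1 ≤ M1 → M2 ≤ L2 + 1 → (L2 - L1)/2 ≤ M2 - M1 →
      ∀ δ : ℝ, 0 < δ → δ ≤ δ0 →
        lambdaP J (M1 - δ) (M2 + δ) d a ≤ lambdaP J M1 M2 d a + ε := by
  -- it suffices to treat `ε ≤ 1`
  obtain ⟨ε₁, hε₁def⟩ : ∃ z, z = min ε 1 := ⟨_, rfl⟩
  have hε₁ : 0 < ε₁ := hε₁def ▸ lt_min hε one_pos
  have hε₁le : ε₁ ≤ ε := hε₁def ▸ min_le_left _ _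
  have hε₁1 : ε₁ ≤ 1 := hε₁def ▸ min_le_right _ _
  obtain ⟨ε₂, hε₂def⟩ : ∃ z, z = ε₁ / 2 := ⟨_, rfl⟩
  have hε₂ : 0 < ε₂ := by rw [hε₂def]; linarith
  have hε₂1 : ε₂ ≤ 1 := by rw [hε₂def]; linarith
  -- constants
  obtain ⟨CJ, hCJ⟩ := hJ.2.2.1
  have hCJ0 : 0 < CJ := lt_of_lt_of_le hJ.2.2.2.2.1 (hCJ 0)
  have hJ0 : 0 < J 0 := hJ.2.2.2.2.1
  -- kernel bounded below near the origin
  obtain ⟨rr, hrr0, hball⟩ := Metric.continuousAt_iff.mp hJ.1.continuousAt (J 0 / 2)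
    (by positivity)
  obtain ⟨r, hrdef⟩ : ∃ z, z = rr / 8 := ⟨_, rfl⟩
  have hr0 : 0 < r := by rw [hrdef]; positivity
  obtain ⟨η, hηdef⟩ : ∃ z, z = J 0 / 2 := ⟨_, rfl⟩
  have hη0 : 0 < η := by rw [hηdef]; positivity
  have hJr : ∀ u : ℝ, |u| ≤ 4 * r → η ≤ J u := by
    intro u hu
    have h1 : dist u 0 < rr := by
      rw [Real.dist_eq, sub_zero]
      calc |u| ≤ 4 * r := hu
        _ < rr := by rw [hrdef]; linarith
    have h2 := hball h1
    rw [Real.dist_eq] at h2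
    have := abs_lt.mp h2
    rw [hηdef]; linarith [this.1]
  -- lipschitz constant
  obtain ⟨Kr, hKrdef⟩ : ∃ z, z = (K : ℝ) := ⟨_, rfl⟩
  have hKr0 : 0 ≤ Kr := hKrdef ▸ K.coe_nonneg
  have hK : ∀ x y : ℝ, |a x - a y| ≤ Kr * |x - y| := by
    intro x y
    have h0 := ha.dist_le_mul x y
    rw [Real.dist_eq, Real.dist_eq] at h0
    rw [hKrdef]
    exact h0
  -- bounds for a on the hull
  obtain ⟨amax, hamaxdef⟩ : ∃ z, z = a L1 + Kr * (L2 - L1 + 2) := ⟨_, rfl⟩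
  obtain ⟨amin, hamindef⟩ : ∃ z, z = a L1 - Kr * (L2 - L1 + 2) := ⟨_, rfl⟩
  have habound : ∀ x ∈ Icc (L1 - 1) (L2 + 1), amin ≤ a x ∧ a x ≤ amax := by
    intro x hx
    have h1 := hK x L1
    have h2 := abs_le.mp h1
    have h3 : |x - L1| ≤ L2 - L1 + 2 := by
      rw [abs_le]; constructor <;> [linarith [hx.1]; linarith [hx.2]]
    have h4 : Kr * |x - L1| ≤ Kr * (L2 - L1 + 2) := mul_le_mul_of_nonneg_left h3 hKr0
    constructor
    · rw [hamindef]; linarith [h2.1, h2.2]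
    · rw [hamaxdef]; linarith [h2.1, h2.2]
  obtain ⟨D, hDdef⟩ : ∃ z, z = amax + 1 + d - amin := ⟨_, rfl⟩
  have hD0 : 0 < D := by
    have : amin ≤ amax := by rw [hamaxdef, hamindef]; nlinarith [hL.le]
    rw [hDdef]; linarith
  obtain ⟨ℓ, hℓdef⟩ : ∃ z, z = (L2 - L1)/2 := ⟨_, rfl⟩
  have hℓ0 : 0 < ℓ := by rw [hℓdef]; linarith
  -- number of chaining steps
  obtain ⟨n, hndef⟩ : ∃ z : ℕ, z = Nat.ceil ((L2 - L1 + 2)/(2*r)) + 1 := ⟨_, rfl⟩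
  have hn0 : 0 < n := hndef ▸ Nat.succ_pos _
  have hnbig : L2 - L1 + 2 ≤ n * (2*r) := by
    have h1 : (L2 - L1 + 2)/(2*r) ≤ Nat.ceil ((L2 - L1 + 2)/(2*r)) := Nat.le_ceil _
    have h2 : ((Nat.ceil ((L2 - L1 + 2)/(2*r)) : ℝ)) ≤ (n : ℝ) := by
      rw [hndef]; push_cast; linarith
    have h3 : (L2 - L1 + 2)/(2*r) ≤ (n:ℝ) := le_trans h1 h2
    calc L2 - L1 + 2 = ((L2 - L1 + 2)/(2*r)) * (2*r) := by field_simp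
      _ ≤ n * (2*r) := mul_le_mul_of_nonneg_right h3 (by linarith)
  -- the Harnack constant
  obtain ⟨c, hcdef⟩ : ∃ z, z = (d * η / D) * (min ((d * η / D) * min r ℓ) 1) ^ n / n := ⟨_, rfl⟩
  have hc0 : 0 < c := by
    rw [hcdef]
    have h1 : (0:ℝ) < d * η / D := by rw [hDdef]; rw [hDdef] at hD0; positivity
    have h2 : (0:ℝ) < min ((d * η / D) * min r ℓ) 1 := lt_min (by positivity) one_pos
    have h3 : (0:ℝ) < (n:ℝ) := by exact_mod_cast hn0
    positivity
  -- the plateau constant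
  obtain ⟨Cw, hCwdef⟩ : ∃ z, z = max (4 * d * CJ / ε₂) 1 := ⟨_, rfl⟩
  have hCw0 : (1:ℝ) ≤ Cw := hCwdef ▸ le_max_right _ _
  have hCw4 : 4 * d * CJ / ε₂ ≤ Cw := hCwdef ▸ le_max_left _ _
  -- the uniform-continuity modulus
  obtain ⟨R, hRdef⟩ : ∃ z, z = L2 - L1 + 4 := ⟨_, rfl⟩
  have hucJ := (isCompact_Icc (a := -R) (b := R)).uniformContinuousOn_of_continuous
    hJ.1.continuousOn
  rw [Metric.uniformContinuousOn_iff] at hucJ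
  obtain ⟨δω, hδω0, hδωp⟩ := hucJ (c * ε₂ / (8 * d)) (by positivity)
  -- the final smallness choice
  obtain ⟨δ0, hδ0def⟩ : ∃ z, z = min (min 1 (δω/2)) (min (ε₂/(8*(Kr+1))) (min (c * ε₂/(4*d*CJ*(1+Cw) + 1)) (1/(2*(1+Cw))))) := ⟨_, rfl⟩
  have hδ00 : 0 < δ0 := by
    rw [hδ0def]
    have : (0:ℝ) < 1 + Cw := by linarith
    positivity
  refine ⟨δ0, hδ00, ?_⟩
  intro M1 M2 hM1 hM2 hMlen δ hδ hδle
  rw [hδ0def] at hδle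
  have hδ1 : δ ≤ 1 := le_trans hδle ((min_le_left _ _).trans (min_le_left _ _))
  have hδω2 : δ ≤ δω/2 := le_trans hδle ((min_le_left _ _).trans (min_le_right _ _))
  have hδK : δ ≤ ε₂/(8*(Kr+1)) := le_trans hδle ((min_le_right _ _).trans (min_le_left _ _))
  have hδc : δ ≤ c * ε₂/(4*d*CJ*(1+Cw) + 1) :=
    le_trans hδle ((min_le_right _ _).trans ((min_le_right _ _).trans (min_le_left _ _)))
  have hδCw : δ ≤ 1/(2*(1+Cw)) :=
    le_trans hδle ((min_le_right _ _).trans ((min_le_right _ _).trans (min_le_right _ _)))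
  have hCwpos : (0:ℝ) < 1 + Cw := by linarith
  have hKδ : Kr * δ ≤ ε₂/8 := by
    have h1 : Kr * δ ≤ Kr * (ε₂/(8*(Kr+1))) := mul_le_mul_of_nonneg_left hδK hKr0
    have h2 : Kr * (ε₂/(8*(Kr+1))) ≤ ε₂/8 := by
      rw [mul_div_assoc', div_le_div_iff₀ (by linarith) (by norm_num : (0:ℝ) < 8)]
      nlinarith
    linarith
  have hδCw' : (1+Cw) * δ ≤ 1/2 := by
    rw [le_div_iff₀ (by linarith : (0:ℝ) < 2*(1+Cw))] at hδCw
    nlinarith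
  have hδc' : 2*d*CJ*(1+Cw)*δ ≤ c * ε₂ / 2 := by
    rw [le_div_iff₀ (by positivity : (0:ℝ) < 4*d*CJ*(1+Cw) + 1)] at hδc
    nlinarith [hδ.le]
  have hMlen' : ℓ ≤ M2 - M1 := by rw [hℓdef]; exact hMlen
  have hM : M1 < M2 := by linarith
  have hhull : Icc M1 M2 ⊆ Icc (L1-1) (L2+1) := Icc_subset_Icc hM1 hM2
  obtain ⟨x0, hx0I, hx0max⟩ := haH M1 M2 hM
  have hx0h := hhull (Ioo_subset_Icc_self hx0I)
  have hne : (SSet J M1 M2 d a).Nonempty := ⟨a x0, max_mem_SSet hJ hd hM hx0I hx0max⟩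
  have hlt : sInf (SSet J M1 M2 d a) < lambdaP J M1 M2 d a + ε₂ := by
    rw [lambdaP_eq]; linarith
  obtain ⟨lam, hlamS, hlamlt⟩ := exists_lt_of_csInf_lt hne hlt
  have hlamle : lambdaP J M1 M2 d a ≤ a x0 := lambdaP_le_max hJ hd hM hx0I hx0max
  have hlamub : lam ≤ amax + 1 := by
    have h1 := (habound x0 hx0h).2
    linarith
  have hlamlb : a x0 - d ≤ lam := SSet_lower hJ hd hM hx0I hlamS
  obtain ⟨φ, hA⟩ := exists_adm hJ (LipschitzWith.continuous ha) hM hlamS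
  have hφ0 : ∀ y, 0 ≤ φ y := fun y => (hA.pos y).le
  have hlamD : ∀ x ∈ Icc M1 M2, lam + d - a x ≤ D := by
    intro x hx
    have h1 := (habound x (hhull hx)).1
    rw [hDdef]; linarith
  have hnbig' : M2 - M1 ≤ n * (2*r) := by
    have : M2 - M1 ≤ L2 - L1 + 2 := by linarith
    linarith
  have hHar := harnack hJ hd hr0 hη0 hJr hD0 hM hA hlamD hℓ0 hMlen' hnbig' hn0
  rw [← hcdef] at hHar
  obtain ⟨T, hTdef⟩ : ∃ z, z = ∫ y in M1..M2, φ y := ⟨_, rfl⟩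
  have hT0 : 0 < T := by
    rw [hTdef]
    exact intervalIntegral.intervalIntegral_pos_of_pos_on
      (hA.cont.intervalIntegrable _ _) (fun x _ => hA.pos x) hM
  have hHarT : ∀ x ∈ Icc M1 M2, c * T ≤ φ x := by
    intro x hx; rw [hTdef]; exact hHar x hx
  obtain ⟨w, hwdef⟩ : ∃ z, z = Cw * T := ⟨_, rfl⟩
  have hw0 : 0 < w := by rw [hwdef]; exact mul_pos (by linarith) hT0
  have hφM2 : 0 < φ M2 := hA.pos M2
  have hφM1 : 0 < φ M1 := hA.pos M1
  obtain ⟨τR, hτRdef⟩ : ∃ z, z = δ * T / (T + w + φ M2) := ⟨_, rfl⟩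
  obtain ⟨τL, hτLdef⟩ : ∃ z, z = δ * T / (T + w + φ M1) := ⟨_, rfl⟩
  have hτR0 : 0 < τR := by rw [hτRdef]; positivity
  have hτL0 : 0 < τL := by rw [hτLdef]; positivity
  have hτRδ : τR ≤ δ := by
    rw [hτRdef, div_le_iff₀ (by positivity)]
    exact mul_le_mul_of_nonneg_left (by linarith) hδ.le
  have hτLδ : τL ≤ δ := by
    rw [hτLdef, div_le_iff₀ (by positivity)]
    exact mul_le_mul_of_nonneg_left (by linarith) hδ.le
  have hτRmass : τR * (φ M2 + w) ≤ δ * T := by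
    rw [hτRdef, div_mul_eq_mul_div, div_le_iff₀ (by positivity)]
    exact mul_le_mul_of_nonneg_left (by linarith) (by positivity)
  have hτLmass : τL * (φ M1 + w) ≤ δ * T := by
    rw [hτLdef, div_mul_eq_mul_div, div_le_iff₀ (by positivity)]
    exact mul_le_mul_of_nonneg_left (by linarith) (by positivity)
  -- the extended test function
  obtain ⟨ψ, hψdef⟩ : ∃ z : ℝ → ℝ, z = fun x => φ (clampI M1 M2 x)
      + (w - φ M2) * min 1 (max 0 ((x - M2)/τR))
      + (w - φ M1) * min 1 (max 0 ((M1 - x)/τL)) := ⟨_, rfl⟩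
  have hψcont : Continuous ψ := by
    rw [hψdef]
    refine ((hA.cont.comp (continuous_clampI M1 M2)).add ?_).add ?_
    · exact continuous_const.mul (continuous_const.min (continuous_const.max
        ((continuous_id.sub continuous_const).div_const τR)))
    · exact continuous_const.mul (continuous_const.min (continuous_const.max
        ((continuous_const.sub continuous_id).div_const τL)))
  have hramp0R : ∀ x : ℝ, x ≤ M2 → (w - φ M2) * min 1 (max 0 ((x - M2)/τR)) = 0 := by
    intro x hx
    have h1 : (x - M2)/τR ≤ 0 := div_nonpos_iff.mpr (Or.inr ⟨by linarith, hτR0.le⟩)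
    rw [max_eq_left h1, min_eq_right (by norm_num : (0:ℝ) ≤ 1), mul_zero]
  have hramp0L : ∀ x : ℝ, M1 ≤ x → (w - φ M1) * min 1 (max 0 ((M1 - x)/τL)) = 0 := by
    intro x hx
    have h1 : (M1 - x)/τL ≤ 0 := div_nonpos_iff.mpr (Or.inr ⟨by linarith, hτL0.le⟩)
    rw [max_eq_left h1, min_eq_right (by norm_num : (0:ℝ) ≤ 1), mul_zero]
  have hψmid : ∀ x ∈ Icc M1 M2, ψ x = φ x := by
    intro x hx
    rw [hψdef]
    simp only [clampI_eq_self hx, hramp0R x hx.2, hramp0L x hx.1]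
    ring
  have hψright : ∀ x : ℝ, M2 ≤ x →
      ψ x = φ M2 + (w - φ M2) * min 1 (max 0 ((x - M2)/τR)) := by
    intro x hx
    rw [hψdef]
    simp only [clampI_of_ge hM.le hx, hramp0L x (le_trans hM.le hx)]
    ring
  have hψleft : ∀ x : ℝ, x ≤ M1 →
      ψ x = φ M1 + (w - φ M1) * min 1 (max 0 ((M1 - x)/τL)) := by
    intro x hx
    rw [hψdef]
    simp only [clampI_of_le hM.le hx, hramp0R x (le_trans hx hM.le)]
    ring
  have hψrightlb : ∀ x : ℝ, M2 ≤ x → min (φ M2) w ≤ ψ x := by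
    intro x hx; rw [hψright x hx]; exact (interp_mem (clamp01_mem _)).1
  have hψrightub : ∀ x : ℝ, M2 ≤ x → ψ x ≤ max (φ M2) w := by
    intro x hx; rw [hψright x hx]; exact (interp_mem (clamp01_mem _)).2
  have hψleftlb : ∀ x : ℝ, x ≤ M1 → min (φ M1) w ≤ ψ x := by
    intro x hx; rw [hψleft x hx]; exact (interp_mem (clamp01_mem _)).1
  have hψleftub : ∀ x : ℝ, x ≤ M1 → ψ x ≤ max (φ M1) w := by
    intro x hx; rw [hψleft x hx]; exact (interp_mem (clamp01_mem _)).2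
  have hψrightflat : ∀ x : ℝ, M2 + τR ≤ x → ψ x = w := by
    intro x hx
    have h1 : (1:ℝ) ≤ (x - M2)/τR := by rw [le_div_iff₀ hτR0]; linarith
    rw [hψright x (by linarith), max_eq_right (le_trans zero_le_one h1), min_eq_left h1]
    ring
  have hψleftflat : ∀ x : ℝ, x ≤ M1 - τL → ψ x = w := by
    intro x hx
    have h1 : (1:ℝ) ≤ (M1 - x)/τL := by rw [le_div_iff₀ hτL0]; linarith
    rw [hψleft x (by linarith), max_eq_right (le_trans zero_le_one h1), min_eq_left h1]
    ring
  have hψpos : ∀ x, 0 < ψ x := by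
    intro x
    rcases le_total x M1 with h1 | h1
    · have h2 := hψleftlb x h1
      have h3 : 0 < min (φ M1) w := lt_min hφM1 hw0
      linarith
    rcases le_total M2 x with h2 | h2
    · have h3 := hψrightlb x h2
      have h4 : 0 < min (φ M2) w := lt_min hφM2 hw0
      linarith
    · rw [hψmid x ⟨h1, h2⟩]; exact hA.pos x
  have hψ0 : ∀ x, 0 ≤ ψ x := fun x => (hψpos x).le
  -- integrability of all integrands in sight
  have hIcont : ∀ x : ℝ, Continuous (fun y => J (x - y) * ψ y) := fun x =>
    (hJ.1.comp (continuous_const.sub continuous_id)).mul hψcont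
  have hIcontφ : ∀ x : ℝ, Continuous (fun y => J (x - y) * φ y) := fun x =>
    (hJ.1.comp (continuous_const.sub continuous_id)).mul hA.cont
  -- decomposition of the full integral
  have hsplitTot : ∀ x : ℝ, (∫ y in M1-δ..M2+δ, J (x - y) * ψ y)
      = (∫ y in M1-δ..M1, J (x - y) * ψ y) + (∫ y in M1..M2, J (x - y) * ψ y)
        + (∫ y in M2..M2+δ, J (x - y) * ψ y) := by
    intro x
    have h1 : (∫ y in M1-δ..M1, J (x - y) * ψ y) + (∫ y in M1..M2+δ, J (x - y) * ψ y)
        = ∫ y in M1-δ..M2+δ, J (x - y) * ψ y :=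
      intervalIntegral.integral_add_adjacent_intervals
        ((hIcont x).intervalIntegrable _ _) ((hIcont x).intervalIntegrable _ _)
    have h2 : (∫ y in M1..M2, J (x - y) * ψ y) + (∫ y in M2..M2+δ, J (x - y) * ψ y)
        = ∫ y in M1..M2+δ, J (x - y) * ψ y :=
      intervalIntegral.integral_add_adjacent_intervals
        ((hIcont x).intervalIntegrable _ _) ((hIcont x).intervalIntegrable _ _)
    linarith
  have hIMeq : ∀ x : ℝ, (∫ y in M1..M2, J (x - y) * ψ y)
      = ∫ y in M1..M2, J (x - y) * φ y := by
    intro x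
    apply intervalIntegral.integral_congr
    intro y hy
    rw [uIcc_of_le hM.le] at hy
    simp only [hψmid y hy]
  have hIMle : ∀ x : ℝ, (∫ y in M1..M2, J (x - y) * φ y) ≤ CJ * T := by
    intro x
    have h1 : (∫ y in M1..M2, J (x - y) * φ y) ≤ ∫ y in M1..M2, CJ * φ y := by
      apply intervalIntegral.integral_mono_on hM.le ((hIcontφ x).intervalIntegrable _ _)
        ((continuous_const.mul hA.cont).intervalIntegrable _ _)
      intro y _
      exact mul_le_mul_of_nonneg_right (hCJ _) (hφ0 y)
    rw [intervalIntegral.integral_const_mul] at h1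
    rw [hTdef]
    exact h1
  -- extension masses
  have hIR : ∀ x : ℝ, (∫ y in M2..M2+δ, J (x - y) * ψ y) ≤ CJ * ((1+Cw) * (δ * T)) := by
    intro x
    have hsp : (∫ y in M2..M2+τR, J (x - y) * ψ y) + (∫ y in M2+τR..M2+δ, J (x - y) * ψ y)
        = ∫ y in M2..M2+δ, J (x - y) * ψ y :=
      intervalIntegral.integral_add_adjacent_intervals
        ((hIcont x).intervalIntegrable _ _) ((hIcont x).intervalIntegrable _ _)
    have hb1 : (∫ y in M2..M2+τR, J (x - y) * ψ y) ≤ τR * (CJ * (φ M2 + w)) := by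
      have h1 : (∫ y in M2..M2+τR, J (x - y) * ψ y)
          ≤ ∫ _y in M2..M2+τR, CJ * (φ M2 + w) := by
        apply intervalIntegral.integral_mono_on (by linarith)
          ((hIcont x).intervalIntegrable _ _) (intervalIntegrable_const (μ := volume))
        intro y hy
        have h2 : ψ y ≤ max (φ M2) w := hψrightub y hy.1
        have h3 : max (φ M2) w ≤ φ M2 + w := max_le (by linarith) (by linarith)
        calc J (x - y) * ψ y ≤ CJ * ψ y := mul_le_mul_of_nonneg_right (hCJ _) (hψ0 y)
          _ ≤ CJ * (φ M2 + w) := mul_le_mul_of_nonneg_left (by linarith) hCJ0.le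
      rw [intervalIntegral.integral_const, smul_eq_mul] at h1
      calc (∫ y in M2..M2+τR, J (x - y) * ψ y) ≤ (M2 + τR - M2) * (CJ * (φ M2 + w)) := h1
        _ = τR * (CJ * (φ M2 + w)) := by ring
    have hb2 : (∫ y in M2+τR..M2+δ, J (x - y) * ψ y) ≤ (δ - τR) * (CJ * w) := by
      have h1 : (∫ y in M2+τR..M2+δ, J (x - y) * ψ y)
          ≤ ∫ _y in M2+τR..M2+δ, CJ * w := by
        apply intervalIntegral.integral_mono_on (by linarith)
          ((hIcont x).intervalIntegrable _ _) (intervalIntegrable_const (μ := volume))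
        intro y hy
        have h2 : ψ y = w := hψrightflat y hy.1
        calc J (x - y) * ψ y ≤ CJ * ψ y := mul_le_mul_of_nonneg_right (hCJ _) (hψ0 y)
          _ = CJ * w := by rw [h2]
      rw [intervalIntegral.integral_const, smul_eq_mul] at h1
      calc (∫ y in M2+τR..M2+δ, J (x - y) * ψ y) ≤ (M2 + δ - (M2 + τR)) * (CJ * w) := h1
        _ = (δ - τR) * (CJ * w) := by ring
    have hmass : τR * (CJ * (φ M2 + w)) + (δ - τR) * (CJ * w) ≤ CJ * ((1+Cw) * (δ * T)) := by
      have h1 : τR * (CJ * (φ M2 + w)) ≤ CJ * (δ * T) := by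
        have h0 := mul_le_mul_of_nonneg_left hτRmass hCJ0.le
        have e1 : τR * (CJ * (φ M2 + w)) = CJ * (τR * (φ M2 + w)) := by ring
        rw [e1]
        exact h0
      have h2 : (δ - τR) * (CJ * w) ≤ CJ * (Cw * (δ * T)) := by
        rw [hwdef]
        have e1 : (δ - τR) * (CJ * (Cw * T)) = (CJ * (Cw * T)) * (δ - τR) := by ring
        have e2 : CJ * (Cw * (δ * T)) = (CJ * (Cw * T)) * δ := by ring
        rw [e1, e2]
        exact mul_le_mul_of_nonneg_left (by linarith) (by positivity)
      have e3 : CJ * ((1+Cw) * (δ * T)) = CJ * (δ * T) + CJ * (Cw * (δ * T)) := by ring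
      linarith
    linarith
  have hIL : ∀ x : ℝ, (∫ y in M1-δ..M1, J (x - y) * ψ y) ≤ CJ * ((1+Cw) * (δ * T)) := by
    intro x
    have hsp : (∫ y in M1-δ..M1-τL, J (x - y) * ψ y) + (∫ y in M1-τL..M1, J (x - y) * ψ y)
        = ∫ y in M1-δ..M1, J (x - y) * ψ y :=
      intervalIntegral.integral_add_adjacent_intervals
        ((hIcont x).intervalIntegrable _ _) ((hIcont x).intervalIntegrable _ _)
    have hb1 : (∫ y in M1-τL..M1, J (x - y) * ψ y) ≤ τL * (CJ * (φ M1 + w)) := by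
      have h1 : (∫ y in M1-τL..M1, J (x - y) * ψ y)
          ≤ ∫ _y in M1-τL..M1, CJ * (φ M1 + w) := by
        apply intervalIntegral.integral_mono_on (by linarith)
          ((hIcont x).intervalIntegrable _ _) (intervalIntegrable_const (μ := volume))
        intro y hy
        have h2 : ψ y ≤ max (φ M1) w := hψleftub y hy.2
        have h3 : max (φ M1) w ≤ φ M1 + w := max_le (by linarith) (by linarith)
        calc J (x - y) * ψ y ≤ CJ * ψ y := mul_le_mul_of_nonneg_right (hCJ _) (hψ0 y)
          _ ≤ CJ * (φ M1 + w) := mul_le_mul_of_nonneg_left (by linarith) hCJ0.le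
      rw [intervalIntegral.integral_const, smul_eq_mul] at h1
      calc (∫ y in M1-τL..M1, J (x - y) * ψ y) ≤ (M1 - (M1 - τL)) * (CJ * (φ M1 + w)) := h1
        _ = τL * (CJ * (φ M1 + w)) := by ring
    have hb2 : (∫ y in M1-δ..M1-τL, J (x - y) * ψ y) ≤ (δ - τL) * (CJ * w) := by
      have h1 : (∫ y in M1-δ..M1-τL, J (x - y) * ψ y)
          ≤ ∫ _y in M1-δ..M1-τL, CJ * w := by
        apply intervalIntegral.integral_mono_on (by linarith)
          ((hIcont x).intervalIntegrable _ _) (intervalIntegrable_const (μ := volume))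
        intro y hy
        have h2 : ψ y = w := hψleftflat y hy.2
        calc J (x - y) * ψ y ≤ CJ * ψ y := mul_le_mul_of_nonneg_right (hCJ _) (hψ0 y)
          _ = CJ * w := by rw [h2]
      rw [intervalIntegral.integral_const, smul_eq_mul] at h1
      calc (∫ y in M1-δ..M1-τL, J (x - y) * ψ y) ≤ (M1 - τL - (M1 - δ)) * (CJ * w) := h1
        _ = (δ - τL) * (CJ * w) := by ring
    have hmass : τL * (CJ * (φ M1 + w)) + (δ - τL) * (CJ * w) ≤ CJ * ((1+Cw) * (δ * T)) := by
      have h1 : τL * (CJ * (φ M1 + w)) ≤ CJ * (δ * T) := by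
        have h0 := mul_le_mul_of_nonneg_left hτLmass hCJ0.le
        have e1 : τL * (CJ * (φ M1 + w)) = CJ * (τL * (φ M1 + w)) := by ring
        rw [e1]
        exact h0
      have h2 : (δ - τL) * (CJ * w) ≤ CJ * (Cw * (δ * T)) := by
        rw [hwdef]
        have e1 : (δ - τL) * (CJ * (Cw * T)) = (CJ * (Cw * T)) * (δ - τL) := by ring
        have e2 : CJ * (Cw * (δ * T)) = (CJ * (Cw * T)) * δ := by ring
        rw [e1, e2]
        exact mul_le_mul_of_nonneg_left (by linarith) (by positivity)
      have e3 : CJ * ((1+Cw) * (δ * T)) = CJ * (δ * T) + CJ * (Cw * (δ * T)) := by ring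
      linarith
    linarith
  -- bound for `a` on the extended interval
  have haExt : ∀ x ∈ Icc (M1-δ) (M2+δ), a x ≤ a x0 + Kr * δ := by
    intro x hx
    have h3 : |x - clampI M1 M2 x| ≤ δ := by
      rcases le_total x M1 with h | h
      · rw [clampI_of_le hM.le h, abs_le]
        constructor <;> [linarith [hx.1]; linarith]
      rcases le_total M2 x with h' | h'
      · rw [clampI_of_ge hM.le h', abs_le]
        constructor <;> [linarith; linarith [hx.2]]
      · rw [clampI_eq_self ⟨h, h'⟩, sub_self, abs_zero]; linarith
    have h2 := (abs_le.mp (hK x (clampI M1 M2 x))).2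
    have h4 : Kr * |x - clampI M1 M2 x| ≤ Kr * δ := mul_le_mul_of_nonneg_left h3 hKr0
    have h5 := hx0max _ (clampI_mem hM.le x)
    linarith
  -- route II: crude bound on the plateau
  have routeII : ∀ x ∈ Icc (M1-δ) (M2+δ), w ≤ ψ x →
      d * (∫ y in M1-δ..M2+δ, J (x - y) * ψ y) ≤ (lam + ε₂ + d - a x) * ψ x := by
    intro x hx hwx
    have hcoef : ε₂/2 ≤ lam + ε₂ + d - a x := by
      have h1 := haExt x hx
      linarith
    have htot : (∫ y in M1-δ..M2+δ, J (x - y) * ψ y) ≤ 2 * (CJ * T) := by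
      rw [hsplitTot x, hIMeq x]
      have h1 := hIL x
      have h2 := hIR x
      have h3 := hIMle x
      have h4 : 2 * (CJ * ((1+Cw) * (δ * T))) ≤ CJ * T := by
        have h5 : ((1+Cw) * δ) * T ≤ (1/2) * T := mul_le_mul_of_nonneg_right hδCw' hT0.le
        have e1 : 2 * (CJ * ((1+Cw) * (δ * T))) = 2 * CJ * (((1+Cw) * δ) * T) := by ring
        have h6 : 2 * CJ * (((1+Cw) * δ) * T) ≤ 2 * CJ * ((1/2) * T) :=
          mul_le_mul_of_nonneg_left h5 (by positivity)
        have e2 : 2 * CJ * ((1/2) * T) = CJ * T := by ring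
        linarith
      linarith
    have hfin : d * (2 * (CJ * T)) ≤ (ε₂/2) * w := by
      rw [hwdef]
      rw [div_le_iff₀ hε₂] at hCw4
      have h1 : (4*d*CJ) * T ≤ (Cw * ε₂) * T := mul_le_mul_of_nonneg_right hCw4 hT0.le
      have e1 : d * (2 * (CJ * T)) = ((4*d*CJ) * T) / 2 := by ring
      have e2 : (ε₂/2) * (Cw * T) = ((Cw * ε₂) * T) / 2 := by ring
      rw [e1, e2]
      linarith
    calc d * (∫ y in M1-δ..M2+δ, J (x - y) * ψ y) ≤ d * (2 * (CJ * T)) := by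
          exact mul_le_mul_of_nonneg_left htot hd.le
      _ ≤ (ε₂/2) * w := hfin
      _ ≤ (ε₂/2) * ψ x := mul_le_mul_of_nonneg_left hwx (by linarith)
      _ ≤ (lam + ε₂ + d - a x) * ψ x := mul_le_mul_of_nonneg_right hcoef (hψ0 x)
  -- route III: comparison with the boundary point
  have routeIII : ∀ b ∈ Icc M1 M2, ∀ x ∈ Icc (M1-δ) (M2+δ), |x - b| ≤ δ → φ b ≤ ψ x →
      d * (∫ y in M1-δ..M2+δ, J (x - y) * ψ y) ≤ (lam + ε₂ + d - a x) * ψ x := by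
    intro b hb x hx hxb hφb
    have hRR : L2 - L1 + 4 = R := by rw [hRdef]
    -- modulus estimate
    have hmod : (∫ y in M1..M2, J (x - y) * φ y)
        ≤ (∫ y in M1..M2, J (b - y) * φ y) + (c * ε₂/(8*d)) * T := by
      have hdiff : |∫ y in M1..M2, (J (x - y) - J (b - y)) * φ y| ≤ (c * ε₂/(8*d)) * T := by
        have hptw : ∀ y ∈ Set.uIoc M1 M2,
            ‖(J (x - y) - J (b - y)) * φ y‖ ≤ (c * ε₂/(8*d)) * φ y := by
          intro y hy
          rw [Set.uIoc_of_le hM.le] at hy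
          have hy' : y ∈ Icc M1 M2 := Ioc_subset_Icc_self hy
          have hx1 : x - y ∈ Icc (-R) R := by
            rw [← hRR]
            constructor
            · have := hy'.2; have := hx.1; simp only [neg_le]; linarith
            · have := hy'.1; have := hx.2; linarith
          have hb1 : b - y ∈ Icc (-R) R := by
            rw [← hRR]
            constructor
            · have := hy'.2; have := hb.1; simp only [neg_le]; linarith
            · have := hy'.1; have := hb.2; linarith
          have hdist : dist (x - y) (b - y) < δω := by
            rw [Real.dist_eq]
            have he : x - y - (b - y) = x - b := by ring
            rw [he]
            calc |x - b| ≤ δ := hxb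
              _ ≤ δω/2 := hδω2
              _ < δω := by linarith
          have hδω' := hδωp _ hx1 _ hb1 hdist
          rw [Real.dist_eq] at hδω'
          rw [norm_mul, Real.norm_eq_abs, Real.norm_eq_abs, abs_of_nonneg (hφ0 y)]
          exact mul_le_mul_of_nonneg_right hδω'.le (hφ0 y)
        have h2 := intervalIntegral.norm_integral_le_abs_of_norm_le (μ := volume)
          (ae_restrict_of_forall_mem measurableSet_uIoc hptw)
          ((continuous_const.mul hA.cont).intervalIntegrable _ _)
        rw [Real.norm_eq_abs] at h2
        have h3 : (∫ y in M1..M2, (c * ε₂/(8*d)) * φ y) = (c * ε₂/(8*d)) * T := by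
          rw [intervalIntegral.integral_const_mul, hTdef]
        rw [h3] at h2
        have h4 : (0:ℝ) ≤ (c * ε₂/(8*d)) * T := by positivity
        rwa [abs_of_nonneg h4] at h2
      have hsub : (∫ y in M1..M2, (J (x - y) - J (b - y)) * φ y)
          = (∫ y in M1..M2, J (x - y) * φ y) - (∫ y in M1..M2, J (b - y) * φ y) := by
        rw [← intervalIntegral.integral_sub ((hIcontφ x).intervalIntegrable _ _)
          ((hIcontφ b).intervalIntegrable _ _)]
        congr 1
        ext y
        ring
      rw [hsub] at hdiff
      have := (abs_le.mp hdiff).2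
      linarith
    -- base inequality at b
    have hbase : d * (∫ y in M1..M2, J (b - y) * φ y) ≤ (lam + d - a b) * φ b := by
      have h1 := hA.ineq b hb
      have h2 : (lam + d - a b) * φ b = lam * φ b + d * φ b - a b * φ b := by ring
      linarith
    -- coefficient comparison
    have hab : |a x - a b| ≤ Kr * δ := le_trans (hK x b) (mul_le_mul_of_nonneg_left hxb hKr0)
    have hcoefx : -(Kr*δ) ≤ lam + d - a x := by
      have := haExt x hx
      linarith
    have hkey : (lam + d - a b) * φ b ≤ (lam + d - a x) * ψ x + (Kr * δ) * ψ x := by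
      have h1 : lam + d - a b ≤ (lam + d - a x) + Kr*δ := by
        have := (abs_le.mp hab).2
        linarith
      have h2 : 0 ≤ (lam + d - a x) + Kr*δ := by linarith
      calc (lam + d - a b) * φ b ≤ ((lam + d - a x) + Kr*δ) * φ b :=
            mul_le_mul_of_nonneg_right h1 (hφ0 b)
        _ ≤ ((lam + d - a x) + Kr*δ) * ψ x := mul_le_mul_of_nonneg_left hφb h2
        _ = (lam + d - a x) * ψ x + (Kr * δ) * ψ x := by ring
    -- Harnack control of the error terms
    have hTx : c * T ≤ ψ x := le_trans (hHarT b hb) hφb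
    have herr1 : d * ((c * ε₂/(8*d)) * T) ≤ (ε₂/8) * ψ x := by
      have h1 : d * ((c * ε₂/(8*d)) * T) = (ε₂/8) * (c * T) := by field_simp
      rw [h1]
      exact mul_le_mul_of_nonneg_left hTx (by linarith)
    have herr2 : d * (2 * (CJ * ((1+Cw) * (δ * T)))) ≤ (ε₂/2) * ψ x := by
      have h1 : d * (2 * (CJ * ((1+Cw) * (δ * T)))) = (2*d*CJ*(1+Cw)*δ) * T := by ring
      rw [h1]
      calc (2*d*CJ*(1+Cw)*δ) * T ≤ (c * ε₂ / 2) * T :=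
            mul_le_mul_of_nonneg_right hδc' hT0.le
        _ = (ε₂/2) * (c * T) := by ring
        _ ≤ (ε₂/2) * ψ x := mul_le_mul_of_nonneg_left hTx (by linarith)
    -- assemble
    have hKψ : (Kr * δ) * ψ x ≤ (ε₂/8) * ψ x := mul_le_mul_of_nonneg_right hKδ (hψ0 x)
    have hfin : d * (∫ y in M1-δ..M2+δ, J (x - y) * ψ y)
        ≤ (lam + d - a x) * ψ x + (Kr * δ) * ψ x + (ε₂/8) * ψ x + (ε₂/2) * ψ x := by
      rw [hsplitTot x, hIMeq x]
      have h1 := hIL x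
      have h2 := hIR x
      have h5 : d * (∫ y in M1..M2, J (x - y) * φ y)
          ≤ (lam + d - a b) * φ b + d * ((c * ε₂/(8*d)) * T) := by
        have h6 := mul_le_mul_of_nonneg_left hmod hd.le
        rw [mul_add] at h6
        linarith
      have h7 : d * ((∫ y in M1-δ..M1, J (x - y) * ψ y)
          + (∫ y in M2..M2+δ, J (x - y) * ψ y)) ≤ d * (2 * (CJ * ((1+Cw) * (δ * T)))) := by
        apply mul_le_mul_of_nonneg_left _ hd.le
        linarith
      have h8 := le_trans h7 herr2
      have hdist : d * ((∫ y in M1-δ..M1, J (x - y) * ψ y)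
            + (∫ y in M1..M2, J (x - y) * φ y) + (∫ y in M2..M2+δ, J (x - y) * ψ y))
          = d * ((∫ y in M1-δ..M1, J (x - y) * ψ y) + (∫ y in M2..M2+δ, J (x - y) * ψ y))
            + d * (∫ y in M1..M2, J (x - y) * φ y) := by ring
      linarith [h5, h8, hkey, herr1]
    have hKψ2 : (Kr * δ) * ψ x ≤ (ε₂/8) * ψ x := hKψ
    have hexp : (lam + ε₂ + d - a x) * ψ x
        = (lam + d - a x) * ψ x + ε₂ * ψ x := by ring
    have hψx0 := hψ0 x
    have hfrac : (ε₂/8) * ψ x + (ε₂/8) * ψ x + (ε₂/2) * ψ x ≤ ε₂ * ψ x := by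
      have : 0 ≤ ε₂ * ψ x := mul_nonneg hε₂.le hψx0
      linarith
    linarith [hfin, hKψ2, hexp, hfrac]
  -- route I: interior points
  have routeI : ∀ x ∈ Icc M1 M2,
      d * (∫ y in M1-δ..M2+δ, J (x - y) * ψ y) ≤ (lam + ε₂ + d - a x) * ψ x := by
    intro x hx
    have hbase : d * (∫ y in M1..M2, J (x - y) * φ y) ≤ (lam + d - a x) * φ x := by
      have h1 := hA.ineq x hx
      have h2 : (lam + d - a x) * φ x = lam * φ x + d * φ x - a x * φ x := by ring
      linarith
    have hTx : c * T ≤ φ x := hHarT x hx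
    have herr2 : d * (2 * (CJ * ((1+Cw) * (δ * T)))) ≤ (ε₂/2) * φ x := by
      have h1 : d * (2 * (CJ * ((1+Cw) * (δ * T)))) = (2*d*CJ*(1+Cw)*δ) * T := by ring
      rw [h1]
      calc (2*d*CJ*(1+Cw)*δ) * T ≤ (c * ε₂ / 2) * T :=
            mul_le_mul_of_nonneg_right hδc' hT0.le
        _ = (ε₂/2) * (c * T) := by ring
        _ ≤ (ε₂/2) * φ x := mul_le_mul_of_nonneg_left hTx (by linarith)
    have hψx : ψ x = φ x := hψmid x hx
    rw [hψx]
    rw [hsplitTot x, hIMeq x]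
    have h1 := hIL x
    have h2 := hIR x
    have h3 : (lam + ε₂ + d - a x) * φ x = (lam + d - a x) * φ x + ε₂ * φ x := by ring
    rw [h3]
    have h4 : ε₂/2 * φ x ≤ ε₂ * φ x := by
      have h0 : 0 ≤ ε₂ * φ x := mul_nonneg hε₂.le (hφ0 x)
      linarith
    have hdist : d * ((∫ y in M1-δ..M1, J (x - y) * ψ y)
          + (∫ y in M1..M2, J (x - y) * φ y) + (∫ y in M2..M2+δ, J (x - y) * ψ y))
        = d * ((∫ y in M1-δ..M1, J (x - y) * ψ y) + (∫ y in M2..M2+δ, J (x - y) * ψ y))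
          + d * (∫ y in M1..M2, J (x - y) * φ y) := by ring
    have h9 : d * ((∫ y in M1-δ..M1, J (x - y) * ψ y) + (∫ y in M2..M2+δ, J (x - y) * ψ y))
        ≤ d * (2 * (CJ * ((1+Cw) * (δ * T)))) :=
      mul_le_mul_of_nonneg_left (by linarith) hd.le
    linarith [hbase, herr2, hdist, h9]
  -- membership of `lam + ε₂` for the enlarged interval
  have hmem : lam + ε₂ ∈ SSet J (M1-δ) (M2+δ) d a := by
    apply mem_SSet ψ hψcont.continuousOn (fun x _ => hψpos x)
    intro x hx
    have hxI : x ∈ Icc (M1-δ) (M2+δ) := Ioo_subset_Icc_self hx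
    have hkey : d * (∫ y in M1-δ..M2+δ, J (x - y) * ψ y) ≤ (lam + ε₂ + d - a x) * ψ x := by
      rcases le_or_gt x M1 with h1 | h1
      · rcases le_total w (φ M1) with hc1 | hc1
        · apply routeII x hxI
          have h2 := hψleftlb x h1
          rw [min_eq_right hc1] at h2
          exact h2
        · apply routeIII M1 (left_mem_Icc.mpr hM.le) x hxI
          · rw [abs_le]; constructor <;> [linarith [hxI.1]; linarith]
          · have h2 := hψleftlb x h1
            rw [min_eq_left hc1] at h2
            exact h2
      rcases le_or_gt M2 x with h2 | h2
      · rcases le_total w (φ M2) with hc1 | hc1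
        · apply routeII x hxI
          have h3 := hψrightlb x h2
          rw [min_eq_right hc1] at h3
          exact h3
        · apply routeIII M2 (right_mem_Icc.mpr hM.le) x hxI
          · rw [abs_le]; constructor <;> [linarith; linarith [hxI.2]]
          · have h3 := hψrightlb x h2
            rw [min_eq_left hc1] at h3
            exact h3
      · exact routeI x ⟨h1.le, h2.le⟩
    have h5 : (lam + ε₂ + d - a x) * ψ x
        = (lam + ε₂) * ψ x + d * ψ x - a x * ψ x := by ring
    linarith [hkey, h5]
  -- conclusion
  have hM' : M1 - δ < M2 + δ := by linarith
  have hx0I' : x0 ∈ Ioo (M1-δ) (M2+δ) := by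
    constructor
    · have := hx0I.1; linarith
    · have := hx0I.2; linarith
  have hbdd : BddBelow (SSet J (M1-δ) (M2+δ) d a) := SSet_bddBelow hJ hd hM' hx0I'
  calc lambdaP J (M1-δ) (M2+δ) d a ≤ lam + ε₂ := by
        rw [lambdaP_eq]; exact csInf_le hbdd hmem
    _ ≤ lambdaP J M1 M2 d a + ε := by
        rw [hε₂def] at *
        linarith

lemma SSet_nonempty (hJ : KernelJ J) (hd : 0 < d)
    (haH : ∀ L1 L2 : ℝ, L1 < L2 → ∃ x0 ∈ Ioo L1 L2, ∀ x ∈ Icc L1 L2, a x ≤ a x0)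
    {M1 M2 : ℝ} (h : M1 < M2) : (SSet J M1 M2 d a).Nonempty := by
  obtain ⟨x0, hx0I, hx0max⟩ := haH M1 M2 h
  exact ⟨a x0, max_mem_SSet hJ hd h hx0I hx0max⟩

theorem main (J : ℝ → ℝ) (d : ℝ) (a : ℝ → ℝ)
    (hJ : KernelJ J) (hd : 0 < d)
    (haL : ∃ K, LipschitzWith K a)
    (haH : ∀ L1 L2 : ℝ, L1 < L2 → ∃ x0 ∈ Ioo L1 L2, ∀ x ∈ Icc L1 L2, a x ≤ a x0) :
    ContinuousOn (fun p : ℝ × ℝ => lambdaP J p.1 p.2 d a) {p : ℝ × ℝ | p.1 < p.2} := by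
  obtain ⟨K, ha⟩ := haL
  rw [Metric.continuousOn_iff]
  rintro ⟨L1, L2⟩ hp ε hε
  simp only [Set.mem_setOf_eq] at hp
  obtain ⟨δE, hδE0, hE⟩ := expansion hJ hd ha haH L1 L2 hp (half_pos hε)
  obtain ⟨ρ, hρdef⟩ : ∃ z, z = min (min δE 1) ((L2 - L1)/4) / 2 := ⟨_, rfl⟩
  have hρ0 : 0 < ρ := by
    rw [hρdef]
    have h1 : (0:ℝ) < min (min δE 1) ((L2 - L1)/4) :=
      lt_min (lt_min hδE0 one_pos) (by linarith)
    linarith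
  have hρE : ρ ≤ δE := by
    rw [hρdef]
    have h1 : min (min δE 1) ((L2 - L1)/4) ≤ δE := (min_le_left _ _).trans (min_le_left _ _)
    linarith [lt_min (lt_min hδE0 one_pos) (by linarith : (0:ℝ) < (L2 - L1)/4)]
  have hρL : ρ ≤ (L2 - L1)/4 := by
    rw [hρdef]
    have h1 : min (min δE 1) ((L2 - L1)/4) ≤ (L2 - L1)/4 := min_le_right _ _
    linarith [lt_min (lt_min hδE0 one_pos) (by linarith : (0:ℝ) < (L2 - L1)/4)]
  refine ⟨ρ, hρ0, ?_⟩
  rintro ⟨M1', M2'⟩ hq hdist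
  simp only [Set.mem_setOf_eq] at hq
  rw [Prod.dist_eq] at hdist
  simp only [Real.dist_eq] at hdist
  have hd1 : |M1' - L1| < ρ := lt_of_le_of_lt (le_max_left _ _) hdist
  have hd2 : |M2' - L2| < ρ := lt_of_le_of_lt (le_max_right _ _) hdist
  have hd1' := abs_lt.mp hd1
  have hd2' := abs_lt.mp hd2
  -- upper bound
  have hup : lambdaP J M1' M2' d a ≤ lambdaP J L1 L2 d a + ε/2 := by
    have h1 : lambdaP J M1' M2' d a ≤ lambdaP J (L1 - ρ) (L2 + ρ) d a := by
      apply lambdaP_mono hJ hd (by linarith [hd1'.1] : L1 - ρ ≤ M1') hq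
        (by linarith [hd2'.2] : M2' ≤ L2 + ρ)
      exact SSet_nonempty hJ hd haH (by linarith)
    have h2 : lambdaP J (L1 - ρ) (L2 + ρ) d a ≤ lambdaP J L1 L2 d a + ε/2 :=
      hE L1 L2 (by linarith) (by linarith) (by linarith) ρ hρ0 hρE
    linarith
  -- lower bound
  have hlo : lambdaP J L1 L2 d a - ε/2 ≤ lambdaP J M1' M2' d a := by
    have h1 : lambdaP J (L1 + ρ) (L2 - ρ) d a ≤ lambdaP J M1' M2' d a := by
      apply lambdaP_mono hJ hd (by linarith [hd1'.2] : M1' ≤ L1 + ρ)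
        (by linarith : L1 + ρ < L2 - ρ) (by linarith [hd2'.1] : L2 - ρ ≤ M2')
      exact SSet_nonempty hJ hd haH hq
    have h2 : lambdaP J L1 L2 d a ≤ lambdaP J (L1 + ρ) (L2 - ρ) d a + ε/2 := by
      have h3 := hE (L1 + ρ) (L2 - ρ) (by linarith) (by linarith) (by linarith) ρ hρ0 hρE
      have e1 : L1 + ρ - ρ = L1 := by ring
      have e2 : L2 - ρ + ρ = L2 := by ring
      rw [e1, e2] at h3
      exact h3
    linarith
  rw [Real.dist_eq, abs_lt]
  constructor <;> [linarith; linarith]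

end NLP

/-- Theorem 3.3 (i): for fixed `d > 0`, the map `(L1, L2) ↦ λ_p((L1,L2), d, a)` is
continuous on `{(L1, L2) : L1 < L2}`. -/
theorem lambdaP_continuous_in_interval
    (J : ℝ → ℝ) (d : ℝ) (a : ℝ → ℝ)
    (hJ : KernelJ J) (hd : 0 < d)
    (haL : ∃ K, LipschitzWith K a)
    (haH : ∀ L1 L2 : ℝ, L1 < L2 → ∃ x0 ∈ Ioo L1 L2, ∀ x ∈ Icc L1 L2, a x ≤ a x0) :
    ContinuousOn (fun p : ℝ × ℝ => lambdaP J p.1 p.2 d a) {p : ℝ × ℝ | p.1 < p.2} :=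
  NLP.main J d a hJ hd haL haH
end
end

section
/- Let a : ℝ → ℝ be Lipschitz continuous and suppose that for every pair L1 < L2 the restriction of a to [L1,L2] attains its maximum at an interior point of (L1,L2). Then λ_p((L1,L2), d, a) → a(0) − d as the interval shrinks to the origin: for every ε > 0 there exists δ > 0 such that for all L1 < L2 with |L1| < δ and |L2| < δ, one has |λ_p((L1,L2), d, a) − (a(0) − d)| < ε. -/
open MeasureTheory Set Filter Topology

noncomputable section

/-- Theorem 3.3 (ii): `λ_p((L1,L2), d, a) → a(0) - d` as the interval shrinks to the
origin. -/
theorem lambdaP_limit_small_interval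
    (J : ℝ → ℝ) (d : ℝ) (a : ℝ → ℝ)
    (hJ : KernelJ J) (hd : 0 < d)
    (haL : ∃ K, LipschitzWith K a)
    (haH : ∀ L1 L2 : ℝ, L1 < L2 → ∃ x0 ∈ Ioo L1 L2, ∀ x ∈ Icc L1 L2, a x ≤ a x0) :
    ∀ ε > (0:ℝ), ∃ δ > (0:ℝ), ∀ L1 L2 : ℝ, L1 < L2 → |L1| < δ → |L2| < δ →
      |lambdaP J L1 L2 d a - (a 0 - d)| < ε := by
  obtain ⟨hJc, hJ0, ⟨C, hC⟩, hJsym, hJpos, hJint⟩ := hJ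
  obtain ⟨K, hK⟩ := haL
  intro ε hε
  set C' : ℝ := max C 1 with hC'
  have hC'pos : 0 < C' := lt_of_lt_of_le one_pos (le_max_right _ _)
  have hCle : ∀ x, J x ≤ C' := fun x => (hC x).trans (le_max_left _ _)
  have hKnn : (0:ℝ) ≤ (K:ℝ) := K.coe_nonneg
  have hden : 0 < 2*((K:ℝ)+1) + 2*C'*d := by positivity
  set δ : ℝ := ε / (2*((K:ℝ)+1) + 2*C'*d) with hδdef
  have hδpos : 0 < δ := div_pos hε hden
  have hδε : δ * (2*((K:ℝ)+1) + 2*C'*d) = ε := div_mul_cancel₀ _ (ne_of_gt hden)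
  refine ⟨δ, hδpos, ?_⟩
  intro L1 L2 hL hL1 hL2
  have hL12 : L1 ≤ L2 := hL.le
  rw [abs_lt] at hL1 hL2
  have habs : ∀ x ∈ Icc L1 L2, |x| < δ := by
    intro x hx
    rw [abs_lt]
    exact ⟨lt_of_lt_of_le hL1.1 hx.1, lt_of_le_of_lt hx.2 hL2.2⟩
  obtain ⟨x0, hx0, hx0max⟩ := haH L1 L2 hL
  set m : ℝ := (L1+L2)/2 with hm
  have hmIoo : m ∈ Ioo L1 L2 := ⟨by simp only [hm]; linarith, by simp only [hm]; linarith⟩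
  have hmIcc : m ∈ Icc L1 L2 := ⟨hmIoo.1.le, hmIoo.2.le⟩
  set S : Set ℝ := {lam : ℝ | ∃ φ : ℝ → ℝ, ContinuousOn φ (Icc L1 L2) ∧
    (∀ x ∈ Icc L1 L2, 0 < φ x) ∧
    ∀ x ∈ Ioo L1 L2,
      d * (∫ y in L1..L2, J (x - y) * φ y) - d * φ x + a x * φ x ≤ lam * φ x} with hS
  have hlam : lambdaP J L1 L2 d a = sInf S := rfl
  -- membership of the upper-bound candidate
  set lam₀ : ℝ := a x0 - d + 2*δ*C'*d with hlam₀
  have hmem : lam₀ ∈ S := by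
    refine ⟨fun _ => 1, continuousOn_const, fun x _ => one_pos, ?_⟩
    intro x hx
    have hint1 : IntervalIntegrable (fun y => J (x - y) * 1) volume L1 L2 := by
      exact ((hJc.comp (continuous_const.sub continuous_id)).mul continuous_const).intervalIntegrable _ _
    have hint2 : IntervalIntegrable (fun _ : ℝ => C') volume L1 L2 :=
      intervalIntegrable_const
    have hmono : (∫ y in L1..L2, J (x - y) * 1) ≤ ∫ _ in L1..L2, C' := by
      apply intervalIntegral.integral_mono_on hL12 hint1 hint2
      intro y _
      simpa using hCle (x - y)
    have hconst : (∫ _ in L1..L2, C') = (L2 - L1) * C' := by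
      rw [intervalIntegral.integral_const]; simp [smul_eq_mul]
    have hlen : L2 - L1 ≤ 2*δ := by linarith
    have hI : (∫ y in L1..L2, J (x - y) * 1) ≤ 2*δ*C' := by
      rw [hconst] at hmono
      calc (∫ y in L1..L2, J (x - y) * 1) ≤ (L2 - L1) * C' := hmono
        _ ≤ 2*δ*C' := by nlinarith
    have hax : a x ≤ a x0 := hx0max x ⟨hx.1.le, hx.2.le⟩
    have hdI : d * (∫ y in L1..L2, J (x - y) * 1) ≤ d * (2*δ*C') :=
      mul_le_mul_of_nonneg_left hI hd.le
    simp only [mul_one] at hdI ⊢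
    linarith [hlam₀]
  have hne : S.Nonempty := ⟨lam₀, hmem⟩
  -- lower bound for every element of S
  have hlb : ∀ lam ∈ S, a m - d ≤ lam := by
    rintro lam ⟨φ, hφc, hφpos, hineq⟩
    have h := hineq m hmIoo
    have hInn : 0 ≤ ∫ y in L1..L2, J (m - y) * φ y := by
      apply intervalIntegral.integral_nonneg hL12
      intro y hy
      exact mul_nonneg (hJ0 _) (hφpos y hy).le
    have hφm : 0 < φ m := hφpos m hmIcc
    have h2 : (a m - d) * φ m ≤ lam * φ m := by nlinarith
    exact le_of_mul_le_mul_right h2 hφm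
  have hbdd : BddBelow S := ⟨a m - d, hlb⟩
  have h1 : a m - d ≤ sInf S := le_csInf hne hlb
  have h2 : sInf S ≤ lam₀ := csInf_le hbdd hmem
  -- Lipschitz estimates
  have hLm : |a m - a 0| ≤ (K:ℝ) * |m| := by
    have := hK.dist_le_mul m 0
    simpa [Real.dist_eq] using this
  have hLx0 : |a x0 - a 0| ≤ (K:ℝ) * |x0| := by
    have := hK.dist_le_mul x0 0
    simpa [Real.dist_eq] using this
  have hmδ : |m| < δ := habs m hmIcc
  have hx0δ : |x0| < δ := habs x0 ⟨hx0.1.le, hx0.2.le⟩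
  have hLm' : a 0 - a m ≤ (K:ℝ) * δ := by
    have h3 : a 0 - a m ≤ |a m - a 0| := by
      rw [abs_sub_comm]; exact le_abs_self _
    calc a 0 - a m ≤ (K:ℝ) * |m| := h3.trans hLm
      _ ≤ (K:ℝ) * δ := mul_le_mul_of_nonneg_left hmδ.le hKnn
  have hLx0' : a x0 - a 0 ≤ (K:ℝ) * δ := by
    calc a x0 - a 0 ≤ |a x0 - a 0| := le_abs_self _
      _ ≤ (K:ℝ) * |x0| := hLx0
      _ ≤ (K:ℝ) * δ := mul_le_mul_of_nonneg_left hx0δ.le hKnn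
  rw [hlam, abs_lt]
  have hprod1 : 0 ≤ δ * (K:ℝ) := mul_le_mul_of_nonneg_left hKnn hδpos.le |>.trans_eq' (by ring)
  have hprod2 : 0 < C' * d * δ := by positivity
  constructor
  · nlinarith [mul_nonneg hδpos.le hKnn, mul_pos (mul_pos hC'pos hd) hδpos]
  · nlinarith [mul_nonneg hδpos.le hKnn, mul_pos (mul_pos hC'pos hd) hδpos]
end
end

section
/- Fix reals L1 < L2 and let a : ℝ → ℝ be Lipschitz continuous and attain its maximum over [L1,L2] at an interior point of (L1,L2). Then λ_p((L1,L2), d, a) is strictly decreasing in the diffusion rate d: if 0 < d2 < d1, then λ_p((L1,L2), d1, a) < λ_p((L1,L2), d2, a). -/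
set_option maxHeartbeats 1000000

open MeasureTheory Set Filter Topology

noncomputable section

namespace ThmAux

/-- kernel operator -/
def Kop (J : ℝ → ℝ) (L1 L2 : ℝ) (f : ℝ → ℝ) : ℝ → ℝ :=
  fun x => ∫ y in Icc L1 L2, J (x - y) * f y

/-- quadratic form -/
def Qf (J : ℝ → ℝ) (L1 L2 : ℝ) (f g : ℝ → ℝ) : ℝ :=
  ∫ x in Icc L1 L2, f x * Kop J L1 L2 g x

section basic

variable {J : ℝ → ℝ} {L1 L2 : ℝ}

lemma J_integrable (hJ : KernelJ J) : Integrable J := by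
  by_contra hc
  have h1 := hJ.2.2.2.2.2
  rw [integral_undef hc] at h1; norm_num at h1

lemma J_symm (hJ : KernelJ J) (x y : ℝ) : J (x - y) = J (y - x) := by
  have := hJ.2.2.2.1 (y - x); rw [neg_sub] at this; exact this

lemma ii_eq (hL : L1 < L2) (F : ℝ → ℝ) :
    (∫ y in L1..L2, F y) = ∫ y in Icc L1 L2, F y := by
  rw [intervalIntegral.integral_of_le hL.le, ← integral_Icc_eq_integral_Ioc]

lemma J_shift_integral (hJ : KernelJ J) (x : ℝ) : (∫ y : ℝ, J (x - y)) = 1 := by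
  rw [MeasureTheory.integral_sub_left_eq_self J volume x]
  exact hJ.2.2.2.2.2

lemma Kop_one_le_one (hJ : KernelJ J) (x : ℝ) :
    (∫ y in Icc L1 L2, J (x - y)) ≤ 1 := by
  rw [← J_shift_integral hJ x]
  exact setIntegral_le_integral ((J_integrable hJ).comp_sub_left x)
    (Eventually.of_forall fun y => hJ.2.1 _)

lemma Kop_nonneg (hJ : KernelJ J) {f : ℝ → ℝ} (hf : ∀ y ∈ Icc L1 L2, 0 ≤ f y) (x : ℝ) :
    0 ≤ Kop J L1 L2 f x :=
  setIntegral_nonneg measurableSet_Icc fun y hy => mul_nonneg (hJ.2.1 _) (hf y hy)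

lemma Kop_continuous (hJ : KernelJ J) {f : ℝ → ℝ} (hf : Continuous f) :
    Continuous (Kop J L1 L2 f) := by
  obtain ⟨CJ, hCJ⟩ := hJ.2.2.1
  rw [continuous_iff_continuousAt]
  intro x0
  apply MeasureTheory.continuousAt_of_dominated (bound := fun y => CJ * |f y|)
  · exact Eventually.of_forall fun x =>
      (Continuous.aestronglyMeasurable ((hJ.1.comp (continuous_const.sub continuous_id)).mul hf))
  · refine Eventually.of_forall fun x => Eventually.of_forall fun y => ?_
    rw [Real.norm_eq_abs, abs_mul, abs_of_nonneg (hJ.2.1 _)]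
    exact mul_le_mul_of_nonneg_right (hCJ _) (abs_nonneg _)
  · exact ((continuous_const.mul hf.abs).integrableOn_Icc)
  · exact Eventually.of_forall fun y =>
      (((hJ.1.comp (continuous_id.sub continuous_const)).mul continuous_const).continuousAt)

lemma Kop_bound {CJ : ℝ} (hJ : KernelJ J) (hCJ : ∀ x, J x ≤ CJ) {f : ℝ → ℝ} (hf : Continuous f)
    (x : ℝ) : |Kop J L1 L2 f x| ≤ CJ * ∫ y in Icc L1 L2, |f y| := by
  have hcont : Continuous fun y => J (x - y) * f y :=
    (hJ.1.comp (continuous_const.sub continuous_id)).mul hf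
  have h1 : |Kop J L1 L2 f x| ≤ ∫ y in Icc L1 L2, |J (x - y) * f y| := by
    rw [← Real.norm_eq_abs]
    refine (norm_integral_le_integral_norm _).trans_eq ?_
    simp only [Real.norm_eq_abs]
  refine h1.trans ?_
  rw [← integral_const_mul]
  apply setIntegral_mono_on
  · exact hcont.abs.integrableOn_Icc
  · exact (continuous_const.mul hf.abs).integrableOn_Icc
  · exact measurableSet_Icc
  · intro y _
    rw [abs_mul, abs_of_nonneg (hJ.2.1 _)]
    exact mul_le_mul_of_nonneg_right (hCJ _) (abs_nonneg _)

lemma Qf_symm (hJ : KernelJ J) {f g : ℝ → ℝ} (hf : Continuous f) (hg : Continuous g) :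
    Qf J L1 L2 f g = Qf J L1 L2 g f := by
  have hint : Integrable (Function.uncurry fun x y => f x * (J (x - y) * g y))
      ((volume.restrict (Icc L1 L2)).prod (volume.restrict (Icc L1 L2))) := by
    rw [Measure.prod_restrict]
    apply ContinuousOn.integrableOn_compact (isCompact_Icc.prod isCompact_Icc)
    refine Continuous.continuousOn ?_
    have : Continuous fun p : ℝ × ℝ => J (p.1 - p.2) := hJ.1.comp (continuous_fst.sub continuous_snd)
    exact (hf.comp continuous_fst).mul (this.mul (hg.comp continuous_snd))
  have h1 : Qf J L1 L2 f g
      = ∫ x in Icc L1 L2, ∫ y in Icc L1 L2, f x * (J (x - y) * g y) := by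
    unfold Qf Kop
    refine setIntegral_congr_fun measurableSet_Icc fun x _ => ?_
    rw [integral_const_mul]
  have h2 : Qf J L1 L2 g f
      = ∫ y in Icc L1 L2, ∫ x in Icc L1 L2, f x * (J (x - y) * g y) := by
    unfold Qf Kop
    refine setIntegral_congr_fun measurableSet_Icc fun y _ => ?_
    rw [← integral_const_mul]
    refine setIntegral_congr_fun measurableSet_Icc fun x _ => ?_
    rw [J_symm hJ y x]; ring
  rw [h1, h2]
  exact MeasureTheory.integral_integral_swap hint

lemma integral_CS {μ : Measure ℝ} {f g : ℝ → ℝ}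
    (hf : Integrable (fun x => f x ^ 2) μ) (hg : Integrable (fun x => g x ^ 2) μ)
    (hfg : Integrable (fun x => f x * g x) μ) :
    (∫ x, f x * g x ∂μ) ^ 2 ≤ (∫ x, f x ^ 2 ∂μ) * (∫ x, g x ^ 2 ∂μ) := by
  set A := ∫ x, g x ^ 2 ∂μ
  set B := ∫ x, f x * g x ∂μ
  set C := ∫ x, f x ^ 2 ∂μ
  have key : ∀ t : ℝ, 0 ≤ A * (t * t) + (2 * B) * t + C := by
    intro t
    have i1 : Integrable (fun x => (t * t) * g x ^ 2) μ := hg.const_mul _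
    have i2 : Integrable (fun x => (2 * t) * (f x * g x)) μ := hfg.const_mul _
    have i3 : Integrable (fun x => (2 * t) * (f x * g x) + f x ^ 2) μ := i2.add hf
    have h2 : (0:ℝ) ≤ ∫ x, ((t * t) * g x ^ 2 + ((2 * t) * (f x * g x) + f x ^ 2)) ∂μ := by
      apply integral_nonneg
      intro x
      simp only [Pi.zero_apply]
      nlinarith [sq_nonneg (t * g x + f x)]
    rw [integral_add i1 i3, integral_add i2 hf,
        integral_const_mul, integral_const_mul] at h2
    nlinarith
  have := discrim_le_zero key
  rw [discrim] at this
  nlinarith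

end basic

section klemma

variable {J : ℝ → ℝ} {L1 L2 : ℝ}

lemma Q_le_k (hJ : KernelJ J) (hL : L1 < L2) :
    ∃ k : ℝ, 0 < k ∧ k < 1 ∧ ∀ f : ℝ → ℝ, Continuous f →
      Qf J L1 L2 f f ≤ k * ∫ x in Icc L1 L2, f x ^ 2 := by
  obtain ⟨hJc, hJnn, ⟨CJ, hCJ⟩, hJsym, hJ0, hJ1⟩ := hJ
  have hJ' : KernelJ J := ⟨hJc, hJnn, ⟨CJ, hCJ⟩, hJsym, hJ0, hJ1⟩
  have hJint : Integrable J := J_integrable hJ'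
  set j0 : ℝ := J 0 / 2 with hj0def
  have hj0 : 0 < j0 := by positivity
  obtain ⟨ε, hε, hball⟩ := Metric.mem_nhds_iff.1
    (hJc.continuousAt.preimage_mem_nhds (Ioi_mem_nhds (half_lt_self hJ0)))
  set δ0 : ℝ := ε / 2 with hδ0def
  have hδ0 : 0 < δ0 := by positivity
  have hJlow : ∀ z : ℝ, |z| ≤ δ0 → j0 ≤ J z := by
    intro z hz
    have hz' : z ∈ Metric.ball (0:ℝ) ε := by
      simp only [Metric.mem_ball, Real.dist_eq, sub_zero]
      have hδε : δ0 < ε := by rw [hδ0def]; linarith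
      linarith [hz]
    exact le_of_lt (hball hz')
  obtain ⟨n0, hn0⟩ := exists_nat_gt ((L2 - L1) / (δ0 / 2))
  set N : ℕ := n0 + 1 with hNdef
  have hN1 : 1 ≤ (N:ℝ) := by exact_mod_cast Nat.one_le_iff_ne_zero.2 (by omega)
  have hNgt : (L2 - L1) / (δ0 / 2) < (N:ℝ) := by
    refine hn0.trans_le ?_
    exact_mod_cast Nat.le_succ n0
  have hNz : ∀ z : ℝ, δ0 / 2 ≤ z → L2 - L1 < (N:ℝ) * z := by
    intro z hz
    have h1 : L2 - L1 < (N:ℝ) * (δ0 / 2) := by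
      rw [div_lt_iff₀ (by positivity)] at hNgt
      linarith [hNgt]
    refine h1.trans_le ?_
    exact mul_le_mul_of_nonneg_left hz (by linarith)
  set k : ℝ := 1 - j0 * δ0 / (2 * (N:ℝ) ^ 2) with hkdef
  have hj0δ0le1 : j0 * δ0 ≤ 1 := by
    have h1 : j0 * δ0 ≤ ∫ z in Icc 0 δ0, J z := by
      have h2 : ∫ z in Icc 0 δ0, (j0:ℝ) ≤ ∫ z in Icc 0 δ0, J z := by
        apply setIntegral_mono_on (integrableOn_const (by
          rw [Real.volume_Icc]; exact ENNReal.ofReal_ne_top)) hJint.integrableOn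
          measurableSet_Icc
        intro z hz
        rw [mem_Icc] at hz
        exact hJlow z (by rw [abs_of_nonneg hz.1]; exact hz.2)
      rw [setIntegral_const, Real.volume_real_Icc_of_le (by linarith), smul_eq_mul,
        sub_zero] at h2
      linarith [h2]
    have h3 : ∫ z in Icc 0 δ0, J z ≤ ∫ z, J z := setIntegral_le_integral hJint
      (Eventually.of_forall fun z => hJnn z)
    rw [hJ1] at h3
    linarith
  have hk1 : k < 1 := by
    rw [hkdef]
    have : 0 < j0 * δ0 / (2 * (N:ℝ) ^ 2) := by positivity
    linarith
  have hk0 : 0 < k := by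
    rw [hkdef]
    have hN2 : (2:ℝ) ≤ 2 * (N:ℝ)^2 := by nlinarith
    have hd : j0 * δ0 / (2 * (N:ℝ)^2) ≤ 1 / 2 :=
      div_le_div₀ (by norm_num) hj0δ0le1 (by norm_num) hN2
    linarith
  refine ⟨k, hk0, hk1, ?_⟩
  intro f hf
  obtain ⟨C0, hC0⟩ := isCompact_Icc.exists_bound_of_continuousOn (hf.continuousOn (s := Icc L1 L2))
  set C1 : ℝ := max C0 0 with hC1def
  have hC1 : ∀ x ∈ Icc L1 L2, |f x| ≤ C1 := fun x hx =>
    le_trans (by simpa [Real.norm_eq_abs] using hC0 x hx) (le_max_left _ _)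
  have hC1nn : 0 ≤ C1 := le_max_right _ _
  set u : ℝ → ℝ := (Icc L1 L2).indicator f with hudef
  have humeas : Measurable u := hf.measurable.indicator measurableSet_Icc
  have hubdd : ∀ x, |u x| ≤ C1 := by
    intro x
    by_cases hx : x ∈ Icc L1 L2
    · rw [hudef, indicator_of_mem hx]; exact hC1 x hx
    · rw [hudef, indicator_of_notMem hx]; simpa using hC1nn
  have huzero : ∀ x, x ∉ Icc L1 L2 → u x = 0 := fun x hx => indicator_of_notMem hx f
  have hIind : Integrable ((Icc L1 L2).indicator (fun _ => (1:ℝ))) := by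
    rw [integrable_indicator_iff measurableSet_Icc]
    exact integrableOn_const (by rw [Real.volume_Icc]; exact ENNReal.ofReal_ne_top)
  have hushift : ∀ b : ℝ, Measurable fun x => u (x - b) := fun b =>
    humeas.comp (measurable_id.sub measurable_const)
  -- integrability of shifted products
  have hprodint : ∀ b c : ℝ, Integrable (fun x => u (x - b) * u (x - c)) := by
    intro b c
    refine ((hIind.comp_sub_right b).const_mul (C1^2)).mono'
      (((hushift b).mul (hushift c)).aestronglyMeasurable) ?_
    refine Eventually.of_forall fun x => ?_
    rw [Real.norm_eq_abs, abs_mul]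
    by_cases hx : x - b ∈ Icc L1 L2
    · rw [indicator_of_mem hx, mul_one]
      calc |u (x - b)| * |u (x - c)| ≤ C1 * C1 :=
            mul_le_mul (hubdd _) (hubdd _) (abs_nonneg _) hC1nn
        _ = C1 ^ 2 := by ring
    · rw [huzero _ hx, indicator_of_notMem hx, mul_zero, abs_zero, zero_mul]
  have hprod0 : ∀ b : ℝ, Integrable (fun x => u x * u (x - b)) := by
    intro b
    have h := hprodint 0 b
    refine h.congr (Eventually.of_forall fun x => ?_)
    simp only [sub_zero]
  have husq : ∀ b : ℝ, Integrable (fun x => u (x - b) ^ 2) := by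
    intro b
    refine (hprodint b b).congr (Eventually.of_forall fun x => ?_)
    simp only [Pi.add_apply, Pi.sub_apply]
    ring
  have husq0 : Integrable (fun x => u x ^ 2) := by
    have h := husq 0
    refine h.congr (Eventually.of_forall fun x => ?_)
    simp only [sub_zero]
  set nrm : ℝ := ∫ x, u x ^ 2 with hnrmdef
  have hnrm0 : 0 ≤ nrm := integral_nonneg fun x => sq_nonneg _
  set GG : ℝ → ℝ := fun b => ∫ x, u x * u (x - b) with hGGdef
  set FF : ℝ → ℝ := fun b => ∫ x, (u x - u (x - b)) ^ 2 with hFFdef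
  have hFF0 : ∀ b, 0 ≤ FF b := fun b => integral_nonneg fun x => sq_nonneg _
  have hdiffsq : ∀ b : ℝ, Integrable (fun x => (u x - u (x - b)) ^ 2) := by
    intro b
    refine ((husq0.sub ((hprod0 b).const_mul 2)).add (husq b)).congr
      (Eventually.of_forall fun x => ?_)
    simp only [Pi.add_apply, Pi.sub_apply]
    ring
  have hFFeq : ∀ b, FF b = 2 * nrm - 2 * GG b := by
    intro b
    have e1 : FF b = ∫ x, (u x ^ 2 - 2 * (u x * u (x - b)) + u (x - b) ^ 2) := by
      refine integral_congr_ae (Eventually.of_forall fun x => ?_)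
      ring
    have e2 : ∫ x, (u x ^ 2 - 2 * (u x * u (x - b)) + u (x - b) ^ 2)
        = (∫ x, (u x ^ 2 - 2 * (u x * u (x - b)))) + ∫ x, u (x - b) ^ 2 :=
      integral_add (husq0.sub ((hprod0 b).const_mul 2)) (husq b)
    have e3 : ∫ x, (u x ^ 2 - 2 * (u x * u (x - b)))
        = nrm - ∫ x, 2 * (u x * u (x - b)) := integral_sub husq0 ((hprod0 b).const_mul 2)
    have e4 : (∫ x, 2 * (u x * u (x - b))) = 2 * GG b := integral_const_mul 2 _
    have e5 : (∫ x, u (x - b) ^ 2) = nrm :=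
      integral_sub_right_eq_self (fun t => u t ^ 2) b
    rw [e1, e2, e3, e4, e5]
    ring
  -- subadditivity of sqrt (FF)
  have hFsub : ∀ b c : ℝ,
      FF (b + c) ≤ (Real.sqrt (FF b) + Real.sqrt (FF c)) ^ 2 := by
    intro b c
    have hB2 : Integrable (fun x => (u (x - b) - u (x - (b + c))) ^ 2) := by
      refine (((husq b).sub ((hprodint b (b + c)).const_mul 2)).add (husq (b + c))).congr
        (Eventually.of_forall fun x => ?_)
      simp only [Pi.add_apply, Pi.sub_apply]
      ring
    have hABi : Integrable (fun x => (u x - u (x - b)) * (u (x - b) - u (x - (b + c)))) := by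
      refine (((hprod0 b).sub (hprod0 (b + c))).sub
        ((hprodint b b).sub (hprodint b (b + c)))).congr (Eventually.of_forall fun x => ?_)
      simp only [Pi.add_apply, Pi.sub_apply]
      ring
    have hB2val : ∫ x, (u (x - b) - u (x - (b + c))) ^ 2 = FF c := by
      have e1 : ∫ x, (u (x - b) - u (x - (b + c))) ^ 2
          = ∫ x, (u (x - b) - u ((x - b) - c)) ^ 2 := by
        refine integral_congr_ae (Eventually.of_forall fun x => ?_)
        show (u (x - b) - u (x - (b + c))) ^ 2 = (u (x - b) - u ((x - b) - c)) ^ 2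
        rw [show x - (b + c) = (x - b) - c from by ring]
      rw [e1]
      exact integral_sub_right_eq_self (fun t => (u t - u (t - c)) ^ 2) b
    have hCS := integral_CS (μ := volume) (f := fun x => u x - u (x - b))
      (g := fun x => u (x - b) - u (x - (b + c))) (hdiffsq b) hB2 hABi
    rw [hB2val] at hCS
    have hABle : (∫ x, (u x - u (x - b)) * (u (x - b) - u (x - (b + c))))
        ≤ Real.sqrt (FF b) * Real.sqrt (FF c) := by
      have h1 : (∫ x, (u x - u (x - b)) * (u (x - b) - u (x - (b + c))))
          ≤ |∫ x, (u x - u (x - b)) * (u (x - b) - u (x - (b + c)))| := le_abs_self _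
      have h2 : |∫ x, (u x - u (x - b)) * (u (x - b) - u (x - (b + c)))|
          = Real.sqrt ((∫ x, (u x - u (x - b)) * (u (x - b) - u (x - (b + c)))) ^ 2) :=
        (Real.sqrt_sq_eq_abs _).symm
      have h3 : Real.sqrt ((∫ x, (u x - u (x - b)) * (u (x - b) - u (x - (b + c)))) ^ 2)
          ≤ Real.sqrt (FF b * FF c) := Real.sqrt_le_sqrt hCS
      rw [Real.sqrt_mul (hFF0 b)] at h3
      linarith
    have hexp : FF (b + c) = FF b + 2 * (∫ x, (u x - u (x - b)) * (u (x - b) - u (x - (b + c)))) + FF c := by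
      have e0 : FF (b + c) = ∫ x,
          ((u x - u (x - b)) ^ 2
            + (2 * ((u x - u (x - b)) * (u (x - b) - u (x - (b + c))))
              + (u (x - b) - u (x - (b + c))) ^ 2)) := by
        refine integral_congr_ae (Eventually.of_forall fun x => ?_)
        ring
      have iA : Integrable (fun x => 2 * ((u x - u (x - b)) * (u (x - b) - u (x - (b + c)))))
        := hABi.const_mul 2
      have iB : Integrable (fun x => 2 * ((u x - u (x - b)) * (u (x - b) - u (x - (b + c))))
          + (u (x - b) - u (x - (b + c))) ^ 2) := by exact iA.add hB2
      rw [e0, integral_add (hdiffsq b) iB, integral_add iA hB2, integral_const_mul, hB2val]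
      ring
    have hsq : (Real.sqrt (FF b) + Real.sqrt (FF c)) ^ 2
        = FF b + 2 * (Real.sqrt (FF b) * Real.sqrt (FF c)) + FF c := by
      have hb := Real.sq_sqrt (hFF0 b)
      have hc := Real.sq_sqrt (hFF0 c)
      nlinarith [hb, hc]
    rw [hexp, hsq]
    linarith
  have hchain : ∀ (m : ℕ) (b : ℝ), Real.sqrt (FF ((m:ℝ) * b)) ≤ (m:ℝ) * Real.sqrt (FF b) := by
    intro m
    induction m with
    | zero =>
      intro b
      have h0 : FF 0 = 0 := by
        have e : ∀ x : ℝ, (u x - u (x - 0)) ^ 2 = 0 := by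
          intro x; rw [sub_zero, sub_self]; ring
        have h1 : FF 0 = ∫ x, (0:ℝ) :=
          integral_congr_ae (Eventually.of_forall fun x => e x)
        rw [h1, integral_zero]
      simp [h0]
    | succ m ih =>
      intro b
      have hstep : FF (((m:ℝ) + 1) * b) ≤ (Real.sqrt (FF ((m:ℝ) * b)) + Real.sqrt (FF b)) ^ 2 := by
        have e : ((m:ℝ) + 1) * b = (m:ℝ) * b + b := by ring
        rw [e]
        exact hFsub ((m:ℝ) * b) b
      have h1 : Real.sqrt (FF (((m:ℝ) + 1) * b))
          ≤ Real.sqrt (FF ((m:ℝ) * b)) + Real.sqrt (FF b) := by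
        refine (Real.sqrt_le_sqrt hstep).trans_eq ?_
        rw [Real.sqrt_sq (by positivity)]
      push_cast
      refine h1.trans ?_
      have := ih b
      nlinarith [Real.sqrt_nonneg (FF b), this]
  have hFdisj : ∀ b : ℝ, L2 - L1 < b → FF b = 2 * nrm := by
    intro b hb
    have hGG : GG b = 0 := by
      have e : ∀ x : ℝ, u x * u (x - b) = 0 := by
        intro x
        by_cases hx : x ∈ Icc L1 L2
        · have hx2 : x - b ∉ Icc L1 L2 := by
            rw [mem_Icc] at hx ⊢
            push_neg
            intro h1
            linarith [hx.2]
          rw [huzero _ hx2, mul_zero]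
        · rw [huzero _ hx, zero_mul]
      have : GG b = ∫ x, (0:ℝ) :=
        integral_congr_ae (Eventually.of_forall fun x => e x)
      rw [this, integral_zero]
    rw [hFFeq b, hGG]
    ring
  have hFlow : ∀ z ∈ Icc (δ0 / 2) δ0, 2 * nrm / (N:ℝ) ^ 2 ≤ FF z := by
    intro z hz
    rw [mem_Icc] at hz
    have h2 : FF ((N:ℝ) * z) = 2 * nrm := hFdisj _ (hNz z hz.1)
    have h1 := hchain N z
    rw [h2] at h1
    have h3 : 2 * nrm = Real.sqrt (2 * nrm) ^ 2 := (Real.sq_sqrt (by positivity)).symm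
    have h4 : Real.sqrt (FF z) ^ 2 = FF z := Real.sq_sqrt (hFF0 z)
    rw [div_le_iff₀ (by positivity)]
    nlinarith [Real.sqrt_nonneg (FF z), Real.sqrt_nonneg (2 * nrm), h1, h3, h4]
  -- Fubini: Qf = ∫ z, J z * GG z
  have hWmeas : AEStronglyMeasurable (Function.uncurry fun z x => J z * (u x * u (x - z)))
      (volume.prod volume) := by
    apply Measurable.aestronglyMeasurable
    exact (hJc.measurable.comp measurable_fst).mul
      ((humeas.comp measurable_snd).mul (humeas.comp (measurable_snd.sub measurable_fst)))
  have hWint : Integrable (Function.uncurry fun z x => J z * (u x * u (x - z)))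
      (volume.prod volume) := by
    refine (hJint.mul_prod (hIind.const_mul (C1 ^ 2))).mono' hWmeas ?_
    refine Eventually.of_forall fun p => ?_
    have hub : |u p.2 * u (p.2 - p.1)| ≤ C1 ^ 2 * (Icc L1 L2).indicator (fun _ => (1:ℝ)) p.2 := by
      rw [abs_mul]
      by_cases hx : p.2 ∈ Icc L1 L2
      · rw [indicator_of_mem hx, mul_one]
        calc |u p.2| * |u (p.2 - p.1)| ≤ C1 * C1 :=
              mul_le_mul (hubdd _) (hubdd _) (abs_nonneg _) hC1nn
          _ = C1 ^ 2 := by ring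
      · rw [huzero _ hx, indicator_of_notMem hx, mul_zero, abs_zero, zero_mul]
    calc ‖Function.uncurry (fun z x => J z * (u x * u (x - z))) p‖
        = J p.1 * |u p.2 * u (p.2 - p.1)| := by
          rw [Function.uncurry_apply_pair]
          rw [Real.norm_eq_abs, abs_mul, abs_of_nonneg (hJnn _)]
      _ ≤ J p.1 * (C1 ^ 2 * (Icc L1 L2).indicator (fun _ => (1:ℝ)) p.2) :=
          mul_le_mul_of_nonneg_left hub (hJnn _)
  have hswap := integral_integral_swap (f := fun z x => J z * (u x * u (x - z))) hWint
  have h6 : ∫ x, u x * Kop J L1 L2 f x = Qf J L1 L2 f f := by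
    have e7 : (fun x => u x * Kop J L1 L2 f x)
        = (Icc L1 L2).indicator (fun x => f x * Kop J L1 L2 f x) := by
      funext x
      by_cases hx : x ∈ Icc L1 L2
      · rw [indicator_of_mem hx, hudef, indicator_of_mem hx]
      · rw [indicator_of_notMem hx, huzero _ hx, zero_mul]
    rw [e7, integral_indicator measurableSet_Icc]
    rfl
  have hinner : ∀ x : ℝ, (∫ z, J z * (u x * u (x - z))) = u x * Kop J L1 L2 f x := by
    intro x
    have e1 : (∫ z, J z * (u x * u (x - z))) = u x * ∫ z, J z * u (x - z) := by
      rw [← integral_const_mul]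
      exact integral_congr_ae (Eventually.of_forall fun z => by ring)
    have e3 : (∫ z, J z * u (x - z)) = ∫ z, J (x - (x - z)) * u (x - z) := by
      refine integral_congr_ae (Eventually.of_forall fun z => ?_)
      show J z * u (x - z) = J (x - (x - z)) * u (x - z)
      rw [sub_sub_cancel]
    have e2 : (∫ z, J (x - (x - z)) * u (x - z)) = ∫ y, J (x - y) * u y :=
      integral_sub_left_eq_self (fun y => J (x - y) * u y) volume x
    have e4 : (∫ y, J (x - y) * u y) = Kop J L1 L2 f x := by
      have e5 : (fun y => J (x - y) * u y)
          = (Icc L1 L2).indicator (fun y => J (x - y) * f y) := by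
        funext y
        by_cases hy : y ∈ Icc L1 L2
        · rw [indicator_of_mem hy, hudef, indicator_of_mem hy]
        · rw [indicator_of_notMem hy, huzero _ hy, mul_zero]
      rw [e5, integral_indicator measurableSet_Icc]
      rfl
    rw [e1, e3, e2, e4]
  have hqid : Qf J L1 L2 f f = ∫ z, J z * GG z := by
    calc Qf J L1 L2 f f = ∫ x, u x * Kop J L1 L2 f x := h6.symm
      _ = ∫ x, ∫ z, J z * (u x * u (x - z)) :=
          (integral_congr_ae (Eventually.of_forall fun x => (hinner x))).symm
      _ = ∫ z, ∫ x, J z * (u x * u (x - z)) := hswap.symm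
      _ = ∫ z, J z * GG z :=
          integral_congr_ae (Eventually.of_forall fun z => integral_const_mul _ _)
  have hJG : Integrable (fun z => J z * GG z) := by
    have h := hWint.integral_prod_left
    refine h.congr (Eventually.of_forall fun z => ?_)
    show (∫ y, J z * (u y * u (y - z))) = J z * GG z
    exact integral_const_mul _ _
  have hJF : Integrable (fun z => J z * FF z) := by
    refine ((hJint.const_mul (2 * nrm)).sub (hJG.const_mul 2)).congr
      (Eventually.of_forall fun z => ?_)
    simp only [Pi.sub_apply]
    rw [hFFeq z]
    ring
  have hseg : j0 * δ0 * nrm / (N:ℝ) ^ 2 ≤ ∫ z, J z * FF z := by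
    have s1 : ∫ z in Icc (δ0 / 2) δ0, J z * FF z ≤ ∫ z, J z * FF z :=
      setIntegral_le_integral hJF (Eventually.of_forall fun z => mul_nonneg (hJnn z) (hFF0 z))
    have s2 : ∫ z in Icc (δ0 / 2) δ0, (j0 * (2 * nrm / (N:ℝ) ^ 2))
        ≤ ∫ z in Icc (δ0 / 2) δ0, J z * FF z := by
      apply setIntegral_mono_on (integrableOn_const (by
        rw [Real.volume_Icc]; exact ENNReal.ofReal_ne_top)) hJF.integrableOn measurableSet_Icc
      intro z hz
      have hz' := hz
      rw [mem_Icc] at hz'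
      have hJz : j0 ≤ J z := hJlow z (by rw [abs_of_nonneg (by linarith)]; exact hz'.2)
      have hFz : 2 * nrm / (N:ℝ) ^ 2 ≤ FF z := hFlow z hz
      exact mul_le_mul hJz hFz (by positivity) (le_trans hj0.le hJz)
    have s3 : ∫ z in Icc (δ0 / 2) δ0, (j0 * (2 * nrm / (N:ℝ) ^ 2))
        = (δ0 - δ0 / 2) * (j0 * (2 * nrm / (N:ℝ) ^ 2)) := by
      rw [setIntegral_const, Real.volume_real_Icc_of_le (by linarith), smul_eq_mul]
    have s4 : (δ0 - δ0 / 2) * (j0 * (2 * nrm / (N:ℝ) ^ 2)) = j0 * δ0 * nrm / (N:ℝ) ^ 2 := by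
      ring
    rw [s3, s4] at s2
    linarith
  have hfinal : Qf J L1 L2 f f = nrm - (1 / 2) * ∫ z, J z * FF z := by
    have c1 : ∫ z, J z * GG z = ∫ z, (nrm * J z - (1 / 2) * (J z * FF z)) := by
      refine integral_congr_ae (Eventually.of_forall fun z => ?_)
      show J z * GG z = nrm * J z - 1 / 2 * (J z * FF z)
      rw [hFFeq z]
      ring
    have c2 : ∫ z, (nrm * J z - (1 / 2) * (J z * FF z))
        = nrm * (∫ z, J z) - (1 / 2) * ∫ z, J z * FF z := by
      rw [integral_sub (hJint.const_mul nrm) (hJF.const_mul (1 / 2)), integral_const_mul,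
        integral_const_mul]
    rw [hqid, c1, c2, hJ1]
    ring
  have hnrmeq : nrm = ∫ x in Icc L1 L2, f x ^ 2 := by
    have e : (fun x => u x ^ 2) = (Icc L1 L2).indicator (fun x => f x ^ 2) := by
      funext x
      by_cases hx : x ∈ Icc L1 L2
      · rw [indicator_of_mem hx, hudef, indicator_of_mem hx]
      · rw [indicator_of_notMem hx, huzero _ hx]
        ring
    rw [hnrmdef, e, integral_indicator measurableSet_Icc]
  rw [← hnrmeq, hfinal, hkdef]
  have hP : (0:ℝ) < (N:ℝ) ^ 2 := by positivity
  have h1 : j0 * δ0 * nrm / (N:ℝ) ^ 2 = (j0 * δ0 / (N:ℝ) ^ 2) * nrm := by ring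
  have h2 : (1 - j0 * δ0 / (2 * (N:ℝ) ^ 2)) * nrm
      = nrm - (1 / 2) * ((j0 * δ0 / (N:ℝ) ^ 2) * nrm) := by ring
  rw [h2]
  rw [h1] at hseg
  linarith

end klemma

section groundstate

variable {J : ℝ → ℝ} {L1 L2 : ℝ} {a : ℝ → ℝ}

lemma form_bound (hJ : KernelJ J) (hL : L1 < L2) (ha : Continuous a)
    {d lam : ℝ} {φ : ℝ → ℝ} (hd : 0 < d)
    (hφc : ContinuousOn φ (Icc L1 L2)) (hφp : ∀ x ∈ Icc L1 L2, 0 < φ x)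
    (hsup : ∀ x ∈ Ioo L1 L2,
      d * (∫ y in L1..L2, J (x - y) * φ y) - d * φ x + a x * φ x ≤ lam * φ x)
    {u : ℝ → ℝ} (hu : Continuous u) :
    d * Qf J L1 L2 u u ≤ ∫ x in Icc L1 L2, (lam + d - a x) * u x ^ 2 := by
  have hJ' := hJ
  obtain ⟨hJc, hJnn, ⟨CJ, hCJ⟩, hJsym, hJ0, hJ1⟩ := hJ
  set ψ : ℝ → ℝ := IccExtend hL.le ((Icc L1 L2).restrict φ) with hψdef
  have hψc : Continuous ψ := Continuous.Icc_extend' (hφc.restrict)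
  have hψeq : ∀ x ∈ Icc L1 L2, ψ x = φ x := by
    intro x hx
    rw [hψdef, IccExtend_of_mem _ _ hx]
    rfl
  have hψpos : ∀ x, 0 < ψ x := by
    intro x
    exact hφp _ (projIcc L1 L2 hL.le x).2
  have hJx : ∀ x : ℝ, Continuous fun y => J (x - y) := fun x =>
    hJc.comp (continuous_const.sub continuous_id)
  have hKint : ∀ x, (∫ y in L1..L2, J (x - y) * φ y) = Kop J L1 L2 ψ x := by
    intro x
    rw [ii_eq hL]
    exact (setIntegral_congr_fun measurableSet_Icc fun y hy => by rw [hψeq y hy]).symm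
  have hsupIcc : ∀ x ∈ Icc L1 L2, d * Kop J L1 L2 ψ x ≤ (lam + d - a x) * ψ x := by
    have hclosed : IsClosed {x : ℝ | d * Kop J L1 L2 ψ x ≤ (lam + d - a x) * ψ x} :=
      isClosed_le (continuous_const.mul (Kop_continuous hJ' hψc))
        ((continuous_const.sub ha).mul hψc)
    have hsub : Ioo L1 L2 ⊆ {x : ℝ | d * Kop J L1 L2 ψ x ≤ (lam + d - a x) * ψ x} := by
      intro x hx
      have h := hsup x hx
      rw [hKint x] at h
      have hpe : ψ x = φ x := hψeq x (Ioo_subset_Icc_self hx)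
      show d * Kop J L1 L2 ψ x ≤ (lam + d - a x) * ψ x
      rw [hpe]
      linarith [h]
    intro x hx
    have h1 : closure (Ioo L1 L2) ⊆ {x : ℝ | d * Kop J L1 L2 ψ x ≤ (lam + d - a x) * ψ x} :=
      closure_minimal hsub hclosed
    rw [closure_Ioo hL.ne] at h1
    exact h1 hx
  set v : ℝ → ℝ := fun x => u x / ψ x with hvdef
  have hvc : Continuous v := hu.div hψc fun x => (hψpos x).ne'
  have huv : ∀ x, u x = v x * ψ x := fun x => (div_mul_cancel₀ _ (hψpos x).ne').symm
  have hW2c : Continuous fun y => ψ y * v y ^ 2 := hψc.mul (hvc.pow 2)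
  have hKψc : Continuous (Kop J L1 L2 ψ) := Kop_continuous hJ' hψc
  have hKuc : Continuous (Kop J L1 L2 u) := Kop_continuous hJ' hu
  have hKW2c : Continuous (Kop J L1 L2 fun y => ψ y * v y ^ 2) := Kop_continuous hJ' hW2c
  -- inner expansion
  have hinner : ∀ x, (∫ y in Icc L1 L2, J (x - y) * (ψ x * ψ y * (v x - v y) ^ 2))
      = v x ^ 2 * ψ x * Kop J L1 L2 ψ x - 2 * (v x * ψ x) * Kop J L1 L2 u x
        + ψ x * Kop J L1 L2 (fun y => ψ y * v y ^ 2) x := by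
    intro x
    have e1 : ∀ y, J (x - y) * (ψ x * ψ y * (v x - v y) ^ 2)
        = (v x ^ 2 * ψ x) * (J (x - y) * ψ y) - (2 * (v x * ψ x)) * (J (x - y) * u y)
          + ψ x * (J (x - y) * (ψ y * v y ^ 2)) := by
      intro y
      rw [huv y]
      ring
    have i1 : IntegrableOn (fun y => (v x ^ 2 * ψ x) * (J (x - y) * ψ y)) (Icc L1 L2) :=
      (continuous_const.mul ((hJx x).mul hψc)).integrableOn_Icc
    have i2 : IntegrableOn (fun y => (2 * (v x * ψ x)) * (J (x - y) * u y)) (Icc L1 L2) :=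
      (continuous_const.mul ((hJx x).mul hu)).integrableOn_Icc
    have i3 : IntegrableOn (fun y => ψ x * (J (x - y) * (ψ y * v y ^ 2))) (Icc L1 L2) :=
      (continuous_const.mul ((hJx x).mul hW2c)).integrableOn_Icc
    have i12 : IntegrableOn (fun y => (v x ^ 2 * ψ x) * (J (x - y) * ψ y)
        - (2 * (v x * ψ x)) * (J (x - y) * u y)) (Icc L1 L2) := by exact i1.sub i2
    rw [setIntegral_congr_fun measurableSet_Icc (fun y _ => e1 y),
      integral_add i12 i3, integral_sub i1 i2, integral_const_mul, integral_const_mul,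
      integral_const_mul]
    rfl
  have ho1 : IntegrableOn (fun x => v x ^ 2 * ψ x * Kop J L1 L2 ψ x) (Icc L1 L2) :=
    (((hvc.pow 2).mul hψc).mul hKψc).integrableOn_Icc
  have ho2 : IntegrableOn (fun x => 2 * (v x * ψ x) * Kop J L1 L2 u x) (Icc L1 L2) :=
    ((continuous_const.mul (hvc.mul hψc)).mul hKuc).integrableOn_Icc
  have ho3 : IntegrableOn (fun x => ψ x * Kop J L1 L2 (fun y => ψ y * v y ^ 2) x) (Icc L1 L2) :=
    (hψc.mul hKW2c).integrableOn_Icc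
  have ho12 : IntegrableOn (fun x => v x ^ 2 * ψ x * Kop J L1 L2 ψ x
      - 2 * (v x * ψ x) * Kop J L1 L2 u x) (Icc L1 L2) := by exact ho1.sub ho2
  have houter : (0:ℝ) ≤ (∫ x in Icc L1 L2, v x ^ 2 * ψ x * Kop J L1 L2 ψ x)
      - (∫ x in Icc L1 L2, 2 * (v x * ψ x) * Kop J L1 L2 u x)
      + ∫ x in Icc L1 L2, ψ x * Kop J L1 L2 (fun y => ψ y * v y ^ 2) x := by
    have h0 : (0:ℝ) ≤ ∫ x in Icc L1 L2,
        (v x ^ 2 * ψ x * Kop J L1 L2 ψ x - 2 * (v x * ψ x) * Kop J L1 L2 u x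
          + ψ x * Kop J L1 L2 (fun y => ψ y * v y ^ 2) x) := by
      rw [← setIntegral_congr_fun measurableSet_Icc (fun x _ => hinner x)]
      apply setIntegral_nonneg measurableSet_Icc
      intro x hx
      apply setIntegral_nonneg measurableSet_Icc
      intro y hy
      have h1 := hψpos x
      have h2 := hψpos y
      have h3 : (0:ℝ) ≤ ψ x * ψ y * (v x - v y) ^ 2 := by positivity
      exact mul_nonneg (hJnn _) h3
    rw [integral_add ho12 ho3, integral_sub ho1 ho2] at h0
    linarith
  have hmid : (∫ x in Icc L1 L2, 2 * (v x * ψ x) * Kop J L1 L2 u x) = 2 * Qf J L1 L2 u u := by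
    have e : ∀ x, 2 * (v x * ψ x) * Kop J L1 L2 u x = 2 * (u x * Kop J L1 L2 u x) := by
      intro x
      rw [← huv x]
      ring
    rw [setIntegral_congr_fun measurableSet_Icc (fun x _ => e x), integral_const_mul]
    rfl
  have hthird : (∫ x in Icc L1 L2, ψ x * Kop J L1 L2 (fun y => ψ y * v y ^ 2) x)
      = ∫ x in Icc L1 L2, v x ^ 2 * ψ x * Kop J L1 L2 ψ x := by
    have e1 : (∫ x in Icc L1 L2, ψ x * Kop J L1 L2 (fun y => ψ y * v y ^ 2) x)
        = Qf J L1 L2 ψ (fun y => ψ y * v y ^ 2) := rfl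
    have e2 : Qf J L1 L2 ψ (fun y => ψ y * v y ^ 2)
        = Qf J L1 L2 (fun y => ψ y * v y ^ 2) ψ := Qf_symm hJ' hψc hW2c
    have e3 : Qf J L1 L2 (fun y => ψ y * v y ^ 2) ψ
        = ∫ x in Icc L1 L2, v x ^ 2 * ψ x * Kop J L1 L2 ψ x := by
      refine setIntegral_congr_fun measurableSet_Icc fun x _ => ?_
      show ψ x * v x ^ 2 * Kop J L1 L2 ψ x = v x ^ 2 * ψ x * Kop J L1 L2 ψ x
      ring
    rw [e1, e2, e3]
  have hQA : Qf J L1 L2 u u ≤ ∫ x in Icc L1 L2, v x ^ 2 * ψ x * Kop J L1 L2 ψ x := by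
    rw [hmid, hthird] at houter
    linarith
  have hdA : d * (∫ x in Icc L1 L2, v x ^ 2 * ψ x * Kop J L1 L2 ψ x)
      ≤ ∫ x in Icc L1 L2, (lam + d - a x) * u x ^ 2 := by
    have e : d * (∫ x in Icc L1 L2, v x ^ 2 * ψ x * Kop J L1 L2 ψ x)
        = ∫ x in Icc L1 L2, (v x ^ 2 * ψ x) * (d * Kop J L1 L2 ψ x) := by
      rw [← integral_const_mul]
      refine setIntegral_congr_fun measurableSet_Icc fun x _ => ?_
      ring
    rw [e]
    apply setIntegral_mono_on
    · exact ((((hvc.pow 2).mul hψc)).mul (continuous_const.mul hKψc)).integrableOn_Icc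
    · exact (((continuous_const.sub ha)).mul (hu.pow 2)).integrableOn_Icc
    · exact measurableSet_Icc
    · intro x hx
      have h1 : (v x ^ 2 * ψ x) * (d * Kop J L1 L2 ψ x)
          ≤ (v x ^ 2 * ψ x) * ((lam + d - a x) * ψ x) := by
        apply mul_le_mul_of_nonneg_left (hsupIcc x hx)
        have := hψpos x
        positivity
      refine h1.trans_eq ?_
      rw [huv x]
      ring
  calc d * Qf J L1 L2 u u
      ≤ d * (∫ x in Icc L1 L2, v x ^ 2 * ψ x * Kop J L1 L2 ψ x) :=
        mul_le_mul_of_nonneg_left hQA hd.le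
    _ ≤ ∫ x in Icc L1 L2, (lam + d - a x) * u x ^ 2 := hdA

end groundstate

section iteration

/-- iteration sequence for the Neumann series -/
def gseq (J : ℝ → ℝ) (L1 L2 : ℝ) (a : ℝ → ℝ) (d mu' M : ℝ) : ℕ → ℝ → ℝ
  | 0 => fun _ => 1
  | (n + 1) => fun x =>
      d * Kop J L1 L2 (gseq J L1 L2 a d mu' M n) x / max (mu' - a x) (mu' - M)

variable {J : ℝ → ℝ} {L1 L2 : ℝ} {a : ℝ → ℝ}

lemma exists_supersol (hJ : KernelJ J) (hL : L1 < L2) (ha : Continuous a)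
    {d M mu' q : ℝ} (hd : 0 < d) (hM : ∀ x ∈ Icc L1 L2, a x ≤ M) (hmu' : M < mu')
    (hq0 : 0 ≤ q) (hq1 : q < 1)
    (HQ : ∀ v : ℝ → ℝ, Continuous v →
      d * |Qf J L1 L2 v v| ≤ q * ∫ x in Icc L1 L2, (mu' - a x) * v x ^ 2) :
    ∃ φ : ℝ → ℝ, ContinuousOn φ (Icc L1 L2) ∧ (∀ x ∈ Icc L1 L2, 0 < φ x) ∧
      ∀ x ∈ Ioo L1 L2,
        d * (∫ y in L1..L2, J (x - y) * φ y) - d * φ x + a x * φ x ≤ (mu' - d) * φ x := by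
  have hJ' := hJ
  obtain ⟨hJc, hJnn, ⟨CJ, hCJ⟩, hJsym, hJ0, hJ1⟩ := hJ
  have hCJ0 : 0 ≤ CJ := le_trans (hJnn 0) (hCJ 0)
  have hη : 0 < mu' - M := by linarith
  set D : ℝ → ℝ := fun x => max (mu' - a x) (mu' - M) with hDdef
  have hDc : Continuous D := (continuous_const.sub ha).max continuous_const
  have hDpos : ∀ x, 0 < D x := fun x => lt_of_lt_of_le hη (le_max_right _ _)
  have hDIcc : ∀ x ∈ Icc L1 L2, D x = mu' - a x := by
    intro x hx
    exact max_eq_left (by have := hM x hx; linarith)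
  have hwIcc : ∀ x ∈ Icc L1 L2, (0:ℝ) < mu' - a x := by
    intro x hx; have := hM x hx; linarith
  -- weighted norm
  set P : (ℝ → ℝ) → ℝ := fun w => ∫ x in Icc L1 L2, (mu' - a x) * w x ^ 2 with hPdef
  have hPnn : ∀ w : ℝ → ℝ, 0 ≤ P w := by
    intro w
    apply setIntegral_nonneg measurableSet_Icc
    intro x hx
    exact mul_nonneg (hwIcc x hx).le (sq_nonneg _)
  have hwC : Continuous fun x : ℝ => mu' - a x := continuous_const.sub ha
  -- Q bilinearity helpers
  have hKadd : ∀ (g1 g2 : ℝ → ℝ), Continuous g1 → Continuous g2 → ∀ x,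
      Kop J L1 L2 (fun y => g1 y + g2 y) x = Kop J L1 L2 g1 x + Kop J L1 L2 g2 x := by
    intro g1 g2 h1 h2 x
    have hJx : Continuous fun y => J (x - y) := hJc.comp (continuous_const.sub continuous_id)
    have e : ∀ y, J (x - y) * (g1 y + g2 y) = J (x - y) * g1 y + J (x - y) * g2 y := by
      intro y; ring
    show (∫ y in Icc L1 L2, J (x - y) * (g1 y + g2 y)) = _
    rw [setIntegral_congr_fun measurableSet_Icc (fun y _ => e y),
      integral_add (f := fun y => J (x - y) * g1 y) (g := fun y => J (x - y) * g2 y)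
        ((hJx.mul h1).integrableOn_Icc) ((hJx.mul h2).integrableOn_Icc)]
    rfl
  have hKsmul : ∀ (c : ℝ) (g1 : ℝ → ℝ), ∀ x,
      Kop J L1 L2 (fun y => c * g1 y) x = c * Kop J L1 L2 g1 x := by
    intro c g1 x
    show (∫ y in Icc L1 L2, J (x - y) * (c * g1 y))
        = c * ∫ y in Icc L1 L2, J (x - y) * g1 y
    rw [← integral_const_mul]
    refine setIntegral_congr_fun measurableSet_Icc fun y _ => ?_
    ring
  have hKcont : ∀ {g1 : ℝ → ℝ}, Continuous g1 → Continuous (Kop J L1 L2 g1) :=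
    fun h => Kop_continuous hJ' h
  have hQadd : ∀ (f1 f2 g1 : ℝ → ℝ), Continuous f1 → Continuous f2 → Continuous g1 →
      Qf J L1 L2 (fun x => f1 x + f2 x) g1 = Qf J L1 L2 f1 g1 + Qf J L1 L2 f2 g1 := by
    intro f1 f2 g1 h1 h2 h3
    show (∫ x in Icc L1 L2, (f1 x + f2 x) * Kop J L1 L2 g1 x) = _
    have e : ∀ x, (f1 x + f2 x) * Kop J L1 L2 g1 x
        = f1 x * Kop J L1 L2 g1 x + f2 x * Kop J L1 L2 g1 x := fun x => by ring
    rw [setIntegral_congr_fun measurableSet_Icc (fun x _ => e x),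
      integral_add (f := fun x => f1 x * Kop J L1 L2 g1 x) (g := fun x => f2 x * Kop J L1 L2 g1 x)
        ((h1.mul (hKcont h3)).integrableOn_Icc)
        ((h2.mul (hKcont h3)).integrableOn_Icc)]
    rfl
  have hQaddr : ∀ (f1 g1 g2 : ℝ → ℝ), Continuous f1 → Continuous g1 → Continuous g2 →
      Qf J L1 L2 f1 (fun x => g1 x + g2 x) = Qf J L1 L2 f1 g1 + Qf J L1 L2 f1 g2 := by
    intro f1 g1 g2 h1 h2 h3
    show (∫ x in Icc L1 L2, f1 x * Kop J L1 L2 (fun y => g1 y + g2 y) x) = _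
    have e : ∀ x, f1 x * Kop J L1 L2 (fun y => g1 y + g2 y) x
        = f1 x * Kop J L1 L2 g1 x + f1 x * Kop J L1 L2 g2 x := by
      intro x
      rw [hKadd g1 g2 h2 h3 x]
      ring
    rw [setIntegral_congr_fun measurableSet_Icc (fun x _ => e x),
      integral_add (f := fun x => f1 x * Kop J L1 L2 g1 x) (g := fun x => f1 x * Kop J L1 L2 g2 x)
        ((h1.mul (hKcont h2)).integrableOn_Icc)
        ((h1.mul (hKcont h3)).integrableOn_Icc)]
    rfl
  have hQsmull : ∀ (c : ℝ) (f1 g1 : ℝ → ℝ),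
      Qf J L1 L2 (fun x => c * f1 x) g1 = c * Qf J L1 L2 f1 g1 := by
    intro c f1 g1
    show (∫ x in Icc L1 L2, (c * f1 x) * Kop J L1 L2 g1 x)
        = c * ∫ x in Icc L1 L2, f1 x * Kop J L1 L2 g1 x
    rw [← integral_const_mul]
    refine setIntegral_congr_fun measurableSet_Icc fun x _ => ?_
    ring
  have hQsmulr : ∀ (c : ℝ) (f1 g1 : ℝ → ℝ),
      Qf J L1 L2 f1 (fun x => c * g1 x) = c * Qf J L1 L2 f1 g1 := by
    intro c f1 g1
    show (∫ x in Icc L1 L2, f1 x * Kop J L1 L2 (fun y => c * g1 y) x)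
        = c * ∫ x in Icc L1 L2, f1 x * Kop J L1 L2 g1 x
    rw [← integral_const_mul]
    refine setIntegral_congr_fun measurableSet_Icc fun x _ => ?_
    rw [hKsmul c g1 x]
    ring
  -- polarization: cross bound
  have hcross : ∀ (u w : ℝ → ℝ), Continuous u → Continuous w →
      4 * (d * Qf J L1 L2 u w) ≤ 2 * q * (P u + P w) := by
    intro u w hu hw
    have hPexp : P (fun x => u x + w x) + P (fun x => u x - w x) = 2 * P u + 2 * P w := by
      have i1 : IntegrableOn (fun x => (mu' - a x) * (u x + w x) ^ 2) (Icc L1 L2) :=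
        (hwC.mul ((hu.add hw).pow 2)).integrableOn_Icc
      have i2 : IntegrableOn (fun x => (mu' - a x) * (u x - w x) ^ 2) (Icc L1 L2) :=
        (hwC.mul ((hu.sub hw).pow 2)).integrableOn_Icc
      have i3 : IntegrableOn (fun x => 2 * ((mu' - a x) * u x ^ 2)) (Icc L1 L2) :=
        (continuous_const.mul (hwC.mul (hu.pow 2))).integrableOn_Icc
      have i4 : IntegrableOn (fun x => 2 * ((mu' - a x) * w x ^ 2)) (Icc L1 L2) :=
        (continuous_const.mul (hwC.mul (hw.pow 2))).integrableOn_Icc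
      have e0 : P (fun x => u x + w x) + P (fun x => u x - w x)
          = ∫ x in Icc L1 L2, ((mu' - a x) * (u x + w x) ^ 2 + (mu' - a x) * (u x - w x) ^ 2) :=
        (integral_add i1 i2).symm
      have e1 : ∀ x, (mu' - a x) * (u x + w x) ^ 2 + (mu' - a x) * (u x - w x) ^ 2
          = 2 * ((mu' - a x) * u x ^ 2) + 2 * ((mu' - a x) * w x ^ 2) := fun x => by ring
      rw [e0, setIntegral_congr_fun measurableSet_Icc (fun x _ => e1 x),
        integral_add i3 i4, integral_const_mul, integral_const_mul]
    have hplus : d * Qf J L1 L2 (fun x => u x + w x) (fun x => u x + w x)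
        = d * Qf J L1 L2 u u + 2 * (d * Qf J L1 L2 u w) + d * Qf J L1 L2 w w := by
      rw [hQadd u w (fun x => u x + w x) hu hw (hu.add hw),
        hQaddr u u w hu hu hw, hQaddr w u w hw hu hw,
        Qf_symm hJ' hw hu]
      ring
    have hminus : d * Qf J L1 L2 (fun x => u x - w x) (fun x => u x - w x)
        = d * Qf J L1 L2 u u - 2 * (d * Qf J L1 L2 u w) + d * Qf J L1 L2 w w := by
      have hw' : Continuous fun x => (-1 : ℝ) * w x := continuous_const.mul hw
      have e2 : (fun x => u x - w x) = fun x => u x + (-1 : ℝ) * w x := by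
        funext x; ring
      rw [e2, hQadd u (fun x => (-1:ℝ) * w x) (fun x => u x + (-1:ℝ) * w x) hu hw' (hu.add hw'),
        hQaddr u u (fun x => (-1:ℝ) * w x) hu hu hw',
        hQaddr _ u (fun x => (-1:ℝ) * w x) hw' hu hw',
        hQsmull (-1) w u, hQsmull (-1) w (fun x => (-1:ℝ) * w x), hQsmulr (-1) w w,
        hQsmulr (-1) u w, Qf_symm hJ' hw hu]
      ring
    have hb1 := HQ (fun x => u x + w x) (hu.add hw)
    have hb2 := HQ (fun x => u x - w x) (hu.sub hw)
    have habs1 : d * Qf J L1 L2 (fun x => u x + w x) (fun x => u x + w x)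
        ≤ q * P (fun x => u x + w x) := by
      have := abs_nonneg (Qf J L1 L2 (fun x => u x + w x) (fun x => u x + w x))
      have h2 := le_abs_self (Qf J L1 L2 (fun x => u x + w x) (fun x => u x + w x))
      nlinarith [hb1, hd.le]
    have habs2 : -(d * Qf J L1 L2 (fun x => u x - w x) (fun x => u x - w x))
        ≤ q * P (fun x => u x - w x) := by
      have h2 := neg_abs_le (Qf J L1 L2 (fun x => u x - w x) (fun x => u x - w x))
      nlinarith [hb2, hd.le]
    nlinarith [hplus, hminus, habs1, habs2, hPexp]
  -- operator bound
  have hPT : ∀ w : ℝ → ℝ, Continuous w →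
      P (fun x => d * Kop J L1 L2 w x / D x) ≤ q ^ 2 * P w := by
    intro w hw
    set Tw : ℝ → ℝ := fun x => d * Kop J L1 L2 w x / D x with hTwdef
    have hTwc : Continuous Tw :=
      (continuous_const.mul (hKcont hw)).div hDc fun x => (hDpos x).ne'
    have hR1 : P Tw = d * Qf J L1 L2 Tw w := by
      have e : ∀ x ∈ Icc L1 L2, (mu' - a x) * Tw x ^ 2 = d * (Tw x * Kop J L1 L2 w x) := by
        intro x hx
        have hD := hDIcc x hx
        have hDne : D x ≠ 0 := (hDpos x).ne'
        rw [← hD, hTwdef]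
        field_simp
      rw [hPdef]
      show (∫ x in Icc L1 L2, (mu' - a x) * Tw x ^ 2) = _
      rw [setIntegral_congr_fun measurableSet_Icc e, integral_const_mul]
      rfl
    have hkey : ∀ t : ℝ, 0 < t → 4 * (t * P Tw) ≤ 2 * q * (P w + t ^ 2 * P Tw) := by
      intro t ht
      have h1 := hcross w (fun x => t * Tw x) hw (continuous_const.mul hTwc)
      have h2 : Qf J L1 L2 w (fun x => t * Tw x) = t * Qf J L1 L2 w Tw :=
        hQsmulr t w Tw
      have h3 : Qf J L1 L2 w Tw = Qf J L1 L2 Tw w := Qf_symm hJ' hw hTwc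
      have h4 : P (fun x => t * Tw x) = t ^ 2 * P Tw := by
        rw [hPdef]
        show (∫ x in Icc L1 L2, (mu' - a x) * (t * Tw x) ^ 2)
            = t ^ 2 * ∫ x in Icc L1 L2, (mu' - a x) * Tw x ^ 2
        rw [← integral_const_mul]
        refine setIntegral_congr_fun measurableSet_Icc fun x _ => ?_
        ring
      rw [h2, h3, h4] at h1
      nlinarith [h1, hR1]
    by_cases hPTz : P Tw = 0
    · rw [hPTz]
      exact mul_nonneg (by positivity) (hPnn w)
    have hPTpos : 0 < P Tw := lt_of_le_of_ne (hPnn Tw) (Ne.symm hPTz)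
    by_cases hPwz : P w = 0
    · exfalso
      have h5 := hkey (1 / (q + 1)) (by positivity)
      rw [hPwz] at h5
      have hq1' : 0 < q + 1 := by linarith
      have hr : 0 < 1 / (q + 1) := by positivity
      have hqr : q * (1 / (q + 1)) < 1 := by
        rw [mul_one_div, div_lt_one hq1']
        linarith
      have h6 : 2 * q * (1 / (q + 1)) ^ 2 < 4 * (1 / (q + 1)) := by
        nlinarith [mul_pos hr (by nlinarith [hqr] : (0:ℝ) < 1 - q * (1 / (q + 1)))]
      nlinarith [mul_pos (by nlinarith [h6] :
        (0:ℝ) < 4 * (1 / (q + 1)) - 2 * q * (1 / (q + 1)) ^ 2) hPTpos, h5]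
    have hPwpos : 0 < P w := lt_of_le_of_ne (hPnn w) (Ne.symm hPwz)
    set sP := Real.sqrt (P w) with hsPdef
    set sT := Real.sqrt (P Tw) with hsTdef
    have hsP : sP ^ 2 = P w := Real.sq_sqrt (hPnn w)
    have hsT : sT ^ 2 = P Tw := Real.sq_sqrt (hPnn Tw)
    have hsPpos : 0 < sP := Real.sqrt_pos.2 hPwpos
    have hsTpos : 0 < sT := Real.sqrt_pos.2 hPTpos
    have h7 := hkey (sP / sT) (by positivity)
    have h8 : sT ≤ q * sP := by
      have e1 : (sP / sT) * P Tw = sP * sT := by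
        rw [← hsT]
        field_simp
      have e2 : (sP / sT) ^ 2 * P Tw = sP ^ 2 := by
        rw [← hsT]
        field_simp
      rw [e1, e2, hsP] at h7
      have h9 : 4 * (sP * sT) ≤ 4 * q * (sP * sP) := by nlinarith [h7]
      have h10 : 4 * sP * sT ≤ 4 * sP * (q * sP) := by nlinarith [h9]
      exact le_of_mul_le_mul_left (by nlinarith [h10]) (by positivity)
    calc P Tw = sT ^ 2 := hsT.symm
      _ ≤ (q * sP) ^ 2 := by nlinarith [h8, hsTpos.le, mul_nonneg hq0 hsPpos.le]
      _ = q ^ 2 * P w := by rw [mul_pow, hsP]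
  -- the sequence
  set g : ℕ → ℝ → ℝ := gseq J L1 L2 a d mu' M with hgdef
  have hg0 : ∀ x, g 0 x = 1 := fun x => rfl
  have hgs : ∀ n x, g (n + 1) x = d * Kop J L1 L2 (g n) x / D x := fun n x => rfl
  have hgc : ∀ n, Continuous (g n) := by
    intro n
    induction n with
    | zero => exact continuous_const
    | succ m ih =>
      have : Continuous fun x => d * Kop J L1 L2 (g m) x / D x :=
        (continuous_const.mul (hKcont ih)).div hDc fun x => (hDpos x).ne'
      exact this
  have hgnn : ∀ n x, 0 ≤ g n x := by
    intro n
    induction n with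
    | zero => intro x; rw [hg0 x]; norm_num
    | succ m ih =>
      intro x
      rw [hgs m x]
      exact div_nonneg (mul_nonneg hd.le (Kop_nonneg hJ' (fun y _ => ih y) x)) (hDpos x).le
  have hPg : ∀ n, P (g n) ≤ q ^ (2 * n) * P (g 0) := by
    intro n
    induction n with
    | zero => simp
    | succ m ih =>
      have h1 : P (g (m + 1)) ≤ q ^ 2 * P (g m) := hPT (g m) (hgc m)
      calc P (g (m + 1)) ≤ q ^ 2 * P (g m) := h1
        _ ≤ q ^ 2 * (q ^ (2 * m) * P (g 0)) :=
            mul_le_mul_of_nonneg_left ih (by positivity)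
        _ = q ^ (2 * (m + 1)) * P (g 0) := by ring
  set P1 : ℝ := P (g 0) with hP1def
  have hP1nn : 0 ≤ P1 := hPnn _
  have hLL : (0:ℝ) ≤ L2 - L1 := by linarith
  have hsqP : ∀ n, (∫ x in Icc L1 L2, (mu' - M) * g n x ^ 2) ≤ P (g n) := by
    intro n
    apply setIntegral_mono_on ((continuous_const.mul ((hgc n).pow 2)).integrableOn_Icc)
      ((hwC.mul ((hgc n).pow 2)).integrableOn_Icc) measurableSet_Icc
    intro x hx
    exact mul_le_mul_of_nonneg_right (by linarith [hM x hx]) (sq_nonneg _)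
  have habs : ∀ n, (∫ x in Icc L1 L2, |g n x|) ^ 2
      ≤ (L2 - L1) * (P (g n) / (mu' - M)) := by
    intro n
    have i1 : IntegrableOn (fun _ : ℝ => (1:ℝ) ^ 2) (Icc L1 L2) :=
      continuous_const.integrableOn_Icc
    have i2 : IntegrableOn (fun x => |g n x| ^ 2) (Icc L1 L2) :=
      ((hgc n).abs.pow 2).integrableOn_Icc
    have i3 : IntegrableOn (fun x => (1:ℝ) * |g n x|) (Icc L1 L2) :=
      (continuous_const.mul (hgc n).abs).integrableOn_Icc
    have hCS := integral_CS (μ := volume.restrict (Icc L1 L2)) (f := fun _ => (1:ℝ))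
      (g := fun x => |g n x|) i1 i2 i3
    have e1 : (∫ x in Icc L1 L2, (1:ℝ) * |g n x|) = ∫ x in Icc L1 L2, |g n x| :=
      setIntegral_congr_fun measurableSet_Icc fun x _ => one_mul _
    have e2 : (∫ _x in Icc L1 L2, (1:ℝ) ^ 2) = L2 - L1 := by
      rw [setIntegral_const, Real.volume_real_Icc_of_le (by linarith), smul_eq_mul, one_pow,
        mul_one]
    have e3 : (∫ x in Icc L1 L2, |g n x| ^ 2) = ∫ x in Icc L1 L2, g n x ^ 2 :=
      setIntegral_congr_fun measurableSet_Icc fun x _ => sq_abs _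
    rw [e1, e2, e3] at hCS
    have h4 : (∫ x in Icc L1 L2, g n x ^ 2) ≤ P (g n) / (mu' - M) := by
      rw [le_div_iff₀ hη]
      have h5 : (∫ x in Icc L1 L2, g n x ^ 2) * (mu' - M)
          = ∫ x in Icc L1 L2, (mu' - M) * g n x ^ 2 := by
        rw [mul_comm, ← integral_const_mul]
      rw [h5]
      exact hsqP n
    calc (∫ x in Icc L1 L2, |g n x|) ^ 2
        ≤ (L2 - L1) * ∫ x in Icc L1 L2, g n x ^ 2 := hCS
      _ ≤ (L2 - L1) * (P (g n) / (mu' - M)) := mul_le_mul_of_nonneg_left h4 hLL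
  have hint_abs : ∀ n, (∫ x in Icc L1 L2, |g n x|)
      ≤ Real.sqrt ((L2 - L1) * (P1 / (mu' - M))) * q ^ n := by
    intro n
    have ha0 : 0 ≤ ∫ x in Icc L1 L2, |g n x| :=
      setIntegral_nonneg measurableSet_Icc fun x _ => abs_nonneg _
    have h3 : P (g n) / (mu' - M) ≤ q ^ (2 * n) * P1 / (mu' - M) :=
      (div_le_div_iff_of_pos_right hη).2 (hPg n)
    have h4 : (∫ x in Icc L1 L2, |g n x|) ^ 2
        ≤ (L2 - L1) * (q ^ (2 * n) * P1 / (mu' - M)) :=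
      le_trans (habs n) (mul_le_mul_of_nonneg_left h3 hLL)
    have h5 : (L2 - L1) * (q ^ (2 * n) * P1 / (mu' - M))
        = ((L2 - L1) * (P1 / (mu' - M))) * (q ^ n) ^ 2 := by
      rw [Nat.mul_comm 2 n, pow_mul]
      ring
    rw [h5] at h4
    have hC0' : 0 ≤ (L2 - L1) * (P1 / (mu' - M)) :=
      mul_nonneg hLL (div_nonneg hP1nn hη.le)
    calc (∫ x in Icc L1 L2, |g n x|)
        = Real.sqrt ((∫ x in Icc L1 L2, |g n x|) ^ 2) := (Real.sqrt_sq ha0).symm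
      _ ≤ Real.sqrt (((L2 - L1) * (P1 / (mu' - M))) * (q ^ n) ^ 2) := Real.sqrt_le_sqrt h4
      _ = Real.sqrt ((L2 - L1) * (P1 / (mu' - M))) * q ^ n := by
          rw [Real.sqrt_mul hC0', Real.sqrt_sq (by positivity)]
  set Cg : ℝ := d * CJ / (mu' - M) * Real.sqrt ((L2 - L1) * (P1 / (mu' - M))) with hCgdef
  have hCg0 : 0 ≤ Cg :=
    mul_nonneg (div_nonneg (mul_nonneg hd.le hCJ0) hη.le) (Real.sqrt_nonneg _)
  have hgb : ∀ n x, |g (n + 1) x| ≤ Cg * q ^ n := by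
    intro n x
    rw [hgs n x, abs_div, abs_of_pos (hDpos x), abs_mul, abs_of_pos hd]
    have h1 : d * |Kop J L1 L2 (g n) x| / D x ≤ d * |Kop J L1 L2 (g n) x| / (mu' - M) :=
      div_le_div_of_nonneg_left (mul_nonneg hd.le (abs_nonneg _)) hη (le_max_right _ _)
    refine h1.trans ?_
    have h2 : |Kop J L1 L2 (g n) x|
        ≤ CJ * (Real.sqrt ((L2 - L1) * (P1 / (mu' - M))) * q ^ n) :=
      (Kop_bound hJ' hCJ (hgc n) x).trans (mul_le_mul_of_nonneg_left (hint_abs n) hCJ0)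
    calc d * |Kop J L1 L2 (g n) x| / (mu' - M)
        ≤ d * (CJ * (Real.sqrt ((L2 - L1) * (P1 / (mu' - M))) * q ^ n)) / (mu' - M) :=
          (div_le_div_iff_of_pos_right hη).2 (mul_le_mul_of_nonneg_left h2 hd.le)
      _ = Cg * q ^ n := by rw [hCgdef]; ring
  set bnd : ℕ → ℝ := fun n => Nat.casesOn n (1:ℝ) (fun m => Cg * q ^ m) with hbnddef
  have hbnd0 : ∀ n, 0 ≤ bnd n := by
    intro n
    cases n with
    | zero => norm_num [hbnddef]
    | succ m =>
      show (0:ℝ) ≤ Cg * q ^ m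
      exact mul_nonneg hCg0 (pow_nonneg hq0 m)
  have hbnd : ∀ n x, |g n x| ≤ bnd n := by
    intro n x
    cases n with
    | zero =>
      show |g 0 x| ≤ 1
      rw [hg0 x]
      norm_num
    | succ m => exact hgb m x
  have hbnds : Summable bnd := by
    have h1 : Summable (fun m : ℕ => Cg * q ^ m) :=
      (summable_geometric_of_lt_one hq0 hq1).mul_left Cg
    have h2 : (fun n : ℕ => bnd (n + 1)) = fun m : ℕ => Cg * q ^ m := rfl
    exact (summable_nat_add_iff 1).1 (h2 ▸ h1)
  set φ0 : ℝ → ℝ := fun x => ∑' n, g n x with hφ0def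
  have hsum : ∀ x, Summable fun n => g n x := by
    intro x
    refine Summable.of_nonneg_of_le (fun n => hgnn n x) (fun n => ?_) hbnds
    exact (le_abs_self _).trans (hbnd n x)
  have hφ0ge : ∀ x, 1 ≤ φ0 x := by
    intro x
    have h := Summable.le_tsum (hsum x) 0 fun j _ => hgnn j x
    rw [hg0 x] at h
    exact h
  have hφ0c : ContinuousOn φ0 (Icc L1 L2) := by
    have hTU := tendstoUniformlyOn_tsum (f := fun n x => g n x) hbnds
      (fun n x (_ : x ∈ Icc L1 L2) => by rw [Real.norm_eq_abs]; exact hbnd n x)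
    refine hTU.continuousOn (Eventually.of_forall fun t => ?_).frequently
    exact (continuous_finset_sum t fun i _ => hgc i).continuousOn
  have hKφ0 : ∀ x, Kop J L1 L2 φ0 x = ∑' n, Kop J L1 L2 (g n) x := by
    intro x
    have hmeas : ∀ n : ℕ, AEStronglyMeasurable (fun y => J (x - y) * g n y)
        (volume.restrict (Icc L1 L2)) := fun n =>
      ((hJc.comp (continuous_const.sub continuous_id)).mul (hgc n)).aestronglyMeasurable
    have hper : ∀ n : ℕ, (∫⁻ y in Icc L1 L2, ‖J (x - y) * g n y‖₊)
        ≤ ENNReal.ofReal (CJ * bnd n * (L2 - L1)) := by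
      intro n
      have h1 : (∫⁻ y in Icc L1 L2, (‖J (x - y) * g n y‖₊ : ENNReal))
          ≤ ∫⁻ _y in Icc L1 L2, ENNReal.ofReal (CJ * bnd n) := by
        apply lintegral_mono
        intro y
        show (‖J (x - y) * g n y‖₊ : ENNReal) ≤ ENNReal.ofReal (CJ * bnd n)
        rw [← enorm_eq_nnnorm, ← ofReal_norm]
        apply ENNReal.ofReal_le_ofReal
        rw [Real.norm_eq_abs, abs_mul, abs_of_nonneg (hJnn _)]
        exact mul_le_mul (hCJ _) (hbnd n y) (abs_nonneg _) hCJ0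
      rw [lintegral_const, Measure.restrict_apply MeasurableSet.univ, univ_inter,
        Real.volume_Icc] at h1
      refine h1.trans_eq ?_
      rw [← ENNReal.ofReal_mul (mul_nonneg hCJ0 (hbnd0 n))]
    have hcs : Summable (fun n => CJ * bnd n * (L2 - L1)) :=
      (hbnds.mul_left CJ).mul_right (L2 - L1)
    have htop : (∑' n : ℕ, ENNReal.ofReal (CJ * bnd n * (L2 - L1))) ≠ ⊤ := by
      rw [← ENNReal.ofReal_tsum_of_nonneg
        (fun n => mul_nonneg (mul_nonneg hCJ0 (hbnd0 n)) hLL) hcs]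
      exact ENNReal.ofReal_ne_top
    have e : ∀ y, J (x - y) * (∑' n, g n y) = ∑' n, J (x - y) * g n y := fun y =>
      tsum_mul_left.symm
    have hK : Kop J L1 L2 φ0 x = ∫ y in Icc L1 L2, ∑' n, J (x - y) * g n y := by
      show (∫ y in Icc L1 L2, J (x - y) * φ0 y) = _
      exact setIntegral_congr_fun measurableSet_Icc fun y _ => e y
    rw [hK]
    exact integral_tsum hmeas (ne_top_of_le_ne_top htop (ENNReal.tsum_le_tsum hper))
  have hrec : ∀ x ∈ Icc L1 L2,
      (mu' - a x) * φ0 x = (mu' - a x) + d * Kop J L1 L2 φ0 x := by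
    intro x hx
    have h1 : (mu' - a x) * φ0 x = ∑' n, (mu' - a x) * g n x := tsum_mul_left.symm
    have h2 : (∑' n, (mu' - a x) * g n x)
        = (mu' - a x) * g 0 x + ∑' n, (mu' - a x) * g (n + 1) x :=
      Summable.tsum_eq_zero_add ((hsum x).mul_left _)
    have h3 : ∀ n, (mu' - a x) * g (n + 1) x = d * Kop J L1 L2 (g n) x := by
      intro n
      rw [hgs n x, ← hDIcc x hx]
      field_simp [(hDpos x).ne']
    have h4 : (∑' n, (mu' - a x) * g (n + 1) x) = ∑' n, d * Kop J L1 L2 (g n) x :=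
      tsum_congr h3
    have h5 : (∑' n, d * Kop J L1 L2 (g n) x) = d * Kop J L1 L2 φ0 x := by
      rw [tsum_mul_left, hKφ0 x]
    rw [h1, h2, h4, h5, hg0 x, mul_one]
  refine ⟨φ0, hφ0c, fun x _ => lt_of_lt_of_le one_pos (hφ0ge x), ?_⟩
  intro x hx
  have hxI : x ∈ Icc L1 L2 := Ioo_subset_Icc_self hx
  have h := hrec x hxI
  have hax : a x < mu' := lt_of_le_of_lt (hM x hxI) hmu'
  have hii : (∫ y in L1..L2, J (x - y) * φ0 y) = Kop J L1 L2 φ0 x := ii_eq hL _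
  rw [hii]
  nlinarith [h, hax, hφ0ge x]

end iteration

end ThmAux

/-- Theorem 3.4 (i): `λ_p((L1,L2), d, a)` is strictly decreasing in the diffusion
rate `d`. -/
theorem lambdaP_strictAnti_in_d
    (J : ℝ → ℝ) (L1 L2 d1 d2 : ℝ) (a : ℝ → ℝ)
    (hJ : KernelJ J) (hL : L1 < L2)
    (haL : ∃ K, LipschitzWith K a)
    (haH : ∃ x0 ∈ Ioo L1 L2, ∀ x ∈ Icc L1 L2, a x ≤ a x0)
    (hd2 : 0 < d2) (hd12 : d2 < d1) :
    lambdaP J L1 L2 d1 a < lambdaP J L1 L2 d2 a := by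
  classical
  obtain ⟨K0, hLip⟩ := haL
  have hacont : Continuous a := hLip.continuous
  obtain ⟨x0, hx0, hx0max⟩ := haH
  have hd1 : 0 < d1 := hd2.trans hd12
  have hJ' := hJ
  obtain ⟨hJc, hJnn, ⟨CJ, hCJ⟩, hJsym, hJ0, hJ1⟩ := hJ
  set M : ℝ := a x0 with hMdef
  -- admissible sets
  set S : ℝ → Set ℝ := fun d => {lam : ℝ | ∃ φ : ℝ → ℝ, ContinuousOn φ (Icc L1 L2) ∧
    (∀ x ∈ Icc L1 L2, 0 < φ x) ∧
    ∀ x ∈ Ioo L1 L2,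
      d * (∫ y in L1..L2, J (x - y) * φ y) - d * φ x + a x * φ x ≤ lam * φ x} with hSdef
  have hlp : ∀ d : ℝ, lambdaP J L1 L2 d a = sInf (S d) := fun d => rfl
  -- lower bound for members
  have hlb : ∀ d : ℝ, 0 < d → ∀ lam ∈ S d, M - d ≤ lam := by
    intro d hd lam hlam
    obtain ⟨φ, hφc, hφp, hineq⟩ := hlam
    have h := hineq x0 hx0
    have hK0' : 0 ≤ ∫ y in L1..L2, J (x0 - y) * φ y := by
      rw [ThmAux.ii_eq hL]
      exact setIntegral_nonneg measurableSet_Icc fun y hy => mul_nonneg (hJnn _) (hφp y hy).le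
    have hφ0 : 0 < φ x0 := hφp x0 (Ioo_subset_Icc_self hx0)
    have h2 : (M - d) * φ x0 ≤ lam * φ x0 := by
      have h3 : 0 ≤ d * ∫ y in L1..L2, J (x0 - y) * φ y := mul_nonneg hd.le hK0'
      rw [hMdef]
      nlinarith [h, h3]
    exact le_of_mul_le_mul_right h2 hφ0
  -- membership of M
  have hMmem : ∀ d : ℝ, 0 < d → M ∈ S d := by
    intro d hd
    refine ⟨fun _ => 1, continuousOn_const, fun x _ => one_pos, ?_⟩
    intro x hx
    show (d * ∫ y in L1..L2, J (x - y) * (1:ℝ)) - d * 1 + a x * 1 ≤ M * 1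
    have h1 : (∫ y in L1..L2, J (x - y) * 1) ≤ 1 := by
      rw [ThmAux.ii_eq hL]
      have h2 := ThmAux.Kop_one_le_one (J := J) (L1 := L1) (L2 := L2) hJ' x
      calc (∫ y in Icc L1 L2, J (x - y) * 1) = ∫ y in Icc L1 L2, J (x - y) :=
            setIntegral_congr_fun measurableSet_Icc fun y _ => mul_one _
        _ ≤ 1 := h2
    have hax : a x ≤ M := hx0max x (Ioo_subset_Icc_self hx)
    have h4 : d * (∫ y in L1..L2, J (x - y) * 1) ≤ d * 1 :=
      mul_le_mul_of_nonneg_left h1 hd.le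
    nlinarith [h4, hax]
  have hbdd : ∀ d : ℝ, 0 < d → BddBelow (S d) := fun d hd => ⟨M - d, fun lam hlam =>
    hlb d hd lam hlam⟩
  have hne2 : (S d2).Nonempty := ⟨M, hMmem d2 hd2⟩
  -- lower bound for lambdaP d2
  have hΛ2lb : M - d2 ≤ lambdaP J L1 L2 d2 a := by
    rw [hlp d2]
    exact le_csInf hne2 fun lam hlam => hlb d2 hd2 lam hlam
  -- min of a
  obtain ⟨xm, hxm, hxmmin⟩ := isCompact_Icc.exists_isMinOn
    (nonempty_Icc.2 hL.le) (hacont.continuousOn (s := Icc L1 L2))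
  set m0 : ℝ := a xm with hm0def
  have hm0 : ∀ x ∈ Icc L1 L2, m0 ≤ a x := fun x hx => hxmmin hx
  have hm0M : m0 ≤ M := hm0 x0 (Ioo_subset_Icc_self hx0)
  -- the kernel constant
  obtain ⟨k, hk0, hk1, hkQ⟩ := ThmAux.Q_le_k (J := J) (L1 := L1) (L2 := L2) hJ' hL
  set ε : ℝ := (d1 - d2) * (1 - k) / 2 with hεdef
  have hεpos : 0 < ε := by
    rw [hεdef]
    have : 0 < d1 - d2 := by linarith
    have : 0 < 1 - k := by linarith
    positivity
  obtain ⟨lam, hlamS, hlamlt⟩ := exists_lt_of_csInf_lt hne2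
    (lt_add_of_pos_right (sInf (S d2)) hεpos)
  obtain ⟨φ, hφc, hφp, hineq⟩ := hlamS
  have hform := fun (v : ℝ → ℝ) (hv : Continuous v) =>
    ThmAux.form_bound (J := J) (L1 := L1) (L2 := L2) (a := a) hJ' hL hacont hd2 hφc hφp hineq
      (u := v) hv
  set mtil : ℝ := max (lam + d2 + (d1 - d2) * k) M with hmtildef
  have hmtilM : M ≤ mtil := le_max_right _ _
  have key : ∀ ε2 : ℝ, 0 < ε2 → lambdaP J L1 L2 d1 a ≤ mtil + ε2 - d1 := by
    intro ε2 hε2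
    set mu' : ℝ := mtil + ε2 with hmu'def
    have hmu'M : M < mu' := lt_of_le_of_lt hmtilM (lt_add_of_pos_right _ hε2)
    have hmu'm0 : 0 < mu' - m0 := by linarith
    have hmtilmu' : mtil < mu' := lt_add_of_pos_right _ hε2
    set q : ℝ := (mtil - m0) / (mu' - m0) with hqdef
    have hq0 : 0 ≤ q := div_nonneg (by linarith) hmu'm0.le
    have hq1 : q < 1 := by
      rw [hqdef, div_lt_one hmu'm0]
      linarith
    have hqpt : ∀ x ∈ Icc L1 L2, mtil - a x ≤ q * (mu' - a x) := by
      intro x hx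
      have ham : m0 ≤ a x := hm0 x hx
      have haM : a x ≤ M := hx0max x hx
      rw [hqdef, div_mul_eq_mul_div, le_div_iff₀ hmu'm0]
      nlinarith [mul_nonneg (sub_nonneg.2 ham) (sub_nonneg.2 hmtilmu'.le)]
    have HQ : ∀ v : ℝ → ℝ, Continuous v →
        d1 * |ThmAux.Qf J L1 L2 v v| ≤ q * ∫ x in Icc L1 L2, (mu' - a x) * v x ^ 2 := by
      intro v hv
      have hKabs : ∀ x, |ThmAux.Kop J L1 L2 v x| ≤ ThmAux.Kop J L1 L2 (fun y => |v y|) x := by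
        intro x
        have h1 : |∫ y in Icc L1 L2, J (x - y) * v y| ≤ ∫ y in Icc L1 L2, |J (x - y) * v y| := by
          rw [← Real.norm_eq_abs]
          refine (norm_integral_le_integral_norm _).trans_eq ?_
          simp only [Real.norm_eq_abs]
        refine h1.trans_eq ?_
        refine setIntegral_congr_fun measurableSet_Icc fun y _ => ?_
        rw [abs_mul, abs_of_nonneg (hJnn _)]
      have hKvc : Continuous (ThmAux.Kop J L1 L2 v) := ThmAux.Kop_continuous hJ' hv
      have hKavc : Continuous (ThmAux.Kop J L1 L2 fun y => |v y|) :=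
        ThmAux.Kop_continuous hJ' hv.abs
      have hQabs : |ThmAux.Qf J L1 L2 v v|
          ≤ ThmAux.Qf J L1 L2 (fun x => |v x|) (fun x => |v x|) := by
        have h1 : |ThmAux.Qf J L1 L2 v v|
            ≤ ∫ x in Icc L1 L2, |v x * ThmAux.Kop J L1 L2 v x| := by
          rw [← Real.norm_eq_abs]
          refine (norm_integral_le_integral_norm _).trans_eq ?_
          simp only [Real.norm_eq_abs]
        refine h1.trans ?_
        apply setIntegral_mono_on
        · exact (hv.mul hKvc).abs.integrableOn_Icc
        · exact (hv.abs.mul hKavc).integrableOn_Icc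
        · exact measurableSet_Icc
        · intro x _
          rw [abs_mul]
          exact mul_le_mul_of_nonneg_left (hKabs x) (abs_nonneg _)
      have hB : d2 * ThmAux.Qf J L1 L2 (fun x => |v x|) (fun x => |v x|)
          ≤ ∫ x in Icc L1 L2, (lam + d2 - a x) * v x ^ 2 := by
        have h2 := hform (fun x => |v x|) hv.abs
        refine h2.trans_eq ?_
        refine setIntegral_congr_fun measurableSet_Icc fun x _ => ?_
        rw [sq_abs]
      have hC : ThmAux.Qf J L1 L2 (fun x => |v x|) (fun x => |v x|)
          ≤ k * ∫ x in Icc L1 L2, v x ^ 2 := by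
        have h3 := hkQ (fun x => |v x|) hv.abs
        have h4 : (∫ x in Icc L1 L2, |v x| ^ 2) = ∫ x in Icc L1 L2, v x ^ 2 :=
          setIntegral_congr_fun measurableSet_Icc fun x _ => sq_abs _
        rw [h4] at h3
        exact h3
      -- combine
      have hvsq : IntegrableOn (fun x => v x ^ 2) (Icc L1 L2) :=
        (hv.pow 2).integrableOn_Icc
      have hint1 : IntegrableOn (fun x => (lam + d2 - a x) * v x ^ 2) (Icc L1 L2) :=
        ((continuous_const.sub hacont).mul (hv.pow 2)).integrableOn_Icc
      have hint2 : IntegrableOn (fun x => ((d1 - d2) * k) * v x ^ 2) (Icc L1 L2) :=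
        (continuous_const.mul (hv.pow 2)).integrableOn_Icc
      have hid : (∫ x in Icc L1 L2, (lam + d2 - a x) * v x ^ 2)
          + (d1 - d2) * k * (∫ x in Icc L1 L2, v x ^ 2)
          = ∫ x in Icc L1 L2, (lam + d2 + (d1 - d2) * k - a x) * v x ^ 2 := by
        rw [← integral_const_mul, ← integral_add hint1 hint2]
        refine setIntegral_congr_fun measurableSet_Icc fun x _ => ?_
        ring
      have hmono1 : (∫ x in Icc L1 L2, (lam + d2 + (d1 - d2) * k - a x) * v x ^ 2)
          ≤ ∫ x in Icc L1 L2, (mtil - a x) * v x ^ 2 := by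
        apply setIntegral_mono_on
          (((continuous_const.sub hacont).mul (hv.pow 2)).integrableOn_Icc)
          (((continuous_const.sub hacont).mul (hv.pow 2)).integrableOn_Icc) measurableSet_Icc
        intro x _
        have h5 : lam + d2 + (d1 - d2) * k ≤ mtil := le_max_left _ _
        exact mul_le_mul_of_nonneg_right (show lam + d2 + (d1 - d2) * k - a x ≤ mtil - a x by linarith) (sq_nonneg _)
      have hmono2 : (∫ x in Icc L1 L2, (mtil - a x) * v x ^ 2)
          ≤ q * ∫ x in Icc L1 L2, (mu' - a x) * v x ^ 2 := by
        rw [← integral_const_mul]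
        apply setIntegral_mono_on
          (((continuous_const.sub hacont).mul (hv.pow 2)).integrableOn_Icc)
          ((continuous_const.mul ((continuous_const.sub hacont).mul (hv.pow 2))).integrableOn_Icc)
          measurableSet_Icc
        intro x hx
        have h6 := hqpt x hx
        calc (mtil - a x) * v x ^ 2 ≤ (q * (mu' - a x)) * v x ^ 2 :=
              mul_le_mul_of_nonneg_right h6 (sq_nonneg _)
          _ = q * ((mu' - a x) * v x ^ 2) := by ring
      -- final chain
      have hd1Q : d1 * |ThmAux.Qf J L1 L2 v v|
          ≤ d1 * ThmAux.Qf J L1 L2 (fun x => |v x|) (fun x => |v x|) :=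
        mul_le_mul_of_nonneg_left hQabs hd1.le
      have hsplit : d1 * ThmAux.Qf J L1 L2 (fun x => |v x|) (fun x => |v x|)
          = d2 * ThmAux.Qf J L1 L2 (fun x => |v x|) (fun x => |v x|)
            + (d1 - d2) * ThmAux.Qf J L1 L2 (fun x => |v x|) (fun x => |v x|) := by ring
      have hC' : (d1 - d2) * ThmAux.Qf J L1 L2 (fun x => |v x|) (fun x => |v x|)
          ≤ (d1 - d2) * (k * ∫ x in Icc L1 L2, v x ^ 2) :=
        mul_le_mul_of_nonneg_left hC (by linarith)
      calc d1 * |ThmAux.Qf J L1 L2 v v|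
          ≤ d1 * ThmAux.Qf J L1 L2 (fun x => |v x|) (fun x => |v x|) := hd1Q
        _ ≤ (∫ x in Icc L1 L2, (lam + d2 - a x) * v x ^ 2)
            + (d1 - d2) * k * (∫ x in Icc L1 L2, v x ^ 2) := by
            rw [hsplit]
            have := hC'
            nlinarith [hB, hC']
        _ = ∫ x in Icc L1 L2, (lam + d2 + (d1 - d2) * k - a x) * v x ^ 2 := hid
        _ ≤ ∫ x in Icc L1 L2, (mtil - a x) * v x ^ 2 := hmono1
        _ ≤ q * ∫ x in Icc L1 L2, (mu' - a x) * v x ^ 2 := hmono2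
    obtain ⟨ψ, hψc, hψp, hψineq⟩ := ThmAux.exists_supersol (J := J) (L1 := L1) (L2 := L2)
      (a := a) hJ' hL hacont hd1 (fun x hx => hx0max x hx) hmu'M hq0 hq1 HQ
    have hmem : (mu' - d1) ∈ S d1 := ⟨ψ, hψc, hψp, hψineq⟩
    rw [hlp d1]
    have := csInf_le (hbdd d1 hd1) hmem
    rw [hmu'def] at this
    linarith
  have hle : lambdaP J L1 L2 d1 a ≤ mtil - d1 := by
    apply le_of_forall_pos_le_add
    intro ε2 hε2
    have := key ε2 hε2
    linarith
  rcases le_total (lam + d2 + (d1 - d2) * k) M with hcase | hcase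
  · have hmtil : mtil = M := max_eq_right hcase
    rw [hmtil] at hle
    have : M - d1 < M - d2 := by linarith
    linarith [hΛ2lb, hle]
  · have hmtil : mtil = lam + d2 + (d1 - d2) * k := max_eq_left hcase
    rw [hmtil] at hle
    rw [hlp d2]
    have h7 : lam + d2 + (d1 - d2) * k - d1 = lam - (d1 - d2) * (1 - k) := by ring
    rw [hεdef] at hlamlt
    nlinarith [hle, hlamlt, hk1, hd12]
end
end

section
/- Fix reals L1 < L2 and let a : ℝ → ℝ be Lipschitz continuous and attain its maximum over [L1,L2] at an interior point of (L1,L2). Then lim_{d→0⁺} λ_p((L1,L2), d, a) = max_{x∈[L1,L2]} a(x). -/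
open MeasureTheory Set Filter Topology

noncomputable section

/-- Theorem 3.4 (ii): `λ_p((L1,L2), d, a) → max_{x∈[L1,L2]} a(x)` as `d → 0⁺`. -/
theorem lambdaP_limit_d_zero
    (J : ℝ → ℝ) (L1 L2 : ℝ) (a : ℝ → ℝ)
    (hJ : KernelJ J) (hL : L1 < L2)
    (haL : ∃ K, LipschitzWith K a)
    (haH : ∃ x0 ∈ Ioo L1 L2, ∀ x ∈ Icc L1 L2, a x ≤ a x0) :
    Tendsto (fun d => lambdaP J L1 L2 d a) (𝓝[>] 0)
      (𝓝 (sSup (a '' Icc L1 L2))) := by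
  obtain ⟨x0, hx0, hmax⟩ := haH
  obtain ⟨hJc, hJnn, _, _, _, hJint⟩ := hJ
  have hx0' : x0 ∈ Icc L1 L2 := Ioo_subset_Icc_self hx0
  -- the sup equals a x0
  have hM : sSup (a '' Icc L1 L2) = a x0 := by
    apply le_antisymm
    · exact csSup_le (Nonempty.image a ⟨x0, hx0'⟩) (by rintro _ ⟨x, hx, rfl⟩; exact hmax x hx)
    · exact le_csSup ⟨a x0, by rintro _ ⟨x, hx, rfl⟩; exact hmax x hx⟩ ⟨x0, hx0', rfl⟩
  rw [hM]
  set M := a x0 with hMdef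
  -- J is integrable
  have hInt : Integrable J := by
    by_contra h
    rw [integral_undef h] at hJint
    norm_num at hJint
  -- lower bound: every element of the set is ≥ M - d (for d ≥ 0)
  have hlow : ∀ d : ℝ, 0 ≤ d → ∀ lam ∈ {lam : ℝ | ∃ φ : ℝ → ℝ,
      ContinuousOn φ (Icc L1 L2) ∧ (∀ x ∈ Icc L1 L2, 0 < φ x) ∧
      ∀ x ∈ Ioo L1 L2,
        d * (∫ y in L1..L2, J (x - y) * φ y) - d * φ x + a x * φ x ≤ lam * φ x},
      M - d ≤ lam := by
    intro d hd lam hlam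
    obtain ⟨φ, hφc, hφpos, hineq⟩ := hlam
    have hφ0 : 0 < φ x0 := hφpos x0 hx0'
    have hI : 0 ≤ ∫ y in L1..L2, J (x0 - y) * φ y := by
      apply intervalIntegral.integral_nonneg hL.le
      intro u hu
      exact mul_nonneg (hJnn _) (hφpos u hu).le
    have h1 := hineq x0 hx0
    have h2 : 0 ≤ d * (∫ y in L1..L2, J (x0 - y) * φ y) := mul_nonneg hd hI
    have h3 : (M - d) * φ x0 ≤ lam * φ x0 := by nlinarith
    exact le_of_mul_le_mul_right h3 hφ0
  -- upper bound: M is in the set for every d > 0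
  have hmem : ∀ d : ℝ, 0 < d → M ∈ {lam : ℝ | ∃ φ : ℝ → ℝ,
      ContinuousOn φ (Icc L1 L2) ∧ (∀ x ∈ Icc L1 L2, 0 < φ x) ∧
      ∀ x ∈ Ioo L1 L2,
        d * (∫ y in L1..L2, J (x - y) * φ y) - d * φ x + a x * φ x ≤ lam * φ x} := by
    intro d hd
    refine ⟨fun _ => 1, continuousOn_const, fun x _ => one_pos, ?_⟩
    intro x hx
    have hIle : (∫ y in L1..L2, J (x - y) * 1) ≤ 1 := by
      simp only [mul_one]
      rw [intervalIntegral.integral_comp_sub_left J x]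
      have hle : x - L2 ≤ x - L1 := by linarith
      rw [intervalIntegral.integral_of_le hle]
      calc ∫ u in Ioc (x - L2) (x - L1), J u ≤ ∫ u, J u :=
            setIntegral_le_integral hInt (Eventually.of_forall hJnn)
        _ = 1 := hJint
    have hax : a x ≤ M := hmax x (Ioo_subset_Icc_self hx)
    have : d * (∫ y in L1..L2, J (x - y) * 1) ≤ d * 1 :=
      mul_le_mul_of_nonneg_left hIle hd.le
    simp only [mul_one] at this ⊢
    nlinarith
  -- squeeze
  have hup : ∀ d ∈ Ioi (0:ℝ), lambdaP J L1 L2 d a ≤ M := fun d hd =>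
    csInf_le ⟨M - d, fun lam hlam => hlow d (le_of_lt hd) lam hlam⟩ (hmem d hd)
  have hdn : ∀ d ∈ Ioi (0:ℝ), M - d ≤ lambdaP J L1 L2 d a := fun d hd =>
    le_csInf ⟨M, hmem d hd⟩ (hlow d (le_of_lt hd))
  have h1 : Tendsto (fun d : ℝ => M - d) (𝓝[>] 0) (𝓝 M) := by
    have : Tendsto (fun d : ℝ => M - d) (𝓝 0) (𝓝 (M - 0)) :=
      tendsto_const_nhds.sub tendsto_id
    simpa using this.mono_left nhdsWithin_le_nhds
  refine tendsto_of_tendsto_of_tendsto_of_le_of_le' h1 tendsto_const_nhds ?_ ?_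
  · exact eventually_nhdsWithin_of_forall hdn
  · exact eventually_nhdsWithin_of_forall hup
end
end

section
/- Fix reals L1 < L2 and let a : ℝ → ℝ be Lipschitz continuous and attain its maximum over [L1,L2] at an interior point of (L1,L2). If ∫_{−∞}^{L1−L2} J(z) dz > 0 (equivalently, by symmetry, ∫_{L2−L1}^{+∞} J(z) dz > 0), then λ_p((L1,L2), d, a) → −∞ as d → +∞: for every M > 0 there exists D > 0 such that d > D implies λ_p((L1,L2), d, a) < −M. -/
open MeasureTheory Set Filter Topology

noncomputable section

/-- Theorem 3.4 (iii): if `∫_{-∞}^{L1-L2} J(z) dz > 0`, then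
`λ_p((L1,L2), d, a) → -∞` as `d → +∞`. -/
theorem lambdaP_limit_d_infty
    (J : ℝ → ℝ) (L1 L2 : ℝ) (a : ℝ → ℝ)
    (hJ : KernelJ J) (hL : L1 < L2)
    (haL : ∃ K, LipschitzWith K a)
    (haH : ∃ x0 ∈ Ioo L1 L2, ∀ x ∈ Icc L1 L2, a x ≤ a x0)
    (hJtail : 0 < ∫ z in Iio (L1 - L2), J z) :
    ∀ M > (0:ℝ), ∃ D > (0:ℝ), ∀ d : ℝ, D < d → lambdaP J L1 L2 d a < -M := by
  obtain ⟨hJc, hJnn, hJbd, hJsym, hJ0, hJint⟩ := hJ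
  obtain ⟨x0, hx0, hmax⟩ := haH
  set c : ℝ := ∫ z in Iio (L1 - L2), J z with hc
  set A : ℝ := a x0 with hA
  -- J is integrable
  have hint : Integrable J := by
    by_contra h
    rw [integral_undef h] at hJint
    exact one_ne_zero hJint.symm
  -- the integral of J over Ici (L1 - L2) is 1 - c
  have hIci : (∫ z in Ici (L1 - L2), J z) = 1 - c := by
    have := intervalIntegral.integral_Iio_add_Ici (μ := volume) (b := L1 - L2)
      hint.integrableOn hint.integrableOn
    rw [hJint] at this
    linarith
  intro M hM
  refine ⟨max 1 ((M + A) / c), lt_of_lt_of_le one_pos (le_max_left _ _), ?_⟩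
  intro d hd
  have hd0 : (0:ℝ) < d := lt_of_lt_of_le one_pos (le_of_lt (lt_of_le_of_lt (le_max_left _ _) hd))
  have hdc : M + A < d * c := by
    have h1 : (M + A) / c < d := lt_of_le_of_lt (le_max_right _ _) hd
    calc M + A = ((M + A) / c) * c := by field_simp
    _ < d * c := by exact mul_lt_mul_of_pos_right h1 hJtail
  have hmid : (L1 + L2) / 2 ∈ Ioo L1 L2 := ⟨by linarith, by linarith⟩
  -- the admissible set is bounded below
  have hbdd : BddBelow {lam : ℝ | ∃ φ : ℝ → ℝ, ContinuousOn φ (Icc L1 L2) ∧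
      (∀ x ∈ Icc L1 L2, 0 < φ x) ∧
      ∀ x ∈ Ioo L1 L2,
        d * (∫ y in L1..L2, J (x - y) * φ y) - d * φ x + a x * φ x ≤ lam * φ x} := by
    refine ⟨a ((L1 + L2) / 2) - d, ?_⟩
    rintro lam ⟨φ, hφc, hφpos, hφineq⟩
    have hp := hφpos _ (Ioo_subset_Icc_self hmid)
    have hineq := hφineq _ hmid
    have hInn : 0 ≤ ∫ y in L1..L2, J ((L1 + L2) / 2 - y) * φ y := by
      apply intervalIntegral.integral_nonneg hL.le
      intro u hu
      exact mul_nonneg (hJnn _) (hφpos u hu).le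
    nlinarith [hineq, hp, hInn]
  -- the constant function 1 is a test function for lam = A - d * c
  have hmem : A - d * c ∈ {lam : ℝ | ∃ φ : ℝ → ℝ, ContinuousOn φ (Icc L1 L2) ∧
      (∀ x ∈ Icc L1 L2, 0 < φ x) ∧
      ∀ x ∈ Ioo L1 L2,
        d * (∫ y in L1..L2, J (x - y) * φ y) - d * φ x + a x * φ x ≤ lam * φ x} := by
    refine ⟨fun _ => 1, continuousOn_const, fun x _ => one_pos, ?_⟩
    intro x hx
    simp only [mul_one]
    have hIeq : (∫ y in L1..L2, J (x - y)) = ∫ z in (x - L2)..(x - L1), J z :=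
      intervalIntegral.integral_comp_sub_left J x
    have hle : (∫ z in (x - L2)..(x - L1), J z) ≤ ∫ z in Ici (L1 - L2), J z := by
      rw [intervalIntegral.integral_of_le (by linarith [hx.1, hx.2] : x - L2 ≤ x - L1)]
      apply setIntegral_mono_set hint.integrableOn
      · exact Eventually.of_forall fun z => hJnn z
      · apply Eventually.of_forall
        intro z hz
        have : L1 - L2 < z := lt_of_le_of_lt (by linarith [hx.1] : L1 - L2 ≤ x - L2) hz.1
        exact this.le
    have hIle : (∫ y in L1..L2, J (x - y)) ≤ 1 - c := by
      rw [hIeq]; rw [hIci] at hle; exact hle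
    have hax : a x ≤ A := hmax x (Ioo_subset_Icc_self hx)
    nlinarith [hIle, hax, hd0.le]
  have : lambdaP J L1 L2 d a ≤ A - d * c := csInf_le hbdd hmem
  linarith
end
end
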